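/- arXiv:2402.08860 — 10 statements merged into one kernel-verified Lean document; each statement's English description precedes it below -/
import Mathlib

section
/- Let X be a Tychonoff topological space. Then the space C_p(X) is von Neumann complete (i.e., every precompact subset of C_p(X) is relatively compact; equivalently, every closed precompact subset is compact) if and only if X is discrete. -/
open Filter Topology Bornology Pointwise
open scoped ENNReal NNReal

noncomputable section

/-- The space of continuous real-valued functions on `X` regarded as a linear subspace of
`X → ℝ`; with the subspace topology it is exactly `C_p(X)` (the topology of pointwise
convergence). -/
def cP (X : Type*) [TopologicalSpace X] : Submodule ℝ (X → ℝ) where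
  carrier := {f | Continuous f}
  add_mem' := fun hf hg => hf.add hg
  zero_mem' := continuous_const
  smul_mem' := fun c _f hf => hf.const_smul c

/-- Precompactness in the `F + U` sense is the same as total boundedness in a uniform
additive group. -/
lemma precompact_iff_totallyBounded {E : Type*} [UniformSpace E] [AddCommGroup E]
    [IsUniformAddGroup E] (A : Set E) :
    (∀ U ∈ nhds (0 : E), ∃ F : Set E, F.Finite ∧ A ⊆ F + U) ↔ TotallyBounded A := by
  rw [totallyBounded_iff_subset_finite_iUnion_nhds_zero]
  refine forall₂_congr fun U _ => exists_congr fun F => and_congr_right fun _ => ?_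
  rw [show (⋃ y ∈ F, y +ᵥ U) = F + U by
    ext z; simp [Set.mem_add, Set.mem_vadd_set, vadd_eq_add]]

/-- For a Tychonoff space `X`, the space `C_p(X)` is von Neumann complete (every precompact
subset — i.e. every set `A` such that for each neighborhood `U` of `0` there is a finite set `F`
with `A ⊆ F + U` — is relatively compact) if and only if `X` is discrete. -/
theorem cp_vonNeumannComplete_iff_discrete (X : Type*) [TopologicalSpace X] [T35Space X] :
    (∀ A : Set ↥(cP X),
        (∀ U ∈ nhds (0 : ↥(cP X)), ∃ F : Set ↥(cP X), F.Finite ∧ A ⊆ F + U) →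
        IsCompact (closure A)) ↔ DiscreteTopology X := by
  classical
  haveI : IsUniformAddGroup ↥(cP X) :=
    isUniformEmbedding_subtype_val.isUniformInducing.isUniformAddGroup (cP X).subtype
  constructor
  · intro h
    -- the set of continuous functions with values in [0,1]
    set C : Set (X → ℝ) := Set.univ.pi fun _ => Set.Icc (0 : ℝ) 1 with hC
    have hCcomp : IsCompact C := isCompact_univ_pi fun _ => isCompact_Icc
    set A : Set ↥(cP X) := Subtype.val ⁻¹' C with hA
    have htb : TotallyBounded A :=
      totallyBounded_preimage isUniformEmbedding_subtype_val.isUniformInducing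
        hCcomp.totallyBounded
    have hAclosed : IsClosed A :=
      (hCcomp.isClosed).preimage continuous_subtype_val
    have hcomp : IsCompact A := by
      have := h A ((precompact_iff_totallyBounded A).2 htb)
      rwa [hAclosed.closure_eq] at this
    have himage : IsCompact (Subtype.val '' A) := hcomp.image continuous_subtype_val
    -- density: every [0,1]-valued function is in the closure of the image
    have hdense : C ⊆ closure (Subtype.val '' A) := by
      intro g hg
      rw [mem_closure_iff_nhds]
      intro U hU
      rw [nhds_pi, Filter.mem_pi'] at hU
      obtain ⟨I, t, ht, hsub⟩ := hU
      -- for each i, a continuous bump function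
      have hφ : ∀ i : X, ∃ φ : X → ℝ, Continuous φ ∧ (i ∈ I → φ i = 1) ∧
          ∀ j ∈ I, j ≠ i → φ j = 0 := by
        intro i
        by_cases hi : i ∈ I
        · have hKcl : IsClosed (↑(I.erase i) : Set X) := (I.erase i).finite_toSet.isClosed
          have hiK : i ∉ (↑(I.erase i) : Set X) := by simp
          obtain ⟨f, cf, f0, f1⟩ :=
            CompletelyRegularSpace.completely_regular i _ hKcl hiK
          refine ⟨fun x => 1 - (f x : ℝ), continuous_const.sub (continuous_induced_dom.comp cf), fun _ => by simp [f0], ?_⟩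
          intro j hj hne
          have : f j = 1 := f1 (by simp [Finset.mem_erase, hne, hj])
          simp [this]
        · exact ⟨0, continuous_const, fun h => absurd h hi, fun _ _ _ => rfl⟩
      choose φ hcont hone hzero using hφ
      set s0 : X → ℝ := fun x => ∑ i ∈ I, g i * φ i x with hs0
      have hs0cont : Continuous s0 :=
        continuous_finset_sum _ fun i _ => continuous_const.mul (hcont i)
      have hs0eq : ∀ j ∈ I, s0 j = g j := by
        intro j hj
        rw [hs0]
        simp only
        rw [Finset.sum_eq_single j]
        · rw [hone j hj, mul_one]
        · intro i hi hne
          rw [hzero i j hj hne.symm, mul_zero]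
        · intro h; exact absurd hj h
      set hfn : X → ℝ := fun x => max 0 (min 1 (s0 x)) with hh
      have hfc : Continuous hfn := continuous_const.max (continuous_const.min hs0cont)
      have hmem : hfn ∈ cP X := hfc
      have hIcc : ∀ x, hfn x ∈ Set.Icc (0 : ℝ) 1 :=
        fun x => ⟨le_max_left _ _, max_le zero_le_one (min_le_left _ _)⟩
      have hagree : ∀ j ∈ I, hfn j = g j := by
        intro j hj
        have hgj := hg j (Set.mem_univ j)
        rw [hh]
        simp only
        rw [hs0eq j hj, min_eq_right hgj.2, max_eq_right hgj.1]
      refine ⟨hfn, ?_, ⟨⟨hfn, hmem⟩, ?_, rfl⟩⟩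
      · apply hsub
        intro j hj
        have := hagree j hj
        rw [this]
        exact mem_of_mem_nhds (ht j)
      · intro x _; exact hIcc x
    have hCeq : C ⊆ Subtype.val '' A := by
      intro g hg
      have := hdense hg
      rwa [himage.isClosed.closure_eq] at this
    -- every [0,1]-valued function is continuous, hence X is discrete
    have hcontAll : ∀ S : Set X, IsOpen S := by
      intro S
      set g : X → ℝ := fun x => if x ∈ S then 0 else 1 with hgdef
      have hgC : g ∈ C := by
        intro x _
        by_cases hx : x ∈ S <;> simp [hgdef, hx]
      obtain ⟨⟨f, hf⟩, hfA, hfg⟩ := hCeq hgC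
      have hgcont : Continuous g := by rw [← hfg]; exact hf
      have : S = g ⁻¹' Set.Iio 1 := by
        ext x
        by_cases hx : x ∈ S <;> simp [hgdef, hx]
      rw [this]
      exact (isOpen_Iio).preimage hgcont
    exact discreteTopology_iff_forall_isOpen.2 hcontAll
  · intro hdisc A hA
    have hclosed : IsClosed (cP X : Set (X → ℝ)) := by
      have : (cP X : Set (X → ℝ)) = Set.univ := by
        ext f; simp only [Set.mem_univ, iff_true]
        exact continuous_of_discreteTopology
      rw [this]; exact isClosed_univ
    haveI : CompleteSpace ↥(cP X) := hclosed.completeSpace_coe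
    have htb : TotallyBounded A := (precompact_iff_totallyBounded A).1 hA
    exact TotallyBounded.isCompact_of_isClosed htb.closure isClosed_closure

end
end

section
/- Let X be a Tychonoff topological space. Then the following assertions are equivalent: (i) X is a P-space; (ii) C_p(X) is separably quasi-complete; (iii) C_p(X) is sequentially complete; (iv) C_p(X) is locally complete. -/
open Filter Topology Bornology Pointwise
open scoped ENNReal NNReal

noncomputable section

/-- `X` is a `P`-space: every countable intersection of open sets is open. -/
def IsPSpace (X : Type*) [TopologicalSpace X] : Prop :=
  ∀ s : ℕ → Set X, (∀ n, IsOpen (s n)) → IsOpen (⋂ n, s n)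

section Aux

variable {X : Type*} [TopologicalSpace X]

lemma mem_cP_iff {f : X → ℝ} : f ∈ cP X ↔ Continuous f := Iff.rfl

/-- On a P-space, any pointwise limit of a countable family of continuous functions is
continuous. -/
lemma continuous_of_mem_closure_countable (hP : IsPSpace X) {D : Set (X → ℝ)}
    (hDc : D.Countable) (hD : ∀ g ∈ D, Continuous g) {f : X → ℝ}
    (hf : f ∈ closure D) : Continuous f := by
  rcases D.eq_empty_or_nonempty with rfl | hne
  · simp at hf
  obtain ⟨g, rfl⟩ := Set.Countable.exists_eq_range hDc hne
  rw [continuous_iff_continuousAt]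
  intro x₀
  rw [ContinuousAt, Metric.tendsto_nhds]
  intro ε hε
  have hε4 : 0 < ε / 4 := by linarith
  set U : Set X := ⋂ n, {y | dist (g n y) (g n x₀) < ε / 4} with hU
  have hUo : IsOpen U := by
    refine hP _ fun n => ?_
    exact isOpen_lt ((hD _ (Set.mem_range_self n)).dist continuous_const) continuous_const
  have hx₀U : x₀ ∈ U := by
    simp [hU, hε4]
  filter_upwards [hUo.mem_nhds hx₀U] with y hy
  -- find an element of D close to f at {y, x₀}
  have hV : IsOpen {p : X → ℝ | dist (p y) (f y) < ε / 4 ∧ dist (p x₀) (f x₀) < ε / 4} := by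
    exact (isOpen_lt ((continuous_apply y).dist continuous_const) continuous_const).inter
      (isOpen_lt ((continuous_apply x₀).dist continuous_const) continuous_const)
  have hfV : f ∈ {p : X → ℝ | dist (p y) (f y) < ε / 4 ∧ dist (p x₀) (f x₀) < ε / 4} := by
    simp [hε4]
  obtain ⟨p, ⟨hpy, hpx₀⟩, hpD⟩ := _root_.mem_closure_iff.1 hf _ hV hfV
  obtain ⟨n, rfl⟩ := hpD
  have hgy : dist (g n y) (g n x₀) < ε / 4 := by
    have := Set.mem_iInter.1 hy n
    exact this
  calc dist (f y) (f x₀) ≤ dist (f y) (g n y) + dist (g n y) (g n x₀) + dist (g n x₀) (f x₀) :=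
        dist_triangle4 _ _ _ _
    _ < ε / 4 + ε / 4 + ε / 4 := by
        rw [dist_comm (f y)]
        exact add_lt_add (add_lt_add hpy hgy) hpx₀
    _ < ε := by linarith

/-- On a P-space, every element of the pointwise closure of the absolutely convex hull of a
countable family of continuous functions is continuous. -/
lemma continuous_of_mem_closure_hull (hP : IsPSpace X) (u : ℕ → X → ℝ)
    (hu : ∀ n, Continuous (u n)) {f : X → ℝ}
    (hf : f ∈ closure (convexHull ℝ (balancedHull ℝ (Set.range u)))) : Continuous f := by
  rw [continuous_iff_continuousAt]
  intro x₀
  rw [ContinuousAt, Metric.tendsto_nhds]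
  intro ε hε
  have hε2 : 0 < ε / 2 := by linarith
  set U : Set X := ⋂ n, {y | dist (u n y) (u n x₀) < ε / 2} with hU
  have hUo : IsOpen U := by
    refine hP _ fun n => ?_
    exact isOpen_lt ((hu n).dist continuous_const) continuous_const
  have hx₀U : x₀ ∈ U := by simp [hU, hε2]
  set S : Set (X → ℝ) := {p | ∀ y ∈ U, dist (p y) (p x₀) ≤ ε / 2} with hS
  have hkey : closure (convexHull ℝ (balancedHull ℝ (Set.range u))) ⊆ S := by
    have hclosed : IsClosed S := by
      rw [hS]
      have : {p : X → ℝ | ∀ y ∈ U, dist (p y) (p x₀) ≤ ε / 2}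
          = ⋂ y ∈ U, {p : X → ℝ | dist (p y) (p x₀) ≤ ε / 2} := by
        ext p; simp
      rw [this]
      refine isClosed_biInter fun y _ => ?_
      exact isClosed_le ((continuous_apply y).dist (continuous_apply x₀)) continuous_const
    refine closure_minimal (convexHull_min ?_ ?_) hclosed
    · intro p hp
      rw [mem_balancedHull_iff] at hp
      obtain ⟨r, hr, q, hq, rfl⟩ := hp
      obtain ⟨n, rfl⟩ := hq
      intro y hy
      have hn : dist (u n y) (u n x₀) < ε / 2 := Set.mem_iInter.1 hy n
      have : dist ((r • u n) y) ((r • u n) x₀) = |r| * dist (u n y) (u n x₀) := by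
        simp [Pi.smul_apply, Real.dist_eq, ← mul_sub, abs_mul]
      rw [this]
      calc |r| * dist (u n y) (u n x₀) ≤ 1 * (ε / 2) := by
            apply mul_le_mul (by simpa using hr) hn.le dist_nonneg zero_le_one
        _ = ε / 2 := one_mul _
    · intro p hpS q hqS a b ha hb hab
      intro y hy
      have h1 := hpS y hy
      have h2 := hqS y hy
      have : (a • p + b • q) y - (a • p + b • q) x₀ = a * (p y - p x₀) + b * (q y - q x₀) := by
        simp [Pi.add_apply, Pi.smul_apply]; ring
      rw [Real.dist_eq, this]
      calc |a * (p y - p x₀) + b * (q y - q x₀)|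
          ≤ |a * (p y - p x₀)| + |b * (q y - q x₀)| := abs_add_le _ _
        _ = a * |p y - p x₀| + b * |q y - q x₀| := by
            rw [abs_mul, abs_mul, abs_of_nonneg ha, abs_of_nonneg hb]
        _ ≤ a * (ε / 2) + b * (ε / 2) := by
            gcongr <;> first
              | exact h1.trans_eq' (Real.dist_eq _ _).symm |>.trans_eq (by rfl)
              | exact h2.trans_eq' (Real.dist_eq _ _).symm |>.trans_eq (by rfl)
        _ = ε / 2 := by rw [← add_mul, hab, one_mul]
  filter_upwards [hUo.mem_nhds hx₀U] with y hy
  exact lt_of_le_of_lt (hkey hf y hy) (by linarith)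

/-- Elements of the closed absolutely convex hull obey any pointwise bound valid for the
generating family. -/
lemma closure_hull_subset_pointwise_bound (u : ℕ → X → ℝ) (M : X → ℝ)
    (hM : ∀ n x, |u n x| ≤ M x) :
    closure (convexHull ℝ (balancedHull ℝ (Set.range u))) ⊆ {p : X → ℝ | ∀ x, |p x| ≤ M x} := by
  have hclosed : IsClosed {p : X → ℝ | ∀ x, |p x| ≤ M x} := by
    have : {p : X → ℝ | ∀ x, |p x| ≤ M x} = ⋂ x, {p : X → ℝ | |p x| ≤ M x} := by ext p; simp
    rw [this]
    refine isClosed_iInter fun x => ?_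
    exact isClosed_le (continuous_abs.comp (continuous_apply x)) continuous_const
  refine closure_minimal (convexHull_min ?_ ?_) hclosed
  · intro p hp
    rw [mem_balancedHull_iff] at hp
    obtain ⟨r, hr, q, hq, rfl⟩ := hp
    obtain ⟨n, rfl⟩ := hq
    intro x
    have : |(r • u n) x| = |r| * |u n x| := by simp [abs_mul]
    rw [this]
    calc |r| * |u n x| ≤ 1 * M x := by
          apply mul_le_mul (by simpa using hr) (hM n x) (abs_nonneg _) zero_le_one
      _ = M x := one_mul _
  · intro p hp q hq a b ha hb hab x
    have : (a • p + b • q) x = a * p x + b * q x := by simp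
    rw [this]
    calc |a * p x + b * q x| ≤ |a * p x| + |b * q x| := abs_add_le _ _
      _ = a * |p x| + b * |q x| := by rw [abs_mul, abs_mul, abs_of_nonneg ha, abs_of_nonneg hb]
      _ ≤ a * M x + b * M x := by gcongr; exacts [hp x, hq x]
      _ = M x := by rw [← add_mul, hab, one_mul]

/-- A finite sum `∑ cₙ • wₙ` with nonnegative coefficients of total mass at most `1` lies in
the absolutely convex hull of the `wₙ`. -/
lemma sum_smul_mem_convexHull_balancedHull {E : Type*} [AddCommGroup E] [Module ℝ E]
    (w : ℕ → E) (c : ℕ → ℝ) (N : ℕ) (hc0 : ∀ n, 0 ≤ c n)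
    (hc1 : ∑ n ∈ Finset.range N, c n ≤ 1) :
    (∑ n ∈ Finset.range N, c n • w n) ∈ convexHull ℝ (balancedHull ℝ (Set.range w)) := by
  classical
  set S := balancedHull ℝ (Set.range w) with hSdef
  have hwS : ∀ n, w n ∈ S := fun n => subset_balancedHull ℝ (Set.mem_range_self n)
  have h0S : (0 : E) ∈ S := by
    have := (balancedHull.balanced (Set.range w)).smul_mem (a := (0:ℝ)) (by simp) (hwS 0)
    simpa using this
  -- weights on range (N+1)
  set μ : ℕ → ℝ := fun i => if i = N then 1 - ∑ n ∈ Finset.range N, c n else c i with hμ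
  set p : ℕ → E := fun i => if i = N then 0 else w i with hp
  have hμ0 : ∀ i ∈ Finset.range (N + 1), 0 ≤ μ i := by
    intro i _
    by_cases h : i = N <;> simp [hμ, h, sub_nonneg, hc1, hc0 i]
  have hμsum : ∑ i ∈ Finset.range (N + 1), μ i = 1 := by
    rw [Finset.sum_range_succ]
    have : ∑ i ∈ Finset.range N, μ i = ∑ i ∈ Finset.range N, c i := by
      refine Finset.sum_congr rfl fun i hi => ?_
      have : i ≠ N := Nat.ne_of_lt (Finset.mem_range.1 hi)
      simp [hμ, this]
    rw [this]
    simp [hμ]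
  have hpS : ∀ i ∈ Finset.range (N + 1), p i ∈ S := by
    intro i _
    by_cases h : i = N <;> simp [hp, h, h0S, hwS i]
  have := (Finset.range (N + 1)).centerMass_mem_convexHull hμ0 (by rw [hμsum]; norm_num) hpS
  have hcm : (Finset.range (N + 1)).centerMass μ p = ∑ i ∈ Finset.range (N + 1), μ i • p i := by
    rw [Finset.centerMass, hμsum]
    simp
  rw [hcm] at this
  have hsum : ∑ i ∈ Finset.range (N + 1), μ i • p i = ∑ n ∈ Finset.range N, c n • w n := by
    rw [Finset.sum_range_succ]
    have h1 : ∑ i ∈ Finset.range N, μ i • p i = ∑ i ∈ Finset.range N, c i • w i := by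
      refine Finset.sum_congr rfl fun i hi => ?_
      have hiN : i ≠ N := Nat.ne_of_lt (Finset.mem_range.1 hi)
      simp [hμ, hp, hiN]
    rw [h1]
    simp [hμ, hp]
  rwa [hsum] at this

/-- A pointwise-bounded subset of `C_p(X)` is von Neumann bounded. -/
lemma isVonNBounded_of_pointwise_bound {A : Set ↥(cP X)}
    (hA : ∀ h ∈ A, ∀ x, |(h : X → ℝ) x| ≤ 1) : IsVonNBounded ℝ A := by
  have hamb : IsVonNBounded ℝ ((Subtype.val : ↥(cP X) → X → ℝ) '' A) := by
    rw [isVonNBounded_pi_iff]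
    intro x
    refine (NormedSpace.isVonNBounded_closedBall ℝ ℝ 1).subset ?_
    rintro y ⟨g, ⟨h, hhA, rfl⟩, rfl⟩
    simpa [Real.norm_eq_abs] using hA h hhA x
  intro V hV
  rw [nhds_induced] at hV
  obtain ⟨W, hW, hWV⟩ := hV
  have habs : Absorbs ℝ W ((Subtype.val : ↥(cP X) → X → ℝ) '' A) := hamb hW
  filter_upwards [habs, eventually_ne_cobounded (0 : ℝ)] with c hc hc0
  intro a ha
  have hva : (a : X → ℝ) ∈ c • W := hc (Set.mem_image_of_mem _ ha)
  rw [Set.mem_smul_set_iff_inv_smul_mem₀ hc0] at hva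
  have : (c⁻¹ • a : ↥(cP X)) ∈ Subtype.val ⁻¹' W := by
    show ((c⁻¹ • a : ↥(cP X)) : X → ℝ) ∈ W
    rw [Submodule.coe_smul]
    exact hva
  have hmem : c⁻¹ • a ∈ V := hWV this
  have : a = c • (c⁻¹ • a) := by rw [smul_inv_smul₀ hc0]
  rw [this]
  exact Set.smul_mem_smul_set hmem

end Aux

section Package

variable {X : Type*} [TopologicalSpace X] [T35Space X]

/-- If `X` is not a P-space, we can build a null sequence `w` in `C_p(X)` and a sequence `t`
of partial sums lying in the absolutely convex hull of `w`, which is pointwise bounded and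
Cauchy but does not converge in `C_p(X)`. -/
lemma notP_package (hP : ¬ IsPSpace X) :
    ∃ w t : ℕ → ↥(cP X),
      Tendsto w atTop (nhds 0) ∧
      CauchySeq t ∧
      (∀ N, t N ∈ convexHull ℝ (balancedHull ℝ (Set.range w))) ∧
      (∀ N x, |(t N : X → ℝ) x| ≤ 1) ∧
      ∀ h : ↥(cP X), ¬ Tendsto t atTop (nhds h) := by
  unfold IsPSpace at hP
  push_neg at hP
  obtain ⟨s, hso, hsno⟩ := hP
  have hx : ∃ x₀ ∈ ⋂ n, s n, x₀ ∉ interior (⋂ n, s n) := by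
    by_contra h
    push_neg at h
    have hsub : (⋂ n, s n) ⊆ interior (⋂ n, s n) := fun x hx => h x hx
    have : IsOpen (⋂ n, s n) := by
      have heq : interior (⋂ n, s n) = ⋂ n, s n := Set.Subset.antisymm interior_subset hsub
      rw [← heq]
      exact isOpen_interior
    exact hsno this
  obtain ⟨x₀, hx₀mem, hx₀ni⟩ := hx
  have H : ∀ n, ∃ f : X → unitInterval, Continuous f ∧ f x₀ = 0 ∧ Set.EqOn f 1 (s n)ᶜ := by
    intro n
    exact CompletelyRegularSpace.completely_regular x₀ (s n)ᶜ (hso n).isClosed_compl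
      (by simpa using Set.mem_iInter.1 hx₀mem n)
  choose f hfc hfx hfK using H
  set F : ℕ → X → ℝ := fun n x => (f n x : ℝ) with hF
  have hFc : ∀ n, Continuous (F n) := fun n => continuous_subtype_val.comp (hfc n)
  have hF0 : ∀ n x, 0 ≤ F n x := fun n x => (f n x).2.1
  have hF1 : ∀ n x, F n x ≤ 1 := fun n x => (f n x).2.2
  have hgeo : Summable fun n : ℕ => (2⁻¹ : ℝ) ^ n :=
    summable_geometric_of_lt_one (by norm_num) (by norm_num)
  set q : X → ℝ := fun x => ∑' n, (2⁻¹ : ℝ) ^ n * F n x with hq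
  have hsum : ∀ x, Summable fun n => (2⁻¹ : ℝ) ^ n * F n x := by
    intro x
    refine Summable.of_nonneg_of_le (fun n => mul_nonneg (by positivity) (hF0 n x))
      (fun n => ?_) hgeo
    calc (2⁻¹:ℝ)^n * F n x ≤ (2⁻¹:ℝ)^n * 1 := by gcongr; exact hF1 n x
      _ = (2⁻¹:ℝ)^n := mul_one _
  have hqc : Continuous q := by
    refine continuous_tsum (fun n => (continuous_const.mul (hFc n))) hgeo ?_
    intro n x
    rw [Real.norm_eq_abs, abs_mul, abs_of_nonneg (a := (2⁻¹:ℝ)^n) (by positivity),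
      abs_of_nonneg (hF0 n x)]
    calc (2⁻¹:ℝ)^n * F n x ≤ (2⁻¹:ℝ)^n * 1 := by gcongr; exact hF1 n x
      _ = (2⁻¹:ℝ)^n := mul_one _
  have hq0 : q x₀ = 0 := by
    have h0 : ∀ n, (2⁻¹ : ℝ) ^ n * F n x₀ = 0 := by
      intro n
      simp [hF, hfx n]
    show (∑' n, (2⁻¹ : ℝ) ^ n * F n x₀) = 0
    rw [tsum_congr h0, tsum_zero]
  have hqnn : ∀ x, 0 ≤ q x := fun x => tsum_nonneg fun n => mul_nonneg (by positivity) (hF0 n x)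
  have hqZ : ∀ x, q x = 0 → ∀ n, x ∈ s n := by
    intro x hx n
    by_contra hxn
    have hfn1 : f n x = 1 := hfK n hxn
    have hterm : (2⁻¹:ℝ)^n * F n x = (2⁻¹:ℝ)^n := by
      simp [hF, hfn1]
    have hle : (2⁻¹:ℝ)^n * F n x ≤ q x :=
      Summable.le_tsum (hsum x) n (fun m _ => mul_nonneg (by positivity) (hF0 m x))
    rw [hx, hterm] at hle
    have hpos : (0:ℝ) < (2⁻¹:ℝ)^n := by positivity
    linarith
  -- the auxiliary sequence
  set e : ℕ → X → ℝ := fun n x => max (1 - ((n:ℝ)+1) * q x) 0 with he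
  have hec : ∀ n, Continuous (e n) :=
    fun n => (continuous_const.sub (continuous_const.mul hqc)).max continuous_const
  have he0 : ∀ n x, 0 ≤ e n x := fun n x => le_max_right _ _
  have he1 : ∀ n x, e n x ≤ 1 := by
    intro n x
    apply max_le _ zero_le_one
    have : 0 ≤ ((n:ℝ)+1) * q x := mul_nonneg (by positivity) (hqnn x)
    linarith
  have heq0 : ∀ x, q x = 0 → ∀ n, e n x = 1 := by intro x hx n; simp [he, hx]
  have hee : ∀ x, q x ≠ 0 → ∃ N, ∀ n ≥ N, e n x = 0 := by
    intro x hx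
    have hqpos : 0 < q x := lt_of_le_of_ne (hqnn x) (Ne.symm hx)
    obtain ⟨N, hN⟩ := exists_nat_ge (1 / q x)
    refine ⟨N, fun n hn => ?_⟩
    have h1 : (1:ℝ) ≤ ((n:ℝ)+1) * q x := by
      have h2 : (1/q x) ≤ (n:ℝ) := le_trans hN (by exact_mod_cast hn)
      calc (1:ℝ) = (1/q x) * q x := by field_simp
        _ ≤ (n:ℝ) * q x := by gcongr
        _ ≤ ((n:ℝ)+1) * q x := by nlinarith
    simp [he, max_eq_right (by linarith : 1 - ((n:ℝ)+1) * q x ≤ 0)]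
  set g : X → ℝ := fun x => if q x = 0 then 1 else 0 with hg
  have helim : ∀ x, Tendsto (fun n => e n x) atTop (nhds (g x)) := by
    intro x
    by_cases hx : q x = 0
    · simp only [hg, if_pos hx]
      exact tendsto_const_nhds.congr (fun n => (heq0 x hx n).symm)
    · simp only [hg, if_neg hx]
      obtain ⟨N, hN⟩ := hee x hx
      refine tendsto_const_nhds.congr' ?_
      filter_upwards [eventually_ge_atTop N] with n hn
      exact (hN n hn).symm
  set w : ℕ → ↥(cP X) := fun n => ⟨fun x => 2^(n+1) * (e (n+1) x - e n x),
    (continuous_const.mul ((hec (n+1)).sub (hec n)))⟩ with hw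
  set t : ℕ → ↥(cP X) := fun N => ⟨fun x => e N x - e 0 x, (hec N).sub (hec 0)⟩ with ht
  have htsum : ∀ N, t N = ∑ n ∈ Finset.range N, ((2:ℝ)⁻¹)^(n+1) • w n := by
    intro N
    apply Subtype.ext
    rw [Submodule.coe_sum]
    funext x
    rw [Finset.sum_apply]
    have hterm : ∀ n, ((((2:ℝ)⁻¹)^(n+1) • w n : ↥(cP X)) : X → ℝ) x = e (n+1) x - e n x := by
      intro n
      rw [Submodule.coe_smul]
      show ((2:ℝ)⁻¹)^(n+1) * (2^(n+1) * (e (n+1) x - e n x)) = _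
      rw [← mul_assoc, ← mul_pow]
      norm_num
    rw [Finset.sum_congr rfl (fun n _ => hterm n)]
    show e N x - e 0 x = _
    exact (Finset.sum_range_sub (fun n => e n x) N).symm
  have htlim : Tendsto (fun N => ((t N : X → ℝ))) atTop (nhds (fun x => g x - e 0 x)) := by
    rw [tendsto_pi_nhds]
    intro x
    exact (helim x).sub tendsto_const_nhds
  refine ⟨w, t, ?_, ?_, ?_, ?_, ?_⟩
  · -- null sequence
    rw [tendsto_subtype_rng, tendsto_pi_nhds]
    intro x
    have hev : ∀ᶠ n in atTop, ((w n : X → ℝ)) x = 0 := by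
      by_cases hx : q x = 0
      · filter_upwards with n
        show 2^(n+1) * (e (n+1) x - e n x) = 0
        rw [heq0 x hx, heq0 x hx]
        ring
      · obtain ⟨N, hN⟩ := hee x hx
        filter_upwards [eventually_ge_atTop N] with n hn
        show 2^(n+1) * (e (n+1) x - e n x) = 0
        rw [hN n hn, hN (n+1) (le_trans hn (Nat.le_succ n))]
        ring
    have h0 : (((0 : ↥(cP X)) : X → ℝ)) x = 0 := rfl
    rw [h0]
    exact tendsto_const_nhds.congr' (hev.mono fun n hn => hn.symm)
  · -- Cauchy
    have hc : Cauchy (map (Subtype.val : ↥(cP X) → X → ℝ) (map t atTop)) := by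
      rw [Filter.map_map]
      exact htlim.cauchySeq
    exact (isUniformEmbedding_subtype_val.isUniformInducing.cauchy_map_iff).1 hc
  · -- hull membership
    intro N
    rw [htsum N]
    refine sum_smul_mem_convexHull_balancedHull w _ N (fun n => by positivity) ?_
    have h2 : ∑ n ∈ Finset.range N, ((2:ℝ)⁻¹)^(n+1)
        = 2⁻¹ * ∑ n ∈ Finset.range N, ((2:ℝ)⁻¹)^n := by
      rw [Finset.mul_sum]
      exact Finset.sum_congr rfl fun n _ => by ring
    have h3 : ∑ n ∈ Finset.range N, ((2:ℝ)⁻¹)^n ≤ 2 := by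
      simpa using sum_geometric_two_le N
    rw [h2]
    linarith
  · -- pointwise bound
    intro N x
    show |e N x - e 0 x| ≤ 1
    rw [abs_le]
    constructor
    · have := he1 0 x; have := he0 N x; linarith
    · have := he0 0 x; have := he1 N x; linarith
  · -- non-convergence
    intro h hth
    have hvt : Tendsto (fun N => ((t N : X → ℝ))) atTop (nhds ((h : X → ℝ))) :=
      (continuous_subtype_val.tendsto h).comp hth
    have hgeq : (fun x => g x - e 0 x) = (h : X → ℝ) := tendsto_nhds_unique htlim hvt
    have hgc : Continuous g := by
      have : g = (fun x => g x - e 0 x) + e 0 := by funext x; simp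
      rw [this, hgeq]
      exact h.2.add (hec 0)
    have hopen : IsOpen {x | (1:ℝ)/2 < g x} := isOpen_lt continuous_const hgc
    have hsubset : {x | (1:ℝ)/2 < g x} ⊆ ⋂ n, s n := by
      intro x hxg
      have hqx : q x = 0 := by
        by_contra hqx
        simp only [hg] at hxg
        rw [Set.mem_setOf_eq, if_neg hqx] at hxg
        norm_num at hxg
      exact Set.mem_iInter.2 (hqZ x hqx)
    have hx₀G : x₀ ∈ {x | (1:ℝ)/2 < g x} := by
      simp only [Set.mem_setOf_eq, hg, if_pos hq0]
      norm_num
    exact hx₀ni (interior_maximal hsubset hopen hx₀G)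

end Package

section Forward

variable {X : Type*} [TopologicalSpace X]

lemma forward_ii (hP : IsPSpace X) (A : Set ↥(cP X)) (hAc : IsClosed A)
    (hAs : TopologicalSpace.IsSeparable A) : IsComplete A := by
  intro F hF hFA
  have hmap : Cauchy (map (Subtype.val : ↥(cP X) → X → ℝ) F) :=
    hF.map uniformContinuous_subtype_val
  obtain ⟨f, hf⟩ := CompleteSpace.complete hmap
  obtain ⟨c, hcc, hAcl⟩ := hAs
  haveI hFne : F.NeBot := hF.1
  have hfcl : f ∈ closure (Subtype.val '' A) := by
    rw [mem_closure_iff_clusterPt]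
    refine neBot_of_le (f := map Subtype.val F) (le_inf hf ?_)
    exact le_principal_iff.2 (image_mem_map (hFA (mem_principal_self A)))
  have hsub : Subtype.val '' A ⊆ closure (Subtype.val '' c) := by
    rintro y ⟨a, haA, rfl⟩
    exact (image_closure_subset_closure_image continuous_subtype_val)
      (Set.mem_image_of_mem _ (hAcl haA))
  have hf2 : f ∈ closure (Subtype.val '' c) := by
    have := closure_mono hsub hfcl
    rwa [closure_closure] at this
  have hfc : Continuous f := by
    refine continuous_of_mem_closure_countable hP (hcc.image _) ?_ hf2
    rintro g ⟨a, _, rfl⟩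
    exact a.2
  have hFn : F ≤ nhds (⟨f, hfc⟩ : ↥(cP X)) := by
    exact (le_trans le_comap_map (comap_mono hf)).trans_eq (nhds_subtype_eq_comap (x := f) (h := hfc)).symm
  refine ⟨⟨f, hfc⟩, ?_, hFn⟩
  rw [← hAc.closure_eq, mem_closure_iff_clusterPt]
  exact neBot_of_le (f := F) (le_inf hFn hFA)

lemma forward_iii (hP : IsPSpace X) (u : ℕ → ↥(cP X)) (hu : CauchySeq u) :
    ∃ x, Tendsto u atTop (nhds x) := by
  have h1 : CauchySeq (fun n => (u n : X → ℝ)) := by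
    have : Cauchy (map (Subtype.val : ↥(cP X) → X → ℝ) (map u atTop)) :=
      hu.map uniformContinuous_subtype_val
    rwa [Filter.map_map] at this
  obtain ⟨f, hf⟩ := cauchySeq_tendsto_of_complete h1
  have hfcl : f ∈ closure (Set.range fun n => (u n : X → ℝ)) :=
    mem_closure_of_tendsto hf (Filter.Eventually.of_forall fun n => Set.mem_range_self n)
  have hfc : Continuous f := by
    refine continuous_of_mem_closure_countable hP (Set.countable_range _) ?_ hfcl
    rintro g ⟨n, rfl⟩
    exact (u n).2
  exact ⟨⟨f, hfc⟩, tendsto_subtype_rng.2 hf⟩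

lemma forward_iv (hP : IsPSpace X) (u : ℕ → ↥(cP X)) (hu : Tendsto u atTop (nhds 0)) :
    IsCompact (closure (convexHull ℝ (balancedHull ℝ (Set.range u)))) := by
  set v : ℕ → X → ℝ := fun n => (u n : X → ℝ) with hv
  have hvc : ∀ n, Continuous (v n) := fun n => (u n).2
  have hv0 : ∀ x, Tendsto (fun n => v n x) atTop (nhds 0) := by
    have h1 := tendsto_subtype_rng.1 hu
    rw [tendsto_pi_nhds] at h1
    intro x
    simpa using h1 x
  set M : X → ℝ := fun x => ⨆ n, |v n x| with hM
  have hbdd : ∀ x, BddAbove (Set.range fun n => |v n x|) := by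
    intro x
    have : Tendsto (fun n => |v n x|) atTop (nhds 0) := by simpa using (hv0 x).abs
    exact this.bddAbove_range
  have hMle : ∀ n x, |v n x| ≤ M x := fun n x => le_ciSup (hbdd x) n
  set K : Set (X → ℝ) := closure (convexHull ℝ (balancedHull ℝ (Set.range v))) with hK
  have himg : Subtype.val '' (convexHull ℝ (balancedHull ℝ (Set.range u)))
      ⊆ convexHull ℝ (balancedHull ℝ (Set.range v)) := by
    have himg2 : (Subtype.val : ↥(cP X) → X → ℝ) '' (convexHull ℝ (balancedHull ℝ (Set.range u)))
        = convexHull ℝ ((Subtype.val : ↥(cP X) → X → ℝ) '' (balancedHull ℝ (Set.range u))) := by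
      have := ((cP X).subtype).image_convexHull (balancedHull ℝ (Set.range u))
      simpa [Submodule.coe_subtype] using this
    rw [himg2]
    apply convexHull_mono
    rintro y ⟨p, hp, rfl⟩
    rw [mem_balancedHull_iff] at hp
    obtain ⟨r, hr, hp⟩ := hp
    obtain ⟨z, hz, rfl⟩ := hp
    obtain ⟨n, rfl⟩ := hz
    rw [mem_balancedHull_iff]
    refine ⟨r, hr, ?_⟩
    have : ((r • u n : ↥(cP X)) : X → ℝ) = r • v n := rfl
    rw [this]
    exact Set.smul_mem_smul_set (Set.mem_range_self n)
  have hKcont : ∀ p ∈ K, Continuous p := fun p hp =>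
    continuous_of_mem_closure_hull hP v hvc hp
  have hKbdd : K ⊆ {p : X → ℝ | ∀ x, |p x| ≤ M x} :=
    closure_hull_subset_pointwise_bound v M hMle
  have hKcomp : IsCompact K := by
    have hIcc : IsCompact {p : X → ℝ | ∀ x, p x ∈ Set.Icc (-(M x)) (M x)} := by
      have h2 := isCompact_univ_pi (fun x => isCompact_Icc (a := -(M x)) (b := M x))
      have h3 : (Set.univ : Set X).pi (fun x => Set.Icc (-(M x)) (M x))
          = {p : X → ℝ | ∀ x, p x ∈ Set.Icc (-(M x)) (M x)} := by
        ext p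
        simp [Set.mem_pi, Pi.le_def, forall_and]
      rwa [h3] at h2
    refine hIcc.of_isClosed_subset isClosed_closure ?_
    intro p hp
    intro x
    rw [Set.mem_Icc, ← abs_le]
    exact hKbdd hp x
  rw [Subtype.isCompact_iff]
  have hcl : closure (convexHull ℝ (balancedHull ℝ (Set.range u)))
      = Subtype.val ⁻¹' closure (Subtype.val '' (convexHull ℝ (balancedHull ℝ (Set.range u)))) :=
    Topology.IsEmbedding.subtypeVal.closure_eq_preimage_closure_image _
  set K' := closure (Subtype.val '' (convexHull ℝ (balancedHull ℝ (Set.range u)))) with hK'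
  have hK'K : K' ⊆ K := closure_minimal (himg.trans subset_closure) isClosed_closure
  have hK'comp : IsCompact K' := hKcomp.of_isClosed_subset isClosed_closure hK'K
  have hK'range : K' ⊆ Set.range (Subtype.val : ↥(cP X) → X → ℝ) := by
    intro p hp
    exact ⟨⟨p, (hKcont p (hK'K hp) : Continuous p)⟩, rfl⟩
  rw [hcl, Set.image_preimage_eq_inter_range, Set.inter_eq_self_of_subset_left hK'range]
  exact hK'comp

end Forward

/-- For a Tychonoff space `X` the following are equivalent: (i) `X` is a `P`-space;
(ii) `C_p(X)` is separably quasi-complete (every closed separable bounded set is complete);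
(iii) `C_p(X)` is sequentially complete; (iv) `C_p(X)` is locally complete (the closed
absolutely convex hull of every null sequence is compact). -/
theorem cp_completeness_characterizations (X : Type*) [TopologicalSpace X] [T35Space X] :
    (IsPSpace X ↔
      (∀ A : Set ↥(cP X), IsClosed A → TopologicalSpace.IsSeparable A →
        IsVonNBounded ℝ A → IsComplete A)) ∧
    (IsPSpace X ↔
      (∀ u : ℕ → ↥(cP X), CauchySeq u → ∃ x, Tendsto u atTop (nhds x))) ∧
    (IsPSpace X ↔
      (∀ u : ℕ → ↥(cP X), Tendsto u atTop (nhds 0) →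
        IsCompact (closure (convexHull ℝ (balancedHull ℝ (Set.range u)))))) := by
  refine ⟨⟨fun hP A hAc hAs _ => forward_ii hP A hAc hAs, fun h => ?_⟩,
    ⟨fun hP u hu => forward_iii hP u hu, fun h => ?_⟩,
    ⟨fun hP u hu => forward_iv hP u hu, fun h => ?_⟩⟩
  · -- (ii) → P
    by_contra hP
    obtain ⟨w, t, hw0, htc, hthull, htbd, htdiv⟩ := notP_package hP
    set A := closure (Set.range t) with hA
    have hbd : ∀ h ∈ A, ∀ x, |(h : X → ℝ) x| ≤ 1 := by
      have hclosed : IsClosed {h : ↥(cP X) | ∀ x, |(h : X → ℝ) x| ≤ 1} := by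
        have heq : {h : ↥(cP X) | ∀ x, |(h : X → ℝ) x| ≤ 1}
            = Subtype.val ⁻¹' {p : X → ℝ | ∀ x, |p x| ≤ 1} := rfl
        rw [heq]
        apply IsClosed.preimage continuous_subtype_val
        have heq2 : {p : X → ℝ | ∀ x, |p x| ≤ 1} = ⋂ x, {p : X → ℝ | |p x| ≤ 1} := by
          ext p; simp
        rw [heq2]
        exact isClosed_iInter fun x =>
          isClosed_le (continuous_abs.comp (continuous_apply x)) continuous_const
      have hsub : A ⊆ {h : ↥(cP X) | ∀ x, |(h : X → ℝ) x| ≤ 1} :=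
        closure_minimal (by rintro _ ⟨N, rfl⟩; exact htbd N) hclosed
      exact fun h hh => hsub hh
    have hcomplete := h A isClosed_closure
      ((Set.countable_range t).isSeparable.closure)
      (isVonNBounded_of_pointwise_bound hbd)
    have hle : map t atTop ≤ Filter.principal A :=
      le_principal_iff.2 (Filter.mem_map.2
        (Filter.univ_mem' fun N => subset_closure (Set.mem_range_self N)))
    obtain ⟨x, _, hx⟩ := hcomplete (map t atTop) htc hle
    exact htdiv x hx
  · -- (iii) → P
    by_contra hP
    obtain ⟨w, t, hw0, htc, hthull, htbd, htdiv⟩ := notP_package hP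
    obtain ⟨x, hx⟩ := h t htc
    exact htdiv x hx
  · -- (iv) → P
    by_contra hP
    obtain ⟨w, t, hw0, htc, hthull, htbd, htdiv⟩ := notP_package hP
    have hcomp := h w hw0
    have hcompl : IsComplete (closure (convexHull ℝ (balancedHull ℝ (Set.range w)))) :=
      hcomp.isComplete
    have hle : map t atTop ≤ Filter.principal (closure (convexHull ℝ (balancedHull ℝ (Set.range w)))) :=
      le_principal_iff.2 (Filter.mem_map.2
        (Filter.univ_mem' fun N => subset_closure (hthull N)))
    obtain ⟨x, _, hx⟩ := hcompl (map t atTop) htc hle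
    exact htdiv x hx

end
end

section
/- Let 1 ≤ p ≤ q ≤ ∞, let X be a Tychonoff space, and let E be a linear subspace of the product 𝔽^X (with the product topology, 𝔽 = ℝ or ℂ) containing C_p(X). Then every (p,q)-(V) set in the topological dual E' is contained in a finite-dimensional linear subspace of E'. -/
open Filter Topology Bornology
open scoped ENNReal NNReal

set_option synthInstance.maxHeartbeats 1000000

noncomputable section

variable {𝕜 : Type*} [RCLike 𝕜]

/-- A `𝕜`-valued sequence belongs to `ℓ_p` when `p ≠ ∞`, and to `c₀` when `p = ∞`. -/
def InLpC0K (p : ℝ≥0∞) (f : ℕ → 𝕜) : Prop :=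
  (p ≠ ∞ ∧ Memℓp f p) ∨ (p = ∞ ∧ Tendsto f atTop (nhds (0 : 𝕜)))

/-- An `ℝ≥0∞`-valued sequence belongs to `ℓ_q` (i.e. `∑ (f n) ^ q < ∞`) when `q ≠ ∞`,
and to `c₀` when `q = ∞`. -/
def InLpC0E (q : ℝ≥0∞) (f : ℕ → ℝ≥0∞) : Prop :=
  (q ≠ ∞ ∧ (∑' n, f n ^ q.toReal) ≠ ∞) ∨ (q = ∞ ∧ Tendsto f atTop (nhds (0 : ℝ≥0∞)))

/-- A sequence `x` in a topological vector space `E` over `𝕜` is weakly `p`-summable if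
`(χ (x n))ₙ ∈ ℓ_p` (resp. `∈ c₀` if `p = ∞`) for every continuous linear functional `χ` on `E`. -/
def WeaklySummableK (p : ℝ≥0∞) {E : Type*} [AddCommGroup E] [Module 𝕜 E] [TopologicalSpace E]
    (x : ℕ → E) : Prop :=
  ∀ χ : E →L[𝕜] 𝕜, InLpC0K p fun n => χ (x n)

/-- `B ⊆ E'` is a `(p,q)`-`(V)` set: for every weakly `p`-summable sequence `(x n)` in `E`,
the sequence `(sup_{χ ∈ B} |χ (x n)|)ₙ` belongs to `ℓ_q` (to `c₀` if `q = ∞`). -/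
def IsVSetK (p q : ℝ≥0∞) {E : Type*} [AddCommGroup E] [Module 𝕜 E] [TopologicalSpace E]
    (B : Set (E →L[𝕜] 𝕜)) : Prop :=
  ∀ x : ℕ → E, WeaklySummableK (𝕜 := 𝕜) p x → InLpC0E q fun n => ⨆ χ ∈ B, (‖χ (x n)‖₊ : ℝ≥0∞)

section Aux

set_option maxHeartbeats 1000000

variable {X : Type*}

/-- Evaluation at a point, as a continuous linear functional on `M`. -/
def evCLM (M : Submodule 𝕜 (X → 𝕜)) (x : X) : ↥M →L[𝕜] 𝕜 :=
  { toLinearMap := (LinearMap.proj x).comp M.subtype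
    cont := (continuous_apply x).comp continuous_subtype_val }

@[simp] lemma evCLM_apply (M : Submodule 𝕜 (X → 𝕜)) (x : X) (f : ↥M) :
    evCLM M x f = (f : X → 𝕜) x := rfl

/-- every continuous linear functional on a subspace of a product lies in the span of
finitely many evaluations. -/
lemma exists_finset_mem_span (M : Submodule 𝕜 (X → 𝕜)) (χ : ↥M →L[𝕜] 𝕜) :
    ∃ F : Finset X, χ ∈ Submodule.span 𝕜 (evCLM M '' ↑F) := by
  have h1 : χ ⁻¹' (Metric.ball (0 : 𝕜) 1) ∈ 𝓝 (0 : ↥M) := by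
    refine χ.continuous.continuousAt.preimage_mem_nhds ?_
    simp only [map_zero]
    exact Metric.ball_mem_nhds _ one_pos
  rw [nhds_subtype, Filter.mem_comap] at h1
  obtain ⟨t, ht, hsub⟩ := h1
  rw [show ((0 : ↥M) : X → 𝕜) = (0 : X → 𝕜) from rfl, nhds_pi, Filter.mem_pi] at ht
  obtain ⟨I, hI, tt, htt, hIt⟩ := ht
  have key : ∀ f : ↥M, (∀ x ∈ I, (f : X → 𝕜) x = 0) → χ f = 0 := by
    intro f hf
    by_contra h0
    have : ∀ c : 𝕜, ‖c‖ * ‖χ f‖ < 1 := by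
      intro c
      have hcf : ((c • f : ↥M) : X → 𝕜) ∈ I.pi tt := by
        intro x hx
        have : ((c • f : ↥M) : X → 𝕜) x = 0 := by
          simp [hf x hx]
        rw [this]
        exact mem_of_mem_nhds (htt x)
      have := hsub (Set.mem_preimage.mpr (hIt hcf))
      simpa [norm_smul] using this
    have hn : (0:ℝ) < ‖χ f‖ := norm_pos_iff.mpr h0
    have := this ((2 / ‖χ f‖ : ℝ) • 1)
    rw [norm_smul, norm_one, mul_one, Real.norm_eq_abs,
      abs_of_pos (div_pos two_pos hn), div_mul_cancel₀ _ hn.ne'] at this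
    linarith
  refine ⟨hI.toFinset, ?_⟩
  have hker : (⨅ x : I, LinearMap.ker ((evCLM M x).toLinearMap)) ≤
      LinearMap.ker χ.toLinearMap := by
    intro f hf
    simp only [Submodule.mem_iInf, LinearMap.mem_ker] at hf ⊢
    exact key f (fun x hx => hf ⟨x, hx⟩)
  haveI : Finite I := hI.to_subtype
  have hspan := mem_span_of_iInf_ker_le_ker (L := fun x : I => (evCLM M x.1).toLinearMap)
    (K := χ.toLinearMap) hker
  have hrange : Set.range (fun x : I => (evCLM M x.1).toLinearMap)
      = (ContinuousLinearMap.coeLM 𝕜) '' (evCLM M '' ↑hI.toFinset) := by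
    ext g
    simp only [Set.mem_range, Set.mem_image, Finset.coe_sort_coe, Set.Finite.coe_toFinset]
    constructor
    · rintro ⟨⟨x, hx⟩, rfl⟩
      exact ⟨evCLM M x, ⟨x, hx, rfl⟩, rfl⟩
    · rintro ⟨g', ⟨x, hx, rfl⟩, rfl⟩
      exact ⟨⟨x, hx⟩, rfl⟩
  rw [hrange, ← Submodule.map_span] at hspan
  obtain ⟨χ', hχ', heq⟩ := hspan
  have : χ' = χ := by
    exact ContinuousLinearMap.coe_injective heq
  rwa [this] at hχ'

/-- If `χ` is in the span of evaluations over `s` and `m` vanishes on `s`, then `χ m = 0`. -/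
lemma span_eval_apply_eq_zero (M : Submodule 𝕜 (X → 𝕜)) {s : Set X} {χ : ↥M →L[𝕜] 𝕜}
    (hχ : χ ∈ Submodule.span 𝕜 (evCLM M '' s)) (m : ↥M)
    (hm : ∀ t ∈ s, (m : X → 𝕜) t = 0) : χ m = 0 := by
  let A : (↥M →L[𝕜] 𝕜) →ₗ[𝕜] 𝕜 :=
    { toFun := fun ξ => ξ m
      map_add' := fun ξ η => rfl
      map_smul' := fun c ξ => rfl }
  have hle : Submodule.span 𝕜 (evCLM M '' s) ≤ LinearMap.ker A := by
    rw [Submodule.span_le]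
    rintro g ⟨t, ht, rfl⟩
    simp only [SetLike.mem_coe, LinearMap.mem_ker]
    exact hm t ht
  exact hle hχ

/-- If `χ ∈ span (ev '' G)`, `m z = 1`, `m` vanishes on `G.erase z` and `χ m = 0`,
then `χ ∈ span (ev '' (G.erase z))`. -/
lemma span_eval_reduce (M : Submodule 𝕜 (X → 𝕜)) [DecidableEq X] {G : Finset X} {z : X}
    (hz : z ∈ G) {χ : ↥M →L[𝕜] 𝕜} (hχ : χ ∈ Submodule.span 𝕜 (evCLM M '' ↑G)) (m : ↥M)
    (hm1 : (m : X → 𝕜) z = 1) (hm0 : ∀ t ∈ G.erase z, (m : X → 𝕜) t = 0) (h0 : χ m = 0) :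
    χ ∈ Submodule.span 𝕜 (evCLM M '' ↑(G.erase z)) := by
  let ρ : (↥M →L[𝕜] 𝕜) →ₗ[𝕜] (↥M →L[𝕜] 𝕜) :=
    { toFun := fun ξ => ξ - ξ m • evCLM M z
      map_add' := fun ξ η => by ext v; simp [add_smul]; ring
      map_smul' := fun c ξ => by ext v; simp [smul_smul]; ring }
  have hmap : ∀ g ∈ evCLM M '' ↑G, ρ g ∈ Submodule.span 𝕜 (evCLM M '' ↑(G.erase z)) := by
    rintro g ⟨t, ht, rfl⟩
    by_cases hzt : t = z
    · subst hzt
      have : ρ (evCLM M t) = 0 := by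
        simp only [ρ, LinearMap.coe_mk, AddHom.coe_mk, evCLM_apply, hm1, one_smul]
        exact sub_self (evCLM M t)
      rw [this]; exact Submodule.zero_mem _
    · have : ρ (evCLM M t) = evCLM M t := by
        simp only [ρ, LinearMap.coe_mk, AddHom.coe_mk, evCLM_apply,
          hm0 t (Finset.mem_erase.mpr ⟨hzt, ht⟩)]
        ext v; simp
      rw [this]
      exact Submodule.subset_span ⟨t, by simp [Finset.mem_erase, hzt, ht], rfl⟩
  have hρχ : ρ χ ∈ Submodule.span 𝕜 (evCLM M '' ↑(G.erase z)) := by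
    have h2 : ρ χ ∈ Submodule.map ρ (Submodule.span 𝕜 (evCLM M '' ↑G)) :=
      ⟨χ, hχ, rfl⟩
    have h3 : Submodule.map ρ (Submodule.span 𝕜 (evCLM M '' ↑G)) ≤
        Submodule.span 𝕜 (evCLM M '' ↑(G.erase z)) := by
      rw [Submodule.map_span, Submodule.span_le]
      rintro g ⟨g', hg', rfl⟩
      exact hmap g' hg'
    exact h3 h2
  have : ρ χ = χ := by
    simp only [ρ, LinearMap.coe_mk, AddHom.coe_mk, h0]
    ext v; simp
  rwa [this] at hρχ

/-- minimal support subset -/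
lemma exists_minimal_span (M : Submodule 𝕜 (X → 𝕜)) [DecidableEq X] (G : Finset X)
    (χ : ↥M →L[𝕜] 𝕜) (hχ : χ ∈ Submodule.span 𝕜 (evCLM M '' ↑G)) :
    ∃ G' ⊆ G, χ ∈ Submodule.span 𝕜 (evCLM M '' ↑G') ∧
      ∀ y ∈ G', χ ∉ Submodule.span 𝕜 (evCLM M '' ↑(G'.erase y)) := by
  induction G using Finset.strongInductionOn with
  | _ G ih =>
    by_cases h : ∀ y ∈ G, χ ∉ Submodule.span 𝕜 (evCLM M '' ↑(G.erase y))
    · exact ⟨G, le_refl _, hχ, h⟩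
    · push_neg at h
      obtain ⟨y, hy, hspan⟩ := h
      obtain ⟨G', hG', h1, h2⟩ := ih (G.erase y) (Finset.erase_ssubset hy) hspan
      exact ⟨G', hG'.trans (Finset.erase_subset _ _), h1, h2⟩

variable {Y : Type*} [TopologicalSpace Y] [T2Space Y] [RegularSpace Y]

lemma disj_step (W A : Set Y) (hW : IsOpen W) (hAW : A ⊆ W) (hA : A.Infinite) :
    ∃ (a : Y) (U W' A' : Set Y), IsOpen U ∧ a ∈ U ∧ U ⊆ W ∧ a ∈ A ∧
      IsOpen W' ∧ W' ⊆ W \ U ∧ A' ⊆ W' ∧ A'.Infinite ∧ A' ⊆ A := by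
  obtain ⟨x, hx, y, hy, hxy⟩ := hA.nontrivial
  obtain ⟨U₀, V, hU₀, hV, hxU₀, hyV, hdisj⟩ := t2_separation hxy
  have hWU₀ : W ∩ U₀ ∈ 𝓝 x := (hW.inter hU₀).mem_nhds ⟨hAW hx, hxU₀⟩
  obtain ⟨C, hCmem, hCclosed, hCsub⟩ := exists_mem_nhds_isClosed_subset hWU₀
  set U' := interior C with hU'
  have hxU' : x ∈ U' := mem_interior_iff_mem_nhds.mpr hCmem
  have hclU' : closure U' ⊆ C := (closure_minimal interior_subset hCclosed)
  by_cases hcase : (A \ C).Infinite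
  · refine ⟨x, U', W \ C, A \ C, isOpen_interior, hxU', ?_, hx, ?_, ?_, ?_, hcase,
      Set.diff_subset⟩
    · exact (interior_subset.trans hCsub).trans Set.inter_subset_left
    · exact hW.sdiff hCclosed
    · intro w hw
      exact ⟨hw.1, fun hwU => hw.2 (interior_subset hwU)⟩
    · intro w hw
      exact ⟨hAW hw.1, hw.2⟩
  · rw [Set.not_infinite] at hcase
    have hAC : (A ∩ C).Infinite := by
      have := hA.diff hcase
      have heq : A \ (A \ C) = A ∩ C := by ext w; simp
      rwa [heq] at this
    refine ⟨y, V ∩ W, W ∩ U₀, A ∩ C, hV.inter hW, ⟨hyV, hAW hy⟩, Set.inter_subset_right,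
      hy, hW.inter hU₀, ?_, ?_, hAC, Set.inter_subset_left⟩
    · intro w hw
      refine ⟨hw.1, fun hwVW => ?_⟩
      exact (Set.disjoint_left.mp hdisj hw.2) hwVW.1
    · intro w hw
      have := hCsub hw.2
      exact ⟨this.1, this.2⟩

lemma exists_disjoint_opens (x : ℕ → Y) (hx : Function.Injective x) :
    ∃ (φ : ℕ → ℕ) (U : ℕ → Set Y), (∀ k, IsOpen (U k)) ∧ (∀ k, x (φ k) ∈ U k) ∧
      Pairwise (Function.onFun Disjoint U) := by
  classical
  let St := {p : Set Y × Set Y // IsOpen p.1 ∧ p.2 ⊆ p.1 ∧ p.2.Infinite ∧ p.2 ⊆ Set.range x}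
  have step : ∀ s : St, ∃ (a : Y) (U W' A' : Set Y), IsOpen U ∧ a ∈ U ∧ U ⊆ s.1.1 ∧
      a ∈ s.1.2 ∧ IsOpen W' ∧ W' ⊆ s.1.1 \ U ∧ A' ⊆ W' ∧ A'.Infinite ∧ A' ⊆ s.1.2 := by
    rintro ⟨⟨W, A⟩, hW, hAW, hA, _⟩
    exact disj_step W A hW hAW hA
  choose aF UF WF AF hUo haU hUW haA hW'o hW'sub hA'W hA'inf hA'A using step
  let next : St → St := fun s => ⟨(WF s, AF s), hW'o s, hA'W s, hA'inf s,
    (hA'A s).trans s.2.2.2.2⟩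
  let s0 : St := ⟨(Set.univ, Set.range x), isOpen_univ, Set.subset_univ _,
    Set.infinite_range_of_injective hx, le_refl _⟩
  let seq : ℕ → St := fun n => Nat.rec s0 (fun _ s => next s) n
  have hWsub : ∀ n, (seq (n + 1)).1.1 ⊆ (seq n).1.1 \ UF (seq n) := fun n => hW'sub (seq n)
  have hmono : ∀ m n, m ≤ n → (seq n).1.1 ⊆ (seq m).1.1 := by
    intro m n hmn
    induction n with
    | zero => cases Nat.le_zero.mp hmn; exact subset_rfl
    | succ k ih =>
      rcases Nat.lt_or_ge m (k+1) with h | h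
      · exact ((hWsub k).trans Set.diff_subset).trans (ih (Nat.lt_succ_iff.mp h))
      · have : m = k + 1 := le_antisymm hmn h
        subst this; exact subset_rfl
  have hdisj : Pairwise (Function.onFun Disjoint (fun n => UF (seq n))) := by
    have key : ∀ m n, m < n → Disjoint (UF (seq m)) (UF (seq n)) := by
      intro m n hmn
      have h1 : UF (seq n) ⊆ (seq n).1.1 := hUW (seq n)
      have h2 : (seq n).1.1 ⊆ (seq (m+1)).1.1 := hmono (m+1) n hmn
      have h3 : (seq (m+1)).1.1 ⊆ (seq m).1.1 \ UF (seq m) := hWsub m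
      refine Set.disjoint_left.mpr fun w hwm hwn => ?_
      exact (h3 (h2 (h1 hwn))).2 hwm
    intro m n hmn
    rcases lt_or_gt_of_ne hmn with h | h
    · exact key m n h
    · exact (key n m h).symm
  have haR : ∀ n, aF (seq n) ∈ Set.range x := fun n => (seq n).2.2.2.2 (haA (seq n))
  choose φ hφ using haR
  exact ⟨φ, fun n => UF (seq n), fun n => hUo (seq n), fun n => by rw [hφ n]; exact haU (seq n),
    hdisj⟩

end Aux

set_option maxHeartbeats 2000000 in
/-- Let `1 ≤ p ≤ q ≤ ∞`, `X` a Tychonoff space and `E` a linear subspace of `𝔽^X`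
(with the product topology, `𝔽 = ℝ` or `ℂ`) containing all continuous functions
(i.e. containing `C_p(X)`). Then every `(p,q)`-`(V)` set in the topological dual `E'`
is contained in a finite-dimensional linear subspace of `E'`. -/
theorem vSet_in_dual_of_cp_is_finiteDimensional (p q : ℝ≥0∞) (hp : 1 ≤ p) (hpq : p ≤ q)
    (X : Type*) [TopologicalSpace X] [T35Space X]
    (M : Submodule 𝕜 (X → 𝕜)) (hM : ∀ f : X → 𝕜, Continuous f → f ∈ M)
    (B : Set (↥M →L[𝕜] 𝕜)) (hB : IsVSetK p q B) :
    ∃ S : Submodule 𝕜 (↥M →L[𝕜] 𝕜), (∃ s : Finset (↥M →L[𝕜] 𝕜), S = Submodule.span 𝕜 ↑s) ∧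
      B ⊆ ↑S := by
  classical
  by_cases hfin : ∃ F : Finset X, B ⊆ ↑(Submodule.span 𝕜 (evCLM M '' ↑F))
  · obtain ⟨F, hF⟩ := hfin
    refine ⟨Submodule.span 𝕜 (evCLM M '' ↑F), ⟨F.image (evCLM M), ?_⟩, hF⟩
    rw [Finset.coe_image]
  · exfalso
    push_neg at hfin
    -- Step 1: a "fresh support point" step
    have hstep : ∀ F : Finset X, ∃ (y : X) (χ : ↥M →L[𝕜] 𝕜) (G : Finset X),
        χ ∈ B ∧ y ∈ G ∧ y ∉ F ∧ χ ∈ Submodule.span 𝕜 (evCLM M '' ↑G) ∧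
        χ ∉ Submodule.span 𝕜 (evCLM M '' ↑(G.erase y)) := by
      intro F
      obtain ⟨χ, hχB, hχF⟩ := Set.not_subset.mp (hfin F)
      obtain ⟨G₀, hG₀⟩ := exists_finset_mem_span M χ
      have hχG : χ ∈ Submodule.span 𝕜 (evCLM M '' ↑(G₀ ∪ F)) := by
        refine Submodule.span_mono (Set.image_mono ?_) hG₀
        exact_mod_cast Finset.subset_union_left
      obtain ⟨G', hsubG, h1, h2⟩ := exists_minimal_span M (G₀ ∪ F) χ hχG
      have hnsub : ¬ (G' ⊆ F) := by
        intro hGF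
        exact hχF (Submodule.span_mono (Set.image_mono (by exact_mod_cast hGF)) h1)
      obtain ⟨y, hyG', hyF⟩ := Finset.not_subset.mp hnsub
      exact ⟨y, χ, G', hχB, hyG', hyF, h1, h2 y hyG'⟩
    choose yF χF GF hBF hyG hyF hspan hnspan using hstep
    -- Step 2: an injective sequence of fresh points
    let F : ℕ → Finset X := fun n => Nat.rec ∅ (fun _ Fn => Fn ∪ GF Fn) n
    have hFsucc : ∀ n, F (n+1) = F n ∪ GF (F n) := fun n => rfl
    have hFmono : ∀ m n, m ≤ n → F m ⊆ F n := by
      intro m n hmn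
      induction n with
      | zero => cases Nat.le_zero.mp hmn; exact Finset.Subset.refl _
      | succ k ih =>
        rcases Nat.lt_or_ge m (k+1) with h | h
        · exact (ih (Nat.lt_succ_iff.mp h)).trans (by rw [hFsucc k]; exact Finset.subset_union_left)
        · have : m = k + 1 := le_antisymm hmn h
          subst this; exact Finset.Subset.refl _
    let xseq : ℕ → X := fun n => yF (F n)
    have hxF : ∀ n, xseq n ∈ F (n+1) := by
      intro n
      rw [hFsucc n]
      exact Finset.mem_union_right _ (hyG (F n))
    have hinj : Function.Injective xseq := by
      intro m n h
      by_contra hne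
      rcases lt_or_gt_of_ne hne with hlt | hlt
      · have h2 : xseq m ∈ F n := hFmono (m+1) n hlt (hxF m)
        rw [h] at h2
        exact hyF (F n) h2
      · have h2 : xseq n ∈ F m := hFmono (n+1) m hlt (hxF n)
        rw [← h] at h2
        exact hyF (F m) h2
    -- Step 3: disjoint open sets around a subsequence
    obtain ⟨φ, U, hUo, hxU, hUdisj⟩ := exists_disjoint_opens xseq hinj
    -- Step 4: bump functions
    have hfun : ∀ k : ℕ, ∃ m : ↥M, (m : X → 𝕜) (xseq (φ k)) = 1 ∧
        (∀ t ∈ (GF (F (φ k))).erase (xseq (φ k)), (m : X → 𝕜) t = 0) ∧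
        (∀ t, t ∉ U k → (m : X → 𝕜) t = 0) := by
      intro k
      set z := xseq (φ k) with hz
      set C : Set X := (↑((GF (F (φ k))).erase z) ∪ (U k)ᶜ : Set X) with hC
      have hCclosed : IsClosed C :=
        (((GF (F (φ k))).erase z).finite_toSet.isClosed).union (hUo k).isClosed_compl
      have hzC : z ∉ C := by
        rintro (h | h)
        · exact (Finset.mem_erase.mp (by exact_mod_cast h)).1 rfl
        · exact h (hxU k)
      obtain ⟨g, hgc, hg0, hg1⟩ := CompletelyRegularSpace.completely_regular z C hCclosed hzC
      let f : X → 𝕜 := fun t => (1 : 𝕜) - ((g t : ℝ) : 𝕜)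
      have hfc : Continuous f := by
        have : Continuous fun t => ((g t : ℝ) : 𝕜) :=
          RCLike.continuous_ofReal.comp (continuous_subtype_val.comp hgc)
        exact continuous_const.sub this
      refine ⟨⟨f, hM f hfc⟩, ?_, ?_, ?_⟩
      · show f z = 1
        simp [f, hg0]
      · intro t ht
        show f t = 0
        have : g t = 1 := hg1 (Set.mem_union_left _ (by exact_mod_cast ht))
        simp [f, this]
      · intro t ht
        show f t = 0
        have : g t = 1 := hg1 (Set.mem_union_right _ ht)
        simp [f, this]
    choose mk hm1 hm0 hmU using hfun
    set ψ : ℕ → (↥M →L[𝕜] 𝕜) := fun k => χF (F (φ k)) with hψ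
    have hψB : ∀ k, ψ k ∈ B := fun k => hBF (F (φ k))
    have hbk : ∀ k, ψ k (mk k) ≠ 0 := by
      intro k h0
      exact hnspan (F (φ k))
        (span_eval_reduce M (hyG (F (φ k))) (hspan (F (φ k))) (mk k) (hm1 k) (hm0 k) h0)
    -- Step 5: the weakly p-summable sequence
    set w : ℕ → ↥M := fun k => (((k : 𝕜) + 1) * (ψ k (mk k))⁻¹) • mk k with hw
    have hψw : ∀ k, ψ k (w k) = (k : 𝕜) + 1 := by
      intro k
      rw [hw]
      simp only [map_smul, smul_eq_mul]
      rw [mul_assoc, inv_mul_cancel₀ (hbk k), mul_one]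
    have hwt0 : ∀ k t, t ∉ U k → (w k : X → 𝕜) t = 0 := by
      intro k t ht
      have : (w k : X → 𝕜) t = (((k : 𝕜) + 1) * (ψ k (mk k))⁻¹) * (mk k : X → 𝕜) t := rfl
      rw [this, hmU k t ht, mul_zero]
    have hwsum : WeaklySummableK (𝕜 := 𝕜) p w := by
      intro χ
      obtain ⟨H, hH⟩ := exists_finset_mem_span M χ
      have hSsub : {k | χ (w k) ≠ 0} ⊆ ⋃ t ∈ H, {k | t ∈ U k} := by
        intro k hk
        by_contra hcon
        simp only [Set.mem_iUnion, Set.mem_setOf_eq, not_exists] at hcon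
        refine hk (span_eval_apply_eq_zero M hH (w k) ?_)
        intro t ht
        exact hwt0 k t (fun htU => hcon t ht htU)
      have hSfin : {k | χ (w k) ≠ 0}.Finite := by
        refine Set.Finite.subset (Set.Finite.biUnion H.finite_toSet ?_) hSsub
        intro t _
        refine Set.Subsingleton.finite ?_
        intro k hk k' hk'
        by_contra hne
        exact Set.disjoint_left.mp (hUdisj hne) hk hk'
      by_cases hpinf : p = ∞
      · refine Or.inr ⟨hpinf, ?_⟩
        have hev : ∀ᶠ k in atTop, χ (w k) = 0 := by
          rw [← Nat.cofinite_eq_atTop]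
          exact Filter.eventually_cofinite.mpr hSfin
        exact tendsto_const_nhds.congr' (hev.mono fun k hk => hk.symm)
      · refine Or.inl ⟨hpinf, ?_⟩
        apply memℓp_gen
        have hptr : 0 < p.toReal :=
          ENNReal.toReal_pos (zero_lt_one.trans_le hp).ne' hpinf
        refine summable_of_ne_finset_zero (s := hSfin.toFinset) ?_
        intro k hk
        have : χ (w k) = 0 := by
          by_contra h
          exact hk (hSfin.mem_toFinset.mpr h)
        rw [this, norm_zero, Real.zero_rpow hptr.ne']
    -- Step 6: the contradiction
    have hlb : ∀ k, (1 : ℝ≥0∞) ≤ ⨆ χ ∈ B, (‖χ (w k)‖₊ : ℝ≥0∞) := by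
      intro k
      have h1 : (1 : ℝ≥0∞) ≤ (‖ψ k (w k)‖₊ : ℝ≥0∞) := by
        rw [hψw k]
        have h2 : (1:ℝ) ≤ ‖((k : 𝕜) + 1)‖ := by
          have : ((k : 𝕜) + 1) = ((k + 1 : ℕ) : 𝕜) := by push_cast; ring
          rw [this, RCLike.norm_natCast]
          exact_mod_cast Nat.one_le_iff_ne_zero.mpr (Nat.succ_ne_zero k)
        rw [show (1 : ℝ≥0∞) = ((1 : ℝ≥0) : ℝ≥0∞) from rfl, ENNReal.coe_le_coe]
        rw [← NNReal.coe_le_coe]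
        simpa using h2
      exact h1.trans (le_iSup₂ (f := fun χ _ => (‖χ (w k)‖₊ : ℝ≥0∞)) (ψ k) (hψB k))
    rcases hB w hwsum with ⟨hq, hsum⟩ | ⟨hq, htend⟩
    · apply hsum
      rw [eq_top_iff]
      calc (⊤ : ℝ≥0∞) = ∑' _ : ℕ, (1 : ℝ≥0∞) :=
            (ENNReal.tsum_const_eq_top_of_ne_zero one_ne_zero).symm
        _ ≤ _ := by
            refine ENNReal.tsum_le_tsum fun k => ?_
            calc (1 : ℝ≥0∞) = 1 ^ q.toReal := (ENNReal.one_rpow _).symm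
              _ ≤ (⨆ χ ∈ B, (‖χ (w k)‖₊ : ℝ≥0∞)) ^ q.toReal :=
                  ENNReal.rpow_le_rpow (hlb k) ENNReal.toReal_nonneg
    · have := htend.eventually_lt_const (show (0:ℝ≥0∞) < 1 from zero_lt_one)
      obtain ⟨k, hk⟩ := this.exists
      exact absurd (hlb k) (not_le.mpr hk)

end
end

section
/- Let p ∈ [1,∞] and let T : E → L be a continuous linear operator between locally convex spaces E and L. Then the following are equivalent: (i) for every bounded subset B of E, the image T(B) is a p-(V*) set in L; (ii) the adjoint operator T* : L'_β → E'_β is p-convergent, i.e., T* maps every weakly p-summable sequence in L'_β to a sequence converging to 0 in E'_β. -/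
open Filter Topology Bornology Pointwise
open scoped ENNReal NNReal

noncomputable section

/-- A real sequence belongs to `ℓ_p` when `p ≠ ∞`, and to `c₀` when `p = ∞`. -/
def InLpC0 (p : ℝ≥0∞) (f : ℕ → ℝ) : Prop :=
  (p ≠ ∞ ∧ Memℓp f p) ∨ (p = ∞ ∧ Tendsto f atTop (nhds (0 : ℝ)))

variable {E : Type*} [AddCommGroup E] [Module ℝ E] [TopologicalSpace E]

/-- A sequence `x` in a topological vector space `E` is weakly `p`-summable if
`(χ (x n))ₙ ∈ ℓ_p` (resp. `∈ c₀` if `p = ∞`) for every continuous linear functional `χ` on `E`. -/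
def WeaklySummable (p : ℝ≥0∞) (x : ℕ → E) : Prop :=
  ∀ χ : E →L[ℝ] ℝ, InLpC0 p fun n => χ (x n)

/-- `A ⊆ E` is a `(p,q)`-`(V*)` set: for every weakly `p`-summable sequence `(χ n)` in the
strong dual `E'_β` (the default topology on `E →L[ℝ] ℝ` is the strong topology), the sequence
`(sup_{a ∈ A} |χ n a|)ₙ` belongs to `ℓ_q` (to `c₀` if `q = ∞`). -/
def IsVAstSet (p q : ℝ≥0∞) (A : Set E) : Prop :=
  ∀ χ : ℕ → (E →L[ℝ] ℝ), WeaklySummable p χ →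
    InLpC0E q fun n => ⨆ a ∈ A, (‖χ n a‖₊ : ℝ≥0∞)

/-- `B ⊆ E'` is a `(p,q)`-`(V)` set: for every weakly `p`-summable sequence `(x n)` in `E`,
the sequence `(sup_{χ ∈ B} |χ (x n)|)ₙ` belongs to `ℓ_q` (to `c₀` if `q = ∞`). -/
def IsVSet (p q : ℝ≥0∞) (B : Set (E →L[ℝ] ℝ)) : Prop :=
  ∀ x : ℕ → E, WeaklySummable p x → InLpC0E q fun n => ⨆ χ ∈ B, (‖χ (x n)‖₊ : ℝ≥0∞)

/-- The `p`-Schur property: every weakly `p`-summable sequence converges to `0`. -/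
def HasPSchur (p : ℝ≥0∞) (F : Type*) [AddCommGroup F] [Module ℝ F] [TopologicalSpace F] : Prop :=
  ∀ x : ℕ → F, WeaklySummable p x → Tendsto x atTop (nhds 0)

/-- The identity map into `F` equipped with its weak topology. -/
def toWeakSp {F : Type*} [AddCommGroup F] [Module ℝ F] [TopologicalSpace F] (x : F) :
    WeakSpace ℝ F := x

/-- A set `A ⊆ F` viewed as a subset of `F` with its weak topology. -/
def inWeak {F : Type*} [AddCommGroup F] [Module ℝ F] [TopologicalSpace F] (A : Set F) :
    Set (WeakSpace ℝ F) := toWeakSp '' A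

/-- Uniform convergence to `0` on `s` of real-valued functions is equivalent to the
`ℝ≥0∞`-valued suprema over `s` tending to `0`. -/
lemma tendsto_iSup_iff_tendstoUniformlyOn {α : Type*} {s : Set α} (f : ℕ → α → ℝ) :
    Tendsto (fun n => ⨆ a ∈ s, (‖f n a‖₊ : ℝ≥0∞)) atTop (nhds 0) ↔
      TendstoUniformlyOn f 0 atTop s := by
  rw [ENNReal.tendsto_nhds_zero, Metric.tendstoUniformlyOn_iff]
  constructor
  · intro h ε hε
    have h2 : (0 : ℝ≥0∞) < ENNReal.ofReal (ε / 2) := by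
      simp [ENNReal.ofReal_pos]; linarith
    filter_upwards [h _ h2] with n hn x hx
    have hle : (‖f n x‖₊ : ℝ≥0∞) ≤ ENNReal.ofReal (ε / 2) := by
      refine le_trans ?_ hn
      exact le_trans (le_iSup₂ (f := fun a (_ : a ∈ s) => (‖f n a‖₊ : ℝ≥0∞)) x hx) le_rfl
    simp only [Pi.zero_apply, dist_zero_left]
    calc ‖f n x‖ = ((‖f n x‖₊ : ℝ≥0∞)).toReal := by simp
      _ ≤ (ENNReal.ofReal (ε / 2)).toReal := ENNReal.toReal_mono (by simp) hle
      _ = ε / 2 := by rw [ENNReal.toReal_ofReal (by linarith)]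
      _ < ε := by linarith
  · intro h ε hε
    obtain ⟨r, hr0, hrε⟩ : ∃ r : ℝ≥0, 0 < r ∧ (r : ℝ≥0∞) ≤ ε := by
      rcases eq_or_ne ε ∞ with rfl | hne
      · exact ⟨1, one_pos, le_top⟩
      · refine ⟨ε.toNNReal, ?_, by simp [ENNReal.coe_toNNReal hne]⟩
        simpa [pos_iff_ne_zero, ENNReal.toNNReal_eq_zero_iff, hne] using hε.ne'
    filter_upwards [h r hr0] with n hn
    refine le_trans (iSup₂_le fun x hx => ?_) hrε
    have := hn x hx
    simp only [Pi.zero_apply, dist_zero_left] at this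
    exact_mod_cast ENNReal.coe_le_coe.2 (by exact_mod_cast this.le)

/-- Let `p ∈ [1,∞]` and `T : E → L` a continuous linear operator between locally convex
spaces. The following are equivalent: (i) for every bounded `B ⊆ E` the image `T(B)` is a
`p`-`(V*)` set in `L`; (ii) the adjoint `T* : L'_β → E'_β` is `p`-convergent, i.e. it maps
every weakly `p`-summable sequence of `L'_β` to a sequence converging to `0` in `E'_β`. -/
theorem image_bounded_isVAst_iff_adjoint_p_convergent (p : ℝ≥0∞) (hp : 1 ≤ p)
    {E : Type*} [AddCommGroup E] [Module ℝ E] [TopologicalSpace E]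
    [IsTopologicalAddGroup E] [ContinuousSMul ℝ E] [LocallyConvexSpace ℝ E]
    {L : Type*} [AddCommGroup L] [Module ℝ L] [TopologicalSpace L]
    [IsTopologicalAddGroup L] [ContinuousSMul ℝ L] [LocallyConvexSpace ℝ L]
    (T : E →L[ℝ] L) :
    (∀ B : Set E, IsVonNBounded ℝ B → IsVAstSet p ∞ (T '' B)) ↔
      (∀ χ : ℕ → (L →L[ℝ] ℝ), WeaklySummable p χ →
        Tendsto (fun n => (χ n).comp T) atTop (nhds (0 : E →L[ℝ] ℝ))) := by
  have key : ∀ (χ : ℕ → (L →L[ℝ] ℝ)),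
      Tendsto (fun n => (χ n).comp T) atTop (nhds (0 : E →L[ℝ] ℝ)) ↔
        ∀ s : Set E, IsVonNBounded ℝ s →
          TendstoUniformlyOn (fun n x => χ n (T x)) 0 atTop s := by
    intro χ
    exact UniformConvergenceCLM.tendsto_iff_tendstoUniformlyOn
      (σ := RingHom.id ℝ) (F := ℝ) { S : Set E | IsVonNBounded ℝ S }
      (a := fun n => (χ n).comp T) (a₀ := 0)
  have sup_eq : ∀ (χ : ℕ → (L →L[ℝ] ℝ)) (B : Set E) (n : ℕ),
      (⨆ a ∈ T '' B, (‖χ n a‖₊ : ℝ≥0∞)) = ⨆ b ∈ B, (‖χ n (T b)‖₊ : ℝ≥0∞) := by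
    intro χ B n
    rw [iSup_image]
  constructor
  · intro h χ hχ
    rw [key]
    intro s hs
    have h1 := h s hs χ hχ
    rcases h1 with ⟨hne, _⟩ | ⟨_, ht⟩
    · exact absurd rfl hne
    · simp only [sup_eq] at ht
      exact (tendsto_iSup_iff_tendstoUniformlyOn (s := s) fun n x => χ n (T x)).1 ht
  · intro h B hB χ hχ
    right
    refine ⟨rfl, ?_⟩
    have h1 := (key χ).1 (h χ hχ) B hB
    simp only [sup_eq]
    exact (tendsto_iSup_iff_tendstoUniformlyOn (s := B) fun n x => χ n (T x)).2 h1

end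
end

section
/- Let 1 ≤ p_1 ≤ q_1 < ∞ and 1 ≤ p_2 ≤ q_2 < ∞ satisfy p_1 ≤ p_2, q_1 ≤ q_2, and 1/p_1 − 1/q_1 ≤ 1/p_2 − 1/q_2. Let E and L be locally convex spaces and let U be an absolutely convex closed subset of E. Then every U-(q_1,p_1)-summing continuous linear operator T : E → L is U-(q_2,p_2)-summing. -/
open Filter Topology Bornology
open scoped ENNReal NNReal

noncomputable section

variable {E : Type*} [AddCommGroup E] [Module ℝ E] [TopologicalSpace E]
  {L : Type*} [AddCommGroup L] [Module ℝ L] [TopologicalSpace L]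

/-- `T : E → L` is `U`-`(q,p)`-summing: for every closed absolutely convex neighborhood `V`
of `0` in `L` there is `C_V > 0` such that
`(∑_{i≤n} q_V(T xᵢ)^q)^{1/q} ≤ C_V ⬝ sup_{χ ∈ U°} (∑_{i≤n} |χ xᵢ|^p)^{1/p}`
for all `n` and `x₀,…,xₙ ∈ U`, where `q_V` is the Minkowski gauge of `V` and `U°` is the
polar of `U`. -/
def IsUqpSumming (U : Set E) (T : E →L[ℝ] L) (q p : ℝ) : Prop :=
  ∀ V : Set L, IsClosed V → Convex ℝ V → Balanced ℝ V → V ∈ nhds (0 : L) →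
    ∃ C > 0, ∀ (n : ℕ) (x : Fin (n + 1) → E), (∀ i, x i ∈ U) →
      (∑ i, gauge V (T (x i)) ^ q) ^ (1 / q) ≤
        C * ⨆ χ : {χ : E →L[ℝ] ℝ // ∀ y ∈ U, |χ y| ≤ 1},
              (∑ i, |(χ : E →L[ℝ] ℝ) (x i)| ^ p) ^ (1 / p)

/-- Hölder step: if `∑ λᵢ^{p₁p₂/(p₂-p₁)} ≤ 1` then
`∑ (λᵢ aᵢ)^{p₁} ≤ (∑ aᵢ^{p₂})^{p₁/p₂}`. -/
lemma holder_step (p₁ p₂ : ℝ) (hp₁ : 0 < p₁) (hp : p₁ < p₂) {n : ℕ}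
    (lam a : Fin (n + 1) → ℝ) (hlam0 : ∀ i, 0 ≤ lam i) (ha : ∀ i, 0 ≤ a i)
    (ht : ∑ i, lam i ^ (p₁ * p₂ / (p₂ - p₁)) ≤ 1) :
    ∑ i, (lam i * a i) ^ p₁ ≤ (∑ i, a i ^ p₂) ^ (p₁ / p₂) := by
  have hp₂ : 0 < p₂ := hp₁.trans hp
  have hsub : 0 < p₂ - p₁ := sub_pos.2 hp
  set u : ℝ := p₂ / (p₂ - p₁) with hu
  set u' : ℝ := p₂ / p₁ with hu'
  have hconj : Real.HolderConjugate u u' := by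
    rw [Real.holderConjugate_iff_eq_conjExponent (by rw [hu, lt_div_iff₀ hsub]; linarith)]
    rw [hu, hu']
    have h1 : p₂ / (p₂ - p₁) - 1 = p₁ / (p₂ - p₁) := by field_simp; ring
    rw [h1, div_div_div_cancel_right₀ hsub.ne']
  have h1 : ∑ i, (lam i) ^ p₁ * (a i) ^ p₁ ≤
      (∑ i, ((lam i) ^ p₁) ^ u) ^ (1 / u) * (∑ i, ((a i) ^ p₁) ^ u') ^ (1 / u') :=
    Real.inner_le_Lp_mul_Lq_of_nonneg (s := Finset.univ) hconj
      (fun i _ => Real.rpow_nonneg (hlam0 i) _) (fun i _ => Real.rpow_nonneg (ha i) _)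
  have hblam : ∀ i, ((lam i) ^ p₁) ^ u = lam i ^ (p₁ * p₂ / (p₂ - p₁)) := by
    intro i
    rw [← Real.rpow_mul (hlam0 i), hu, mul_div_assoc]
  have hba : ∀ i, ((a i) ^ p₁) ^ u' = a i ^ p₂ := by
    intro i
    rw [← Real.rpow_mul (ha i), hu', mul_div_cancel₀ _ hp₁.ne']
  have h2 : (∑ i, ((lam i) ^ p₁) ^ u) ^ (1 / u) ≤ 1 := by
    apply Real.rpow_le_one
    · exact Finset.sum_nonneg fun i _ => Real.rpow_nonneg (Real.rpow_nonneg (hlam0 i) _) _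
    · simp_rw [hblam]; exact ht
    · positivity
  have h3 : ∑ i, (lam i * a i) ^ p₁ = ∑ i, (lam i) ^ p₁ * (a i) ^ p₁ := by
    refine Finset.sum_congr rfl fun i _ => ?_
    rw [Real.mul_rpow (hlam0 i) (ha i)]
  rw [h3]
  calc ∑ i, (lam i) ^ p₁ * (a i) ^ p₁
      ≤ (∑ i, ((lam i) ^ p₁) ^ u) ^ (1 / u) * (∑ i, ((a i) ^ p₁) ^ u') ^ (1 / u') := h1
    _ ≤ 1 * (∑ i, ((a i) ^ p₁) ^ u') ^ (1 / u') := by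
        apply mul_le_mul_of_nonneg_right h2
        exact Real.rpow_nonneg
          (Finset.sum_nonneg fun i _ => Real.rpow_nonneg (Real.rpow_nonneg (ha i) _) _) _
    _ = (∑ i, a i ^ p₂) ^ (p₁ / p₂) := by
        rw [one_mul]
        congr 1
        · exact Finset.sum_congr rfl fun i _ => hba i
        · rw [hu']; field_simp

/-- Algebraic identity used for the diagonal sequence. -/
lemma diag_pow (q₁ q₂ : ℝ) (hq₁ : 0 < q₁) (hq : q₁ < q₂) {a S : ℝ} (ha : 0 ≤ a) (hS : 0 < S) :
    ((a ^ q₂ / S) ^ (1 / q₁ - 1 / q₂) * a) ^ q₁ = a ^ q₂ / S ^ ((1 / q₁ - 1 / q₂) * q₁) := by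
  have hq₂ : 0 < q₂ := hq₁.trans hq
  have hα : (0:ℝ) < 1 / q₁ - 1 / q₂ := by
    rw [sub_pos]
    exact one_div_lt_one_div_of_lt hq₁ hq
  rcases ha.eq_or_lt with rfl | ha'
  · rw [Real.zero_rpow hq₂.ne', zero_div, Real.zero_rpow hα.ne', zero_mul,
      Real.zero_rpow hq₁.ne', zero_div]
  · have h1 : (a ^ q₂ / S) ^ (1 / q₁ - 1 / q₂) =
        a ^ (q₂ * (1 / q₁ - 1 / q₂)) / S ^ (1 / q₁ - 1 / q₂) := by
      rw [Real.div_rpow (Real.rpow_nonneg ha _) hS.le, ← Real.rpow_mul ha]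
    have e1 : a ^ (q₂ * (1 / q₁ - 1 / q₂)) * a = a ^ (q₂ * (1 / q₁ - 1 / q₂) + 1) := by
      rw [Real.rpow_add ha', Real.rpow_one]
    have e2 : (q₂ * (1 / q₁ - 1 / q₂) + 1) * q₁ = q₂ := by
      field_simp
      ring
    rw [h1, div_mul_eq_mul_div, e1,
      Real.div_rpow (Real.rpow_nonneg ha _) (Real.rpow_nonneg hS.le _),
      ← Real.rpow_mul ha, ← Real.rpow_mul hS.le, e2]

/-- Inclusion property: if `1 ≤ p₁ ≤ q₁ < ∞` and `1 ≤ p₂ ≤ q₂ < ∞` satisfy `p₁ ≤ p₂`,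
`q₁ ≤ q₂` and `1/p₁ − 1/q₁ ≤ 1/p₂ − 1/q₂`, and `U` is an absolutely convex closed subset of a
locally convex space `E`, then every `U`-`(q₁,p₁)`-summing continuous linear operator
`T : E → L` into a locally convex space `L` is `U`-`(q₂,p₂)`-summing. -/
theorem uSumming_inclusion (p₁ q₁ p₂ q₂ : ℝ)
    (hp₁ : 1 ≤ p₁) (hpq₁ : p₁ ≤ q₁) (hp₂ : 1 ≤ p₂) (hpq₂ : p₂ ≤ q₂)
    (hpp : p₁ ≤ p₂) (hqq : q₁ ≤ q₂) (hdiff : 1 / p₁ - 1 / q₁ ≤ 1 / p₂ - 1 / q₂)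
    [IsTopologicalAddGroup E] [ContinuousSMul ℝ E] [LocallyConvexSpace ℝ E]
    [IsTopologicalAddGroup L] [ContinuousSMul ℝ L] [LocallyConvexSpace ℝ L]
    (U : Set E) (hUcl : IsClosed U) (hUconv : Convex ℝ U) (hUbal : Balanced ℝ U)
    (T : E →L[ℝ] L) (hT : IsUqpSumming U T q₁ p₁) :
    IsUqpSumming U T q₂ p₂ := by
  have hp₁0 : 0 < p₁ := lt_of_lt_of_le one_pos hp₁
  have hp₂0 : 0 < p₂ := lt_of_lt_of_le one_pos hp₂
  have hq₁0 : 0 < q₁ := hp₁0.trans_le hpq₁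
  have hq₂0 : 0 < q₂ := hp₂0.trans_le hpq₂
  rcases eq_or_lt_of_le hqq with hq | hq
  · -- `q₁ = q₂` forces `p₁ = p₂` and the statement is trivial.
    have h1q : 1 / q₁ = 1 / q₂ := by rw [hq]
    have hple : 1 / p₁ ≤ 1 / p₂ := by linarith
    have hpe : p₁ = p₂ := le_antisymm hpp (le_of_one_div_le_one_div hp₁0 hple)
    subst hpe; subst hq; exact hT
  · intro V hVcl hVconv hVbal hV0
    obtain ⟨C, hC, hsum⟩ := hT V hVcl hVconv hVbal hV0
    refine ⟨C, hC, ?_⟩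
    intro n x hx
    haveI hne : Nonempty {χ : E →L[ℝ] ℝ // ∀ y ∈ U, |χ y| ≤ 1} :=
      ⟨⟨0, fun y _ => by simp⟩⟩
    have hg0 : ∀ i : Fin (n + 1), 0 ≤ gauge V (T (x i)) := fun i => gauge_nonneg _
    set S : ℝ := ∑ i, gauge V (T (x i)) ^ q₂ with hSdef
    have hS0 : 0 ≤ S := Finset.sum_nonneg fun i _ => Real.rpow_nonneg (hg0 i) _
    have hSup2 : 0 ≤ ⨆ χ : {χ : E →L[ℝ] ℝ // ∀ y ∈ U, |χ y| ≤ 1},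
        (∑ i, |(χ : E →L[ℝ] ℝ) (x i)| ^ p₂) ^ (1 / p₂) :=
      Real.iSup_nonneg fun χ => Real.rpow_nonneg (Finset.sum_nonneg fun i _ =>
        Real.rpow_nonneg (abs_nonneg _) _) _
    -- bounded above: the `p₂`-sup family is bounded by `(n+1)^(1/p₂)`
    have hbdd : BddAbove (Set.range fun χ : {χ : E →L[ℝ] ℝ // ∀ y ∈ U, |χ y| ≤ 1} =>
        (∑ i, |(χ : E →L[ℝ] ℝ) (x i)| ^ p₂) ^ (1 / p₂)) := by
      refine ⟨((n : ℝ) + 1) ^ (1 / p₂), ?_⟩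
      rintro _ ⟨ψ, rfl⟩
      refine Real.rpow_le_rpow (Finset.sum_nonneg fun i _ =>
        Real.rpow_nonneg (abs_nonneg _) _) ?_ (by positivity)
      calc ∑ i, |(ψ : E →L[ℝ] ℝ) (x i)| ^ p₂ ≤ ∑ _i : Fin (n + 1), (1 : ℝ) :=
            Finset.sum_le_sum fun i _ =>
              Real.rpow_le_one (abs_nonneg _) (ψ.2 _ (hx i)) (by positivity)
        _ = (n : ℝ) + 1 := by simp
    rcases hS0.eq_or_lt with hS | hS
    · rw [← hS, Real.zero_rpow (by positivity : (1 : ℝ) / q₂ ≠ 0)]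
      exact mul_nonneg hC.le hSup2
    · set α : ℝ := 1 / q₁ - 1 / q₂ with hαdef
      have hα : 0 < α := by
        rw [hαdef, sub_pos]; exact one_div_lt_one_div_of_lt hq₁0 hq
      set lam : Fin (n + 1) → ℝ := fun i => (gauge V (T (x i)) ^ q₂ / S) ^ α with hlamdef
      have hb0 : ∀ i, (0 : ℝ) ≤ gauge V (T (x i)) ^ q₂ / S :=
        fun i => div_nonneg (Real.rpow_nonneg (hg0 i) _) hS0
      have hb1 : ∀ i, gauge V (T (x i)) ^ q₂ / S ≤ 1 := fun i => by
        rw [div_le_one hS, hSdef]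
        exact Finset.single_le_sum (fun j _ => Real.rpow_nonneg (hg0 j) _) (Finset.mem_univ i)
      have hbsum : ∑ i, gauge V (T (x i)) ^ q₂ / S = 1 := by
        rw [← Finset.sum_div, ← hSdef, div_self hS.ne']
      have hlam0 : ∀ i, 0 ≤ lam i := fun i => by
        simp only [hlamdef]; exact Real.rpow_nonneg (hb0 i) _
      have hlam1 : ∀ i, lam i ≤ 1 := fun i => by
        simp only [hlamdef]; exact Real.rpow_le_one (hb0 i) (hb1 i) hα.le
      have hyU : ∀ i, lam i • x i ∈ U := fun i =>
        hUbal (lam i)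
          (by rw [Real.norm_eq_abs, abs_of_nonneg (hlam0 i)]; exact hlam1 i)
          (Set.smul_mem_smul_set (hx i))
      have hTy : ∀ i, gauge V (T (lam i • x i)) = lam i * gauge V (T (x i)) := fun i => by
        rw [map_smul, gauge_smul_of_nonneg (hlam0 i), smul_eq_mul]
      -- the key diagonal computation
      have hLHS : ∑ i, gauge V (T (lam i • x i)) ^ q₁ = S ^ (q₁ / q₂) := by
        have hterm : ∀ i, gauge V (T (lam i • x i)) ^ q₁ =
            gauge V (T (x i)) ^ q₂ / S ^ (α * q₁) := fun i => by
          rw [hTy i]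
          simp only [hlamdef, hαdef]
          exact diag_pow q₁ q₂ hq₁0 hq (hg0 i) hS
        rw [Finset.sum_congr rfl fun i _ => hterm i, ← Finset.sum_div, ← hSdef,
          div_eq_iff (Real.rpow_pos_of_pos hS _).ne', ← Real.rpow_add hS]
        have hexp : q₁ / q₂ + α * q₁ = 1 := by
          rw [hαdef]; field_simp; ring
        rw [hexp, Real.rpow_one]
      have happ := hsum n (fun i => lam i • x i) hyU
      rw [hLHS] at happ
      have hS2 : (S ^ (q₁ / q₂)) ^ (1 / q₁) = S ^ (1 / q₂) := by
        rw [← Real.rpow_mul hS0]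
        congr 1
        field_simp
      rw [hS2] at happ
      refine happ.trans (mul_le_mul_of_nonneg_left ?_ hC.le)
      -- compare the two suprema
      refine ciSup_le fun χ => ?_
      have habs : ∀ i, |(χ : E →L[ℝ] ℝ) (lam i • x i)| =
          lam i * |(χ : E →L[ℝ] ℝ) (x i)| := fun i => by
        rw [map_smul, smul_eq_mul, abs_mul, abs_of_nonneg (hlam0 i)]
      have key : (∑ i, |(χ : E →L[ℝ] ℝ) (lam i • x i)| ^ p₁) ^ (1 / p₁) ≤
          (∑ i, |(χ : E →L[ℝ] ℝ) (x i)| ^ p₂) ^ (1 / p₂) := by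
        rw [Finset.sum_congr rfl fun i _ => by rw [habs i]]
        rcases eq_or_lt_of_le hpp with hpe | hpl
        · -- `p₁ = p₂`: use `lam i ≤ 1`
          subst hpe
          refine Real.rpow_le_rpow (Finset.sum_nonneg fun i _ => Real.rpow_nonneg
            (mul_nonneg (hlam0 i) (abs_nonneg _)) _) (Finset.sum_le_sum fun i _ => ?_)
            (by positivity)
          exact Real.rpow_le_rpow (mul_nonneg (hlam0 i) (abs_nonneg _))
            (mul_le_of_le_one_left (abs_nonneg _) (hlam1 i)) hp₁0.le
        · -- `p₁ < p₂`: Hölder with `∑ lam i ^ (p₁p₂/(p₂-p₁)) ≤ 1`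
          have hsub : 0 < p₂ - p₁ := sub_pos.2 hpl
          have ht0 : 0 < p₁ * p₂ / (p₂ - p₁) := by positivity
          have hαt : 1 ≤ α * (p₁ * p₂ / (p₂ - p₁)) := by
            have h1t : 1 / (p₁ * p₂ / (p₂ - p₁)) = 1 / p₁ - 1 / p₂ := by
              field_simp
            have hle : 1 / (p₁ * p₂ / (p₂ - p₁)) ≤ α := by
              rw [h1t, hαdef]; linarith
            have := mul_le_mul_of_nonneg_right hle ht0.le
            rwa [one_div_mul_cancel ht0.ne'] at this
          have hts : ∑ i, lam i ^ (p₁ * p₂ / (p₂ - p₁)) ≤ 1 := by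
            have hterm : ∀ i, lam i ^ (p₁ * p₂ / (p₂ - p₁)) ≤
                gauge V (T (x i)) ^ q₂ / S := fun i => by
              simp only [hlamdef]
              rw [← Real.rpow_mul (hb0 i)]
              rcases (hb0 i).eq_or_lt with hbe | hbp
              · rw [← hbe, Real.zero_rpow (by positivity)]
              · calc (gauge V (T (x i)) ^ q₂ / S) ^ (α * (p₁ * p₂ / (p₂ - p₁)))
                    ≤ (gauge V (T (x i)) ^ q₂ / S) ^ (1 : ℝ) :=
                      Real.rpow_le_rpow_of_exponent_ge hbp (hb1 i) hαt
                  _ = gauge V (T (x i)) ^ q₂ / S := Real.rpow_one _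
            calc ∑ i, lam i ^ (p₁ * p₂ / (p₂ - p₁))
                ≤ ∑ i, gauge V (T (x i)) ^ q₂ / S := Finset.sum_le_sum fun i _ => hterm i
              _ = 1 := hbsum
          have hH := holder_step p₁ p₂ hp₁0 hpl lam (fun i => |(χ : E →L[ℝ] ℝ) (x i)|)
            hlam0 (fun i => abs_nonneg _) hts
          have h2 := Real.rpow_le_rpow (Finset.sum_nonneg fun i _ => Real.rpow_nonneg
            (mul_nonneg (hlam0 i) (abs_nonneg _)) _) hH (by positivity : (0:ℝ) ≤ 1 / p₁)
          have hexp2 : p₁ / p₂ * (1 / p₁) = 1 / p₂ := by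
            field_simp
          rwa [← Real.rpow_mul (Finset.sum_nonneg fun i _ => Real.rpow_nonneg
            (abs_nonneg _) _), hexp2] at h2
      exact key.trans (le_ciSup hbdd χ)

end
end

section
/- Let E be a barrelled locally convex space. Then a bounded subset A of E is a (V*) set if and only if T(A) is relatively norm-compact in ℓ_1 for every continuous linear operator T : E → ℓ_1. -/
open Filter Topology Bornology Pointwise
open scoped ENNReal NNReal

noncomputable section

variable {E : Type*} [AddCommGroup E] [Module ℝ E] [TopologicalSpace E]

namespace VAux

abbrev L1 := lp (fun _ : ℕ => ℝ) 1

lemma memℓp_one_iff {f : ℕ → ℝ} : Memℓp f 1 ↔ Summable fun n => ‖f n‖ := by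
  rw [memℓp_gen_iff (by simp : 0 < (1:ℝ≥0∞).toReal)]
  simp

lemma norm_L1 (f : L1) : ‖f‖ = ∑' n, ‖f n‖ := by
  rw [lp.norm_eq_tsum_rpow (by simp : 0 < (1:ℝ≥0∞).toReal)]
  simp

lemma summable_coe (f : L1) : Summable fun n => ‖f n‖ := by
  have := lp.memℓp f
  rwa [memℓp_one_iff] at this

lemma sum_norm_le (f : L1) (S : Finset ℕ) : ∑ k ∈ S, ‖f k‖ ≤ ‖f‖ := by
  rw [norm_L1]
  exact Summable.sum_le_tsum S (fun i _ => norm_nonneg _) (summable_coe f)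

/-- truncation to the first `N` coordinates -/
def trunc (N : ℕ) (f : L1) : L1 := ∑ i ∈ Finset.range N, lp.single 1 i (f i)

lemma trunc_apply (N : ℕ) (f : L1) (n : ℕ) :
    (trunc N f : ∀ _ : ℕ, ℝ) n = if n ∈ Finset.range N then f n else 0 := by
  simp only [trunc, lp.coeFn_sum]
  rw [Finset.sum_apply]
  simp [trunc, lp.coeFn_sum, Finset.sum_apply, lp.single_apply, Finset.sum_dite_eq]

/-- the tail mass beyond the first `N` coordinates -/
def tail (N : ℕ) (f : L1) : ℝ := ‖f - trunc N f‖

lemma tail_eq (N : ℕ) (f : L1) : tail N f = ‖f‖ - ∑ i ∈ Finset.range N, ‖f i‖ := by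
  have := lp.norm_compl_sum_single (by simp : 0 < (1:ℝ≥0∞).toReal) f (Finset.range N)
  simpa [tail, trunc] using this

lemma tail_nonneg (N : ℕ) (f : L1) : 0 ≤ tail N f := norm_nonneg _

lemma tail_le_norm (N : ℕ) (f : L1) : tail N f ≤ ‖f‖ := by
  rw [tail_eq]
  have : 0 ≤ ∑ i ∈ Finset.range N, ‖f i‖ := Finset.sum_nonneg fun i _ => norm_nonneg _
  linarith

lemma coord_le_tail (N n : ℕ) (hn : N ≤ n) (f : L1) : ‖f n‖ ≤ tail N f := by
  have h1 : ((f - trunc N f : L1) : ∀ _ : ℕ, ℝ) n = f n := by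
    rw [lp.coeFn_sub, Pi.sub_apply, trunc_apply]
    simp [Finset.mem_range, not_lt.mpr hn]
  have := lp.norm_apply_le_norm one_ne_zero (f - trunc N f) n
  rw [h1] at this
  exact this

lemma trunc_sub (N : ℕ) (f g : L1) : trunc N (f - g) = trunc N f - trunc N g := by
  apply lp.ext
  funext n
  rw [lp.coeFn_sub, Pi.sub_apply, trunc_apply, trunc_apply, trunc_apply, lp.coeFn_sub,
    Pi.sub_apply]
  by_cases h : n ∈ Finset.range N <;> simp [h]

lemma tail_lipschitz (N : ℕ) (f g : L1) : tail N f ≤ tail N g + ‖f - g‖ := by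
  have : f - trunc N f = (g - trunc N g) + ((f - g) - trunc N (f - g)) := by
    rw [trunc_sub]; abel
  rw [tail, this]
  refine (norm_add_le _ _).trans ?_
  have := tail_le_norm N (f - g)
  rw [tail] at this
  unfold tail
  linarith

lemma tail_tendsto (f : L1) : Tendsto (fun N => tail N f) atTop (nhds 0) := by
  have hs : HasSum (fun i : ℕ => lp.single 1 i (f i : ℝ)) f := lp.hasSum_single (by simp) f
  have h2 := hs.tendsto_sum_nat
  have h3 : Tendsto (fun N => ‖(∑ i ∈ Finset.range N, lp.single 1 i (f i : ℝ)) - f‖)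
      atTop (nhds 0) := (tendsto_iff_norm_sub_tendsto_zero).mp h2
  have : (fun N => tail N f) = fun N => ‖(∑ i ∈ Finset.range N, lp.single 1 i (f i : ℝ)) - f‖ := by
    funext N
    rw [tail, trunc, norm_sub_rev]
  rw [this]
  exact h3

lemma tail_sub_tail (N N' : ℕ) (h : N ≤ N') (f : L1) :
    tail N f - tail N' f = ∑ k ∈ Finset.Ico N N', ‖f k‖ := by
  rw [tail_eq, tail_eq, Finset.sum_Ico_eq_sub _ h]
  ring

lemma uniform_tail_of_compact {K : Set L1} (hK : IsCompact (closure K)) {ε : ℝ} (hε : 0 < ε) :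
    ∃ N : ℕ, ∀ f ∈ K, ∀ n, N ≤ n → tail n f ≤ ε := by
  have htb : TotallyBounded K := (hK.totallyBounded).subset subset_closure
  obtain ⟨t, htfin, htcov⟩ := (Metric.totallyBounded_iff.mp htb) (ε/2) (by linarith)
  have hev : ∀ᶠ n in atTop, ∀ y ∈ t, tail n y ≤ ε/2 := by
    rw [Set.Finite.eventually_all htfin]
    intro y _
    exact (tail_tendsto y).eventually (eventually_le_nhds (by linarith : (0:ℝ) < ε/2))
  obtain ⟨N, hN⟩ := eventually_atTop.mp hev
  refine ⟨N, fun f hf n hn => ?_⟩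
  obtain ⟨y, hyt, hfy⟩ := Set.mem_iUnion₂.mp (htcov hf)
  have hdist : ‖f - y‖ < ε / 2 := by
    rw [← dist_eq_norm]; exact Metric.mem_ball.mp hfy
  have := tail_lipschitz n f y
  have := hN n hn y hyt
  linarith

lemma single_add (i : ℕ) (a b : ℝ) :
    lp.single 1 i (a + b) = (lp.single 1 i a : L1) + lp.single 1 i b := by
  apply lp.ext
  funext n
  rw [lp.coeFn_add, Pi.add_apply]
  rcases eq_or_ne n i with rfl | h
  · simp [lp.single_apply_self]
  · simp [lp.single_apply_ne _ _ _ h]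

/-- `lp.single` as a continuous linear map `ℝ → ℓ¹`. -/
def singleL (i : ℕ) : ℝ →L[ℝ] L1 :=
  LinearMap.mkContinuous
    { toFun := fun a => lp.single 1 i a
      map_add' := single_add i
      map_smul' := fun c a => by
        simpa using lp.single_smul (E := fun _ : ℕ => (ℝ:Type)) 1 i c a }
    1 (fun a => by
      have : ‖(lp.single 1 i a : L1)‖ = ‖a‖ :=
        lp.norm_single (E := fun _ : ℕ => (ℝ:Type)) (by simp : (0:ℝ≥0∞) < 1) i a
      simp [this])

lemma totallyBounded_of_tails {K : Set L1} (M : ℝ)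
    (hM : ∀ f ∈ K, ‖f‖ ≤ M)
    (htail : ∀ ε : ℝ, 0 < ε → ∃ N, ∀ f ∈ K, tail N f ≤ ε) : TotallyBounded K := by
  rw [Metric.totallyBounded_iff]
  intro ε hε
  obtain ⟨N, hN⟩ := htail (ε/3) (by linarith)
  set φ : (Fin N → ℝ) → L1 := fun v => ∑ i : Fin N, singleL (i : ℕ) (v i) with hφ
  have hφc : Continuous φ :=
    continuous_finset_sum _ fun i _ => (singleL (i : ℕ)).continuous.comp (continuous_apply i)
  have hcb : IsCompact (Metric.closedBall (0 : Fin N → ℝ) M) := isCompact_closedBall _ _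
  have hKc : IsCompact (φ '' Metric.closedBall 0 M) := hcb.image hφc
  obtain ⟨t, htfin, htcov⟩ :=
    (Metric.totallyBounded_iff.mp hKc.totallyBounded) (ε/3) (by linarith)
  refine ⟨t, htfin, fun f hf => ?_⟩
  have htr : trunc N f ∈ φ '' Metric.closedBall 0 M := by
    refine ⟨fun i => f (i : ℕ), ?_, ?_⟩
    · rw [Metric.mem_closedBall, dist_zero_right]
      rw [pi_norm_le_iff_of_nonneg (le_trans (norm_nonneg f) (hM f hf))]
      intro i
      exact le_trans (lp.norm_apply_le_norm one_ne_zero f (i : ℕ)) (hM f hf)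
    · rw [hφ]
      simp only
      rw [trunc]
      rw [← Fin.sum_univ_eq_sum_range (fun i => lp.single 1 i (f i : ℝ)) N]
      rfl
  obtain ⟨y, hyt, hy⟩ := Set.mem_iUnion₂.mp (htcov htr)
  refine Set.mem_iUnion₂.mpr ⟨y, hyt, ?_⟩
  rw [Metric.mem_ball, dist_eq_norm]
  have h1 : ‖f - trunc N f‖ ≤ ε/3 := hN f hf
  have h2 : ‖trunc N f - y‖ < ε/3 := by rw [← dist_eq_norm]; exact Metric.mem_ball.mp hy
  calc ‖f - y‖ ≤ ‖f - trunc N f‖ + ‖trunc N f - y‖ := norm_sub_le_norm_sub_add_norm_sub f _ y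
    _ < ε := by linarith

/-- A finitely supported coefficient functional on ℓ¹. -/
def finFunc (c : ℕ → ℝ) (S : Finset ℕ) : L1 →L[ℝ] ℝ :=
  LinearMap.mkContinuous
    { toFun := fun f => ∑ k ∈ S, c k * f k
      map_add' := fun f g => by
        rw [← Finset.sum_add_distrib]
        refine Finset.sum_congr rfl fun k _ => ?_
        rw [lp.coeFn_add, Pi.add_apply]; ring
      map_smul' := fun r f => by
        simp only [RingHom.id_apply, smul_eq_mul, Finset.mul_sum]
        refine Finset.sum_congr rfl fun k _ => ?_
        rw [lp.coeFn_smul, Pi.smul_apply, smul_eq_mul]; ring }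
    (∑ k ∈ S, |c k|)
    (fun f => by
      simp only [LinearMap.coe_mk, AddHom.coe_mk, Real.norm_eq_abs]
      calc |∑ k ∈ S, c k * f k| ≤ ∑ k ∈ S, |c k * f k| := Finset.abs_sum_le_sum_abs _ _
        _ ≤ ∑ k ∈ S, |c k| * ‖f‖ := by
            refine Finset.sum_le_sum fun k _ => ?_
            rw [abs_mul]
            exact mul_le_mul_of_nonneg_left
              (lp.norm_apply_le_norm one_ne_zero f k) (abs_nonneg _)
        _ = (∑ k ∈ S, |c k|) * ‖f‖ := by rw [Finset.sum_mul])

@[simp] lemma finFunc_apply (c : ℕ → ℝ) (S : Finset ℕ) (f : L1) :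
    finFunc c S f = ∑ k ∈ S, c k * f k := rfl

/-- Key norm estimate: a signed combination of coefficient functionals with disjoint supports
and coefficients bounded by 1 has norm at most 1. -/
lemma norm_sum_smul_finFunc_le (J : Finset ℕ) (εs : ℕ → ℝ) (c : ℕ → ℕ → ℝ) (S : ℕ → Finset ℕ)
    (hε : ∀ j, |εs j| ≤ 1) (hc : ∀ j k, |c j k| ≤ 1)
    (hdisj : ∀ j ∈ J, ∀ j' ∈ J, j ≠ j' → Disjoint (S j) (S j')) :
    ‖∑ j ∈ J, εs j • finFunc (c j) (S j)‖ ≤ 1 := by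
  refine ContinuousLinearMap.opNorm_le_bound _ zero_le_one fun f => ?_
  rw [one_mul]
  calc ‖(∑ j ∈ J, εs j • finFunc (c j) (S j)) f‖
      = |∑ j ∈ J, εs j * ∑ k ∈ S j, c j k * f k| := by
        rw [ContinuousLinearMap.sum_apply]
        simp [ContinuousLinearMap.smul_apply]
    _ ≤ ∑ j ∈ J, |εs j * ∑ k ∈ S j, c j k * f k| := Finset.abs_sum_le_sum_abs _ _
    _ ≤ ∑ j ∈ J, ∑ k ∈ S j, ‖f k‖ := by
        refine Finset.sum_le_sum fun j _ => ?_
        rw [abs_mul]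
        calc |εs j| * |∑ k ∈ S j, c j k * f k| ≤ 1 * ∑ k ∈ S j, |c j k * f k| := by
              refine mul_le_mul (hε j) (Finset.abs_sum_le_sum_abs _ _) (abs_nonneg _) zero_le_one
          _ = ∑ k ∈ S j, |c j k| * |f k| := by
              rw [one_mul]; exact Finset.sum_congr rfl fun k _ => abs_mul _ _
          _ ≤ ∑ k ∈ S j, ‖f k‖ := by
              refine Finset.sum_le_sum fun k _ => ?_
              calc |c j k| * |f k| ≤ 1 * |f k| :=
                    mul_le_mul_of_nonneg_right (hc j k) (abs_nonneg _)
                _ = ‖f k‖ := by rw [one_mul]; rfl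
    _ = ∑ k ∈ J.biUnion S, ‖f k‖ := (Finset.sum_biUnion ?_).symm
    _ ≤ ‖f‖ := sum_norm_le f _
  intro j hj j' hj' hne
  exact hdisj j hj j' hj' hne

section TVS

variable {E : Type*} [AddCommGroup E] [Module ℝ E] [TopologicalSpace E]
  [IsTopologicalAddGroup E] [ContinuousSMul ℝ E]

/-- Evaluation at a point, as a continuous linear functional on the strong dual. -/
def evalCLM (x : E) : (E →L[ℝ] ℝ) →L[ℝ] ℝ where
  toFun χ := χ x
  map_add' _ _ := rfl
  map_smul' _ _ := rfl
  cont := continuous_eval_const x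

lemma summable_eval {χ : ℕ → E →L[ℝ] ℝ} (hχ : WeaklySummable 1 χ) (x : E) :
    Summable fun n => ‖χ n x‖ := by
  rcases hχ (evalCLM x) with ⟨_, h⟩ | ⟨h, _⟩
  · exact memℓp_one_iff.mp h
  · exact absurd h (by simp)

/-- The linear operator `E → ℓ¹` induced by a pointwise-summable sequence of functionals. -/
def Tlin (χ : ℕ → E →L[ℝ] ℝ) (h : ∀ x, Summable fun n => ‖χ n x‖) : E →ₗ[ℝ] L1 where
  toFun x := ⟨fun n => χ n x, memℓp_one_iff.mpr (h x)⟩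
  map_add' x y := by
    apply lp.ext
    simp only [lp.coeFn_add]
    funext n
    simp [Pi.add_apply]
  map_smul' c x := by
    apply lp.ext
    simp only [lp.coeFn_smul]
    funext n
    simp [Pi.smul_apply]

@[simp] lemma Tlin_apply (χ : ℕ → E →L[ℝ] ℝ) (h) (x : E) (n : ℕ) :
    (Tlin χ h x : ∀ _ : ℕ, ℝ) n = χ n x := rfl

lemma norm_Tlin (χ : ℕ → E →L[ℝ] ℝ) (h) (x : E) :
    ‖Tlin χ h x‖ = ∑' n, ‖χ n x‖ := by
  rw [norm_L1]; rfl

lemma Tlin_continuous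
    (hbarrelled : ∀ B : Set E, IsClosed B → Convex ℝ B → Balanced ℝ B →
      Absorbent ℝ B → B ∈ nhds (0 : E))
    (χ : ℕ → E →L[ℝ] ℝ) (h : ∀ x, Summable fun n => ‖χ n x‖) :
    Continuous (Tlin χ h) := by
  set B : Set E := {x : E | ∀ S : Finset ℕ, ∑ n ∈ S, ‖χ n x‖ ≤ 1} with hB
  have hclosed : IsClosed B := by
    have : B = ⋂ S : Finset ℕ, {x : E | ∑ n ∈ S, ‖χ n x‖ ≤ 1} := by
      ext x; simp [hB, Set.mem_iInter]
    rw [this]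
    refine isClosed_iInter fun S => ?_
    have hc : Continuous fun x : E => ∑ n ∈ S, ‖χ n x‖ :=
      continuous_finset_sum S fun n _ => ((χ n).continuous).norm
    exact isClosed_le hc continuous_const
  have hconv : Convex ℝ B := by
    intro x hx y hy a b ha hb hab
    intro S
    calc ∑ n ∈ S, ‖χ n (a • x + b • y)‖ ≤ ∑ n ∈ S, (a * ‖χ n x‖ + b * ‖χ n y‖) := by
          refine Finset.sum_le_sum fun n _ => ?_
          rw [map_add, map_smul, map_smul]
          refine (norm_add_le _ _).trans ?_
          simp only [norm_smul, Real.norm_eq_abs, abs_of_nonneg ha, abs_of_nonneg hb, le_refl]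
      _ = a * ∑ n ∈ S, ‖χ n x‖ + b * ∑ n ∈ S, ‖χ n y‖ := by
          rw [Finset.sum_add_distrib, Finset.mul_sum, Finset.mul_sum]
      _ ≤ a * 1 + b * 1 := by
          gcongr
          · exact hx S
          · exact hy S
      _ = 1 := by rw [mul_one, mul_one, hab]
  have hbal : Balanced ℝ B := by
    intro c hc
    rintro x ⟨y, hy, rfl⟩
    intro S
    calc ∑ n ∈ S, ‖χ n (c • y)‖ = ‖c‖ * ∑ n ∈ S, ‖χ n y‖ := by
          rw [Finset.mul_sum]
          refine Finset.sum_congr rfl fun n _ => ?_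
          rw [map_smul, norm_smul]
      _ ≤ 1 * 1 := by
          refine mul_le_mul hc (hy S) (Finset.sum_nonneg fun n _ => norm_nonneg _) zero_le_one
      _ = 1 := one_mul 1
  have habs : Absorbent ℝ B := by
    intro x
    rw [absorbs_iff_norm]
    refine ⟨(∑' n, ‖χ n x‖) + 1, fun c hc => ?_⟩
    have htsum_nonneg : 0 ≤ ∑' n, ‖χ n x‖ := tsum_nonneg fun n => norm_nonneg _
    have hc1 : (1 : ℝ) ≤ ‖c‖ := le_trans (by linarith) hc
    have hc0 : c ≠ 0 := by
      intro hc0; rw [hc0, norm_zero] at hc1; linarith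
    intro z hz
    rw [Set.mem_singleton_iff] at hz
    subst hz
    rw [Set.mem_smul_set_iff_inv_smul_mem₀ hc0]
    intro S
    calc ∑ n ∈ S, ‖χ n (c⁻¹ • z)‖ = ‖c‖⁻¹ * ∑ n ∈ S, ‖χ n z‖ := by
          rw [Finset.mul_sum]
          refine Finset.sum_congr rfl fun n _ => ?_
          rw [map_smul, norm_smul, norm_inv]
      _ ≤ ‖c‖⁻¹ * ‖c‖ := by
          refine mul_le_mul_of_nonneg_left ?_ (by positivity)
          refine le_trans (Summable.sum_le_tsum S (fun n _ => norm_nonneg _) (h z)) (by linarith)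
      _ = 1 := inv_mul_cancel₀ (by positivity)
  have hBnhds : B ∈ nhds (0 : E) := hbarrelled B hclosed hconv hbal habs
  have hbound : ∀ x ∈ B, ‖Tlin χ h x‖ ≤ 1 := by
    intro x hx
    rw [norm_Tlin]
    exact Summable.tsum_le_of_sum_le (h x) hx
  have hcont0 : ContinuousAt (Tlin χ h) 0 := by
    rw [ContinuousAt, map_zero]
    rw [(Metric.nhds_basis_closedBall).tendsto_right_iff]
    intro ε hε
    have hmem : (ε • B : Set E) ∈ nhds (0 : E) := by
      rwa [set_smul_mem_nhds_zero_iff (ne_of_gt hε)]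
    refine Filter.mem_of_superset hmem ?_
    rintro _ ⟨b, hb, rfl⟩
    show Tlin χ h (ε • b) ∈ Metric.closedBall 0 ε
    rw [Metric.mem_closedBall, dist_zero_right, map_smul, norm_smul,
      Real.norm_eq_abs, abs_of_pos hε]
    calc ε * ‖Tlin χ h b‖ ≤ ε * 1 :=
          mul_le_mul_of_nonneg_left (hbound b hb) (le_of_lt hε)
      _ = ε := mul_one ε
  exact continuous_of_continuousAt_zero ((Tlin χ h).toAddMonoidHom) hcont0

lemma weaklySummable_comp (T : E →L[ℝ] L1) (u : ℕ → (L1 →L[ℝ] ℝ))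
    (hu : ∀ (J : Finset ℕ) (εs : ℕ → ℝ), (∀ j, |εs j| ≤ 1) →
      ‖∑ j ∈ J, εs j • u j‖ ≤ 1) :
    WeaklySummable 1 (fun j => (u j).comp T) := by
  intro φ
  left
  refine ⟨by simp, ?_⟩
  rw [memℓp_one_iff]
  set ψ : (L1 →L[ℝ] ℝ) →L[ℝ] ℝ := φ.comp (ContinuousLinearMap.precomp ℝ T) with hψ
  have hψ_app : ∀ v : L1 →L[ℝ] ℝ, ψ v = φ (v.comp T) := fun v => rfl
  have key : ∀ J : Finset ℕ, ∑ j ∈ J, ‖φ ((u j).comp T)‖ ≤ ‖ψ‖ := by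
    intro J
    set εs : ℕ → ℝ := fun j => if 0 ≤ ψ (u j) then 1 else -1 with hεs
    have hε1 : ∀ j, |εs j| ≤ 1 := by
      intro j; rw [hεs]; dsimp only; split <;> simp
    have hsgn : ∀ j, εs j * ψ (u j) = |ψ (u j)| := by
      intro j; rw [hεs]; dsimp only
      split_ifs with h
      · rw [one_mul, abs_of_nonneg h]
      · rw [neg_one_mul, abs_of_neg (not_le.mp h)]
    calc ∑ j ∈ J, ‖φ ((u j).comp T)‖ = ∑ j ∈ J, |ψ (u j)| := by
          refine Finset.sum_congr rfl fun j _ => ?_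
          rw [hψ_app]; rfl
      _ = ∑ j ∈ J, εs j * ψ (u j) :=
          (Finset.sum_congr rfl fun j _ => (hsgn j)).symm
      _ = ψ (∑ j ∈ J, εs j • u j) := by
          rw [map_sum]
          refine (Finset.sum_congr rfl fun j _ => ?_).symm
          rw [map_smul, smul_eq_mul]
      _ ≤ ‖ψ (∑ j ∈ J, εs j • u j)‖ := le_abs_self _
      _ ≤ ‖ψ‖ * ‖∑ j ∈ J, εs j • u j‖ := ψ.le_opNorm _
      _ ≤ ‖ψ‖ * 1 := mul_le_mul_of_nonneg_left (hu J εs hε1) (norm_nonneg ψ)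
      _ = ‖ψ‖ := mul_one _
  exact summable_of_sum_le (fun j => norm_nonneg _) key

end TVS

end VAux


namespace VAux

variable {E : Type*} [AddCommGroup E] [Module ℝ E] [TopologicalSpace E]
  [IsTopologicalAddGroup E] [ContinuousSMul ℝ E]

/-- Gliding hump: a `(V*)` set has uniformly small tails under any operator into `ℓ¹`. -/
lemma uniform_tails (A : Set E) (hV : IsVAstSet 1 ∞ A) (T : E →L[ℝ] L1)
    {ε : ℝ} (hε : 0 < ε) : ∃ N, ∀ a ∈ A, tail N (T a) ≤ ε := by
  by_contra hcon
  push_neg at hcon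
  -- hcon : ∀ N, ∃ a ∈ A, ε < tail N (T a)
  have hnext : ∀ (N : ℕ) (x : E), ∃ N', N < N' ∧ tail N' (T x) ≤ ε/2 := by
    intro N x
    have h1 : ∀ᶠ n in atTop, tail n (T x) ≤ ε/2 :=
      (tail_tendsto (T x)).eventually (eventually_le_nhds (half_pos hε))
    obtain ⟨N', hN'⟩ := (h1.and (eventually_gt_atTop N)).exists
    exact ⟨N', hN'.2, hN'.1⟩
  set next : ℕ × E → ℕ × E :=
    fun p => ((hnext p.1 p.2).choose, (hcon (hnext p.1 p.2).choose).choose) with hnextdef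
  set P : ℕ → ℕ × E := fun j => next^[j] (0, (hcon 0).choose) with hPdef
  have hPsucc : ∀ j, P (j+1) = next (P j) := fun j => Function.iterate_succ_apply' next j _
  have ha : ∀ j, (P j).2 ∈ A ∧ ε < tail (P j).1 (T (P j).2) := by
    intro j
    cases j with
    | zero => exact (hcon 0).choose_spec
    | succ i =>
      rw [hPsucc i]
      exact (hcon ((hnext (P i).1 (P i).2).choose)).choose_spec
  have hstep : ∀ j, (P j).1 < (P (j+1)).1 ∧ tail (P (j+1)).1 (T (P j).2) ≤ ε/2 := by
    intro j
    rw [hPsucc j]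
    exact (hnext (P j).1 (P j).2).choose_spec
  set Nf : ℕ → ℕ := fun j => (P j).1 with hNf
  set af : ℕ → E := fun j => (P j).2 with haf
  have hmono : StrictMono Nf := strictMono_nat_of_lt_succ fun j => (hstep j).1
  set Sb : ℕ → Finset ℕ := fun j => Finset.Ico (Nf j) (Nf (j+1)) with hSb
  set c : ℕ → ℕ → ℝ := fun j k => if 0 ≤ (T (af j) : ∀ _ : ℕ, ℝ) k then 1 else -1 with hc
  set u : ℕ → (L1 →L[ℝ] ℝ) := fun j => finFunc (c j) (Sb j) with hu
  have hcb : ∀ j k, |c j k| ≤ 1 := by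
    intro j k; rw [hc]; dsimp only; split <;> simp
  have hdisj : ∀ j j', j < j' → Disjoint (Sb j) (Sb j') := by
    intro j j' hjj'
    rw [Finset.disjoint_left]
    intro k hk hk'
    rw [hSb, Finset.mem_Ico] at hk hk'
    have : Nf (j+1) ≤ Nf j' := hmono.monotone (by omega)
    omega
  have hunorm : ∀ (J : Finset ℕ) (εs : ℕ → ℝ), (∀ j, |εs j| ≤ 1) →
      ‖∑ j ∈ J, εs j • u j‖ ≤ 1 := by
    intro J εs hεs
    refine norm_sum_smul_finFunc_le J εs c Sb hεs hcb ?_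
    intro j _ j' _ hne
    rcases hne.lt_or_gt with h | h
    · exact hdisj _ _ h
    · exact (hdisj _ _ h).symm
  have hws : WeaklySummable 1 (fun j => (u j).comp T) := weaklySummable_comp T u hunorm
  rcases hV _ hws with ⟨hne, _⟩ | ⟨_, htend⟩
  · exact hne rfl
  have hlow : ∀ j, ε/2 ≤ ((u j).comp T) (af j) := by
    intro j
    have heval : ((u j).comp T) (af j) = ∑ k ∈ Sb j, ‖(T (af j) : ∀ _ : ℕ, ℝ) k‖ := by
      show finFunc (c j) (Sb j) (T (af j)) = _
      rw [finFunc_apply]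
      refine Finset.sum_congr rfl fun k _ => ?_
      rw [hc]
      dsimp only
      split_ifs with h
      · rw [one_mul, Real.norm_eq_abs, abs_of_nonneg h]
      · rw [neg_one_mul, Real.norm_eq_abs, abs_of_neg (not_le.mp h)]
    rw [heval, ← tail_sub_tail (Nf j) (Nf (j+1)) (le_of_lt (hmono (by omega))) (T (af j))]
    have h1 := (ha j).2
    have h2 := (hstep j).2
    linarith
  have hlow2 : ∀ j, ENNReal.ofReal (ε/2) ≤ ⨆ a ∈ A, (‖((u j).comp T) a‖₊ : ℝ≥0∞) := by
    intro j
    refine le_trans ?_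
      (le_iSup₂ (f := fun (a : E) (_ : a ∈ A) => (‖((u j).comp T) a‖₊ : ℝ≥0∞)) (af j) (ha j).1)
    rw [← ENNReal.ofReal_coe_nnreal, coe_nnnorm]
    exact ENNReal.ofReal_le_ofReal (le_trans (hlow j) (le_abs_self _))
  have hfinal : ENNReal.ofReal (ε/2) ≤ 0 := ge_of_tendsto' htend hlow2
  have : (0 : ℝ≥0∞) < ENNReal.ofReal (ε/2) := ENNReal.ofReal_pos.mpr (half_pos hε)
  exact absurd hfinal (not_le.mpr this)

end VAux

/-- Let `E` be a barrelled locally convex space (every barrel, i.e. every closed absolutely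
convex absorbing set, is a neighborhood of `0`). A bounded subset `A` of `E` is a `(V*)` set
(i.e. a `(1,∞)`-`(V*)` set) iff `T(A)` is relatively norm-compact in `ℓ₁` for every continuous
linear operator `T : E → ℓ₁`. -/
theorem vAstSet_iff_image_compact_in_l1
    {E : Type*} [AddCommGroup E] [Module ℝ E] [TopologicalSpace E]
    [IsTopologicalAddGroup E] [ContinuousSMul ℝ E] [LocallyConvexSpace ℝ E]
    (hbarrelled : ∀ B : Set E, IsClosed B → Convex ℝ B → Balanced ℝ B →
      Absorbent ℝ B → B ∈ nhds (0 : E))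
    (A : Set E) (hA : IsVonNBounded ℝ A) :
    IsVAstSet 1 ∞ A ↔
      ∀ T : E →L[ℝ] lp (fun _ : ℕ => ℝ) 1, IsCompact (closure (T '' A)) := by
  constructor
  · -- (V*) set ⇒ relatively compact images
    intro hV T
    have hbdd : Bornology.IsBounded (T '' A) :=
      (NormedSpace.isVonNBounded_iff ℝ).mp (hA.image T)
    obtain ⟨M, hM⟩ := hbdd.exists_norm_le
    have htb : TotallyBounded (T '' A) := by
      refine VAux.totallyBounded_of_tails M hM ?_
      intro ε hε
      obtain ⟨N, hN⟩ := VAux.uniform_tails A hV T hε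
      refine ⟨N, ?_⟩
      rintro f ⟨a, haA, rfl⟩
      exact hN a haA
    exact TotallyBounded.isCompact_of_isClosed htb.closure isClosed_closure
  · -- relatively compact images ⇒ (V*) set
    intro hT χ hχ
    right
    refine ⟨rfl, ?_⟩
    have h : ∀ x, Summable fun n => ‖χ n x‖ := fun x => VAux.summable_eval hχ x
    set T : E →L[ℝ] VAux.L1 :=
      ⟨VAux.Tlin χ h, VAux.Tlin_continuous hbarrelled χ h⟩ with hTdef
    have hcomp := hT T
    rw [ENNReal.tendsto_atTop_zero]
    intro ε hε
    obtain ⟨δ, hδ0, hδε⟩ := ENNReal.lt_iff_exists_nnreal_btwn.mp hε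
    have hδpos : (0:ℝ) < (δ:ℝ) := ENNReal.coe_pos.mp hδ0
    obtain ⟨N, hN⟩ := VAux.uniform_tail_of_compact hcomp hδpos
    refine ⟨N, fun n hn => ?_⟩
    refine le_trans (iSup₂_le fun a haA => ?_) (le_of_lt hδε)
    have h1 : ‖χ n a‖ ≤ (δ:ℝ) := by
      have h2 : ‖(T a : ∀ _ : ℕ, ℝ) n‖ ≤ VAux.tail n (T a) := VAux.coord_le_tail n n le_rfl (T a)
      have h3 : VAux.tail n (T a) ≤ (δ:ℝ) := hN (T a) ⟨a, haA, rfl⟩ n hn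
      exact le_trans h2 h3
    exact_mod_cast h1


end
end

section
/- Let E and L be locally convex spaces and let T : E → L be a continuous, surjective linear operator. Then the adjoint operator T* : L'_β → E'_β is a topological embedding (a homeomorphism onto its image) if and only if T is almost bounded-covering, i.e., for every bounded subset A of L there exists a bounded subset B of E such that A is contained in the closure of T(B) in L. -/
open Filter Topology Bornology Pointwise
open scoped ENNReal NNReal

noncomputable section

variable {E : Type*} [AddCommGroup E] [Module ℝ E] [TopologicalSpace E]

section AuxProof

open Set

variable {F : Type*} [AddCommGroup F] [Module ℝ F] [TopologicalSpace F]
  [IsTopologicalAddGroup F] [ContinuousSMul ℝ F]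

lemma aux_isVonNBounded_convexHull [LocallyConvexSpace ℝ F] {s : Set F}
    (hs : IsVonNBounded ℝ s) : IsVonNBounded ℝ (convexHull ℝ s) := by
  intro V hV
  obtain ⟨W, ⟨hW, hWc⟩, hWV⟩ := (LocallyConvexSpace.convex_basis_zero ℝ F).mem_iff.mp hV
  exact (hs hW).eventually.mono fun c hc =>
    calc convexHull ℝ s ⊆ convexHull ℝ (c • W) := convexHull_mono hc
      _ = c • convexHull ℝ W := convexHull_smul c W
      _ = c • W := by rw [hWc.convexHull_eq]
      _ ⊆ c • V := smul_set_mono hWV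

lemma aux_isVonNBounded_smul (c : ℝ) {s : Set F} (hs : IsVonNBounded ℝ s) :
    IsVonNBounded ℝ (c • s) := by
  have h := hs.image (c • ContinuousLinearMap.id ℝ F)
  have he : ⇑(c • ContinuousLinearMap.id ℝ F) '' s = c • s := by
    ext x
    simp [Set.mem_smul_set]
  rwa [he] at h

end AuxProof


/-- Let `E, L` be locally convex spaces and `T : E → L` a continuous surjective linear
operator. Then the adjoint `T* : L'_β → E'_β` (between the strong duals) is a topological
embedding iff `T` is almost bounded-covering: for every bounded `A ⊆ L` there is a bounded
`B ⊆ E` with `A ⊆ closure (T(B))`. -/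
theorem adjoint_embedding_iff_almost_bounded_covering
    {E : Type*} [AddCommGroup E] [Module ℝ E] [TopologicalSpace E]
    [IsTopologicalAddGroup E] [ContinuousSMul ℝ E] [LocallyConvexSpace ℝ E]
    {L : Type*} [AddCommGroup L] [Module ℝ L] [TopologicalSpace L]
    [IsTopologicalAddGroup L] [ContinuousSMul ℝ L] [LocallyConvexSpace ℝ L]
    (T : E →L[ℝ] L) (hT : Function.Surjective T) :
    IsEmbedding (fun χ : L →L[ℝ] ℝ => χ.comp T) ↔
      ∀ A : Set L, IsVonNBounded ℝ A →
        ∃ B : Set E, IsVonNBounded ℝ B ∧ A ⊆ closure (T '' B) := by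
  classical
  set Φ : (L →L[ℝ] ℝ) → (E →L[ℝ] ℝ) := fun χ => χ.comp T with hΦdef
  have hΦ0 : Φ 0 = 0 := by ext x; simp [Φ]
  have hΦinj : Function.Injective Φ := by
    intro χ₁ χ₂ h
    ext y
    obtain ⟨x, rfl⟩ := hT y
    exact DFunLike.congr_fun h x
  have hΦeq : ⇑(ContinuousLinearMap.precomp (σ := RingHom.id ℝ) (τ := RingHom.id ℝ)
      (ρ := RingHom.id ℝ) ℝ T) = Φ := rfl
  have hΦcont : Continuous Φ := by
    rw [← hΦeq]; exact (ContinuousLinearMap.precomp ℝ T).continuous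
  constructor
  · intro hemb A hA
    have hnhds : 𝓝 (0 : L →L[ℝ] ℝ) = Filter.comap Φ (𝓝 0) := by
      have h := hemb.toIsInducing.nhds_eq_comap (0 : L →L[ℝ] ℝ)
      rwa [hΦ0] at h
    have hP : {χ : L →L[ℝ] ℝ | ∀ a ∈ A, |χ a| ≤ 1} ∈ 𝓝 (0 : L →L[ℝ] ℝ) := by
      refine (ContinuousLinearMap.hasBasis_nhds_zero).mem_iff.mpr
        ⟨(A, Metric.closedBall 0 1), ⟨hA, Metric.closedBall_mem_nhds 0 one_pos⟩, ?_⟩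
      intro χ hχ a ha
      have h := hχ a ha
      rwa [Metric.mem_closedBall, dist_zero_right, Real.norm_eq_abs] at h
    rw [hnhds, Filter.mem_comap] at hP
    obtain ⟨U, hU, hUP⟩ := hP
    obtain ⟨⟨B₀, V⟩, ⟨hB₀, hV⟩, hbasic⟩ :=
      (ContinuousLinearMap.hasBasis_nhds_zero).mem_iff.mp hU
    obtain ⟨ε, hε, hball⟩ := Metric.mem_nhds_iff.mp hV
    set B₁ : Set E := (2 / ε) • B₀ ∪ {0} with hB₁def
    have hB₁ : IsVonNBounded ℝ B₁ :=
      (aux_isVonNBounded_smul _ hB₀).union (Bornology.isVonNBounded_singleton 0)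
    have key : ∀ χ : L →L[ℝ] ℝ, (∀ b ∈ B₁, |χ (T b)| ≤ 1) → ∀ a ∈ A, |χ a| ≤ 1 := by
      intro χ hχ
      refine hUP (hbasic ?_)
      intro x hx
      have hmem : (2 / ε) • x ∈ B₁ := Or.inl ⟨x, hx, rfl⟩
      have h1 := hχ _ hmem
      rw [map_smul, map_smul, smul_eq_mul, abs_mul] at h1
      have h2 : (0:ℝ) < 2 / ε := by positivity
      have h3 : |χ (T x)| < ε := by
        rw [abs_of_pos h2] at h1
        rw [div_mul_eq_mul_div, div_le_one hε] at h1
        linarith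
      apply hball
      rw [Metric.mem_ball, dist_zero_right, Real.norm_eq_abs]
      exact h3
    refine ⟨convexHull ℝ (B₁ ∪ -B₁), aux_isVonNBounded_convexHull (hB₁.union hB₁.neg), ?_⟩
    intro a ha
    by_contra hc
    have hCconv : Convex ℝ (closure (⇑T '' convexHull ℝ (B₁ ∪ -B₁))) := by
      have h := ((convex_convexHull ℝ (B₁ ∪ -B₁)).linear_image (T : E →ₗ[ℝ] L)).closure
      simpa using h
    obtain ⟨f, s, hfC, hfa⟩ :=
      geometric_hahn_banach_closed_point hCconv isClosed_closure hc
    have h0C : (0 : L) ∈ closure (⇑T '' convexHull ℝ (B₁ ∪ -B₁)) :=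
      subset_closure ⟨0, subset_convexHull ℝ _ (Or.inl (Or.inr rfl)), map_zero T⟩
    have hs0 : (0:ℝ) < s := by have h := hfC 0 h0C; simpa using h
    have hbound : ∀ b ∈ B₁, |f (T b)| ≤ s := by
      intro b hb
      have h1 : f (T b) < s :=
        hfC _ (subset_closure ⟨b, subset_convexHull ℝ _ (Or.inl hb), rfl⟩)
      have h2 : f (T (-b)) < s := by
        refine hfC _ (subset_closure ⟨-b, subset_convexHull ℝ _ (Or.inr ?_), rfl⟩)
        simpa using hb
      rw [map_neg, map_neg] at h2
      exact abs_le.mpr ⟨by linarith, h1.le⟩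
    have hkey := key (s⁻¹ • f) (fun b hb => by
      rw [ContinuousLinearMap.smul_apply, smul_eq_mul, abs_mul, abs_inv, abs_of_pos hs0]
      rw [inv_mul_le_iff₀ hs0, mul_one]
      exact hbound b hb) a ha
    rw [ContinuousLinearMap.smul_apply, smul_eq_mul, abs_mul, abs_inv, abs_of_pos hs0,
      inv_mul_le_iff₀ hs0, mul_one] at hkey
    have : f a ≤ s := (le_abs_self _).trans hkey
    linarith
  · intro hcov
    have hle : Filter.comap Φ (𝓝 (0 : E →L[ℝ] ℝ)) ≤ 𝓝 (0 : L →L[ℝ] ℝ) := by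
      intro W hW
      obtain ⟨⟨A, V⟩, ⟨hA, hV⟩, hsub⟩ :=
        (ContinuousLinearMap.hasBasis_nhds_zero).mem_iff.mp hW
      obtain ⟨ε, hε, hball⟩ := Metric.mem_nhds_iff.mp hV
      obtain ⟨B, hB, hAB⟩ := hcov A hA
      refine Filter.mem_comap.mpr
        ⟨{ψ : E →L[ℝ] ℝ | ∀ x ∈ B, ψ x ∈ Metric.closedBall 0 (ε/2)}, ?_, ?_⟩
      · exact (ContinuousLinearMap.hasBasis_nhds_zero).mem_iff.mpr
          ⟨(B, Metric.closedBall 0 (ε/2)),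
            ⟨hB, Metric.closedBall_mem_nhds 0 (by positivity)⟩, fun ψ hψ => hψ⟩
      · intro χ hχ
        refine hsub fun a ha => ?_
        have hclos : closure (⇑T '' B) ⊆ ⇑χ ⁻¹' Metric.closedBall 0 (ε/2) := by
          refine closure_minimal ?_ (Metric.isClosed_closedBall.preimage χ.continuous)
          rintro _ ⟨b, hb, rfl⟩
          exact hχ b hb
        have h1 := hclos (hAB ha)
        rw [Set.mem_preimage, Metric.mem_closedBall, dist_zero_right] at h1
        apply hball
        rw [Metric.mem_ball, dist_zero_right]
        linarith
    have hnhds0 : 𝓝 (0 : L →L[ℝ] ℝ) = Filter.comap Φ (𝓝 (Φ 0)) := by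
      rw [hΦ0]
      exact le_antisymm (by rw [← hΦ0]; exact (hΦcont.tendsto 0).le_comap) hle
    refine ⟨⟨?_⟩, hΦinj⟩
    have hgrp : @IsTopologicalAddGroup (L →L[ℝ] ℝ)
        (TopologicalSpace.induced Φ inferInstance) _ := by
      rw [← hΦeq]
      exact topologicalAddGroup_induced (ContinuousLinearMap.precomp ℝ T)
    refine IsTopologicalAddGroup.ext inferInstance hgrp ?_
    conv_rhs => rw [nhds_induced]
    exact hnhds0


end
end

section
/- Let H be a dense linear subspace of a locally convex space E, so that E' = H' as vector spaces. Then the strong topology β(E',E) on E' coincides with the strong topology β(E',H) if and only if H is large in E, i.e., every bounded subset of E is contained in the closure (taken in E) of a bounded subset of H. -/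
open Filter Topology Bornology Pointwise
open scoped ENNReal NNReal

noncomputable section

variable {E : Type*} [AddCommGroup E] [Module ℝ E] [TopologicalSpace E]

theorem myAux_absConvexHull_bounded {E : Type*} [AddCommGroup E] [Module ℝ E]
    [TopologicalSpace E] [IsTopologicalAddGroup E] [ContinuousSMul ℝ E]
    [LocallyConvexSpace ℝ E] {s : Set E} (hs : IsVonNBounded ℝ s) :
    IsVonNBounded ℝ (absConvexHull ℝ s) := by
  rw [(nhds_hasBasis_absConvex ℝ E).isVonNBounded_iff]
  rintro V ⟨hV, hVb, hVc⟩
  refine Filter.Eventually.mono (hs hV) fun c hc => ?_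
  exact absConvexHull_min hc ⟨hVb.smul c, hVc.smul c⟩

theorem myAux_preimage_bounded {E : Type*} [AddCommGroup E] [Module ℝ E]
    [TopologicalSpace E] (H : Submodule ℝ E) {s : Set E}
    (hs : IsVonNBounded ℝ s) :
    IsVonNBounded ℝ (((↑) : ↥H → E) ⁻¹' s) := by
  intro V hV
  rw [nhds_induced] at hV
  obtain ⟨U, hU, hUV⟩ := hV
  refine Filter.Eventually.mono ((hs hU).and (eventually_ne_cobounded 0)) ?_
  rintro c ⟨hcU, hc0⟩ x hx
  obtain ⟨y, hy, hyx⟩ := hcU hx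
  refine ⟨c⁻¹ • x, hUV ?_, smul_inv_smul₀ hc0 x⟩
  show ((c⁻¹ • x : ↥H) : E) ∈ U
  have : ((c⁻¹ • x : ↥H) : E) = y := by
    push_cast
    rw [← hyx, inv_smul_smul₀ hc0]
  rwa [this]

/-- Let `H` be a dense linear subspace of a locally convex space `E` (so that restriction
identifies `E'` with a subspace of `H'`, and the topology `β(E',H)` on `E'` is the topology
induced from the strong dual `H'_β` by the restriction map). Then `β(E',E)` coincides with
`β(E',H)` — i.e. the restriction map `E'_β → H'_β` is inducing — iff `H` is large in `E`:
every bounded subset of `E` is contained in the closure (in `E`) of a bounded subset of `H`. -/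
theorem strong_topologies_coincide_iff_large
    {E : Type*} [AddCommGroup E] [Module ℝ E] [TopologicalSpace E]
    [IsTopologicalAddGroup E] [ContinuousSMul ℝ E] [LocallyConvexSpace ℝ E]
    (H : Submodule ℝ E) (hH : Dense (H : Set E)) :
    IsInducing (fun χ : E →L[ℝ] ℝ => χ.comp H.subtypeL) ↔
      ∀ A : Set E, IsVonNBounded ℝ A →
        ∃ B : Set ↥H, IsVonNBounded ℝ B ∧ A ⊆ closure ((↑) '' B : Set E) := by
  set f : (E →L[ℝ] ℝ) → (↥H →L[ℝ] ℝ) := fun χ => χ.comp H.subtypeL with hf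
  have basisE : (𝓝 (0 : E →L[ℝ] ℝ)).HasBasis
      (fun SV : Set E × Set ℝ => IsVonNBounded ℝ SV.1 ∧ SV.2 ∈ (𝓝 (0:ℝ)))
      (fun SV => { χ : E →L[ℝ] ℝ | ∀ x ∈ SV.1, χ x ∈ SV.2 }) :=
    ContinuousLinearMap.hasBasis_nhds_zero
  have basisH : (𝓝 (0 : ↥H →L[ℝ] ℝ)).HasBasis
      (fun SV : Set ↥H × Set ℝ => IsVonNBounded ℝ SV.1 ∧ SV.2 ∈ (𝓝 (0:ℝ)))
      (fun SV => { ψ : ↥H →L[ℝ] ℝ | ∀ x ∈ SV.1, ψ x ∈ SV.2 }) :=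
    ContinuousLinearMap.hasBasis_nhds_zero
  have hf0 : f 0 = 0 := ContinuousLinearMap.zero_comp _
  constructor
  · -- inducing → large
    intro hInd A hA
    have h0 : (𝓝 (0 : E →L[ℝ] ℝ)) = comap f (𝓝 0) := by
      have h0' := hInd.nhds_eq_comap 0
      rwa [hf0] at h0'
    have hN : { χ : E →L[ℝ] ℝ | ∀ x ∈ A, χ x ∈ Metric.closedBall (0:ℝ) 1 } ∈
        𝓝 (0 : E →L[ℝ] ℝ) :=
      basisE.mem_of_mem (i := (A, Metric.closedBall 0 1))
        ⟨hA, Metric.closedBall_mem_nhds _ one_pos⟩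
    rw [h0, mem_comap] at hN
    obtain ⟨W, hW, hWsub⟩ := hN
    obtain ⟨⟨B, V⟩, ⟨hB, hV⟩, hBV⟩ := basisH.mem_iff.mp hW
    obtain ⟨ε, hε, hball⟩ := Metric.nhds_basis_ball.mem_iff.mp hV
    have key : ∀ χ : E →L[ℝ] ℝ, (∀ b ∈ B, ‖χ ↑b‖ < ε) → ∀ a ∈ A, ‖χ a‖ ≤ 1 := by
      intro χ hχ a ha
      have hmem : f χ ∈ { ψ : ↥H →L[ℝ] ℝ | ∀ x ∈ B, ψ x ∈ V } := by
        intro b hb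
        exact hball (by simpa [hf, Metric.mem_ball, Real.norm_eq_abs] using hχ b hb)
      have := hWsub (hBV hmem) a ha
      simpa [Real.norm_eq_abs] using this
    set C : Set E := ((↑) : ↥H → E) '' B with hC
    have hCbd : IsVonNBounded ℝ C := hB.image H.subtypeL
    set c : ℝ := 2 / ε with hc
    have hcpos : 0 < c := by positivity
    set C' : Set E := insert (0 : E) (c • C) with hC'
    have hsmulbd : IsVonNBounded ℝ (c • C) := by
      have := hCbd.image (c • ContinuousLinearMap.id ℝ E)
      simpa [Set.image_smul] using this
    have hC'bd : IsVonNBounded ℝ C' := (isVonNBounded_insert _).mpr hsmulbd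
    set hull : Set E := absConvexHull ℝ C' with hhull
    have hhullbd : IsVonNBounded ℝ hull := myAux_absConvexHull_bounded hC'bd
    have hhullH : hull ⊆ (H : Set E) := by
      refine absConvexHull_min ?_ ⟨?_, H.convex⟩
      · rintro x (rfl | ⟨y, ⟨b, hb, rfl⟩, rfl⟩)
        · exact H.zero_mem
        · exact H.smul_mem _ b.2
      · intro a _ x hx
        obtain ⟨y, hy, rfl⟩ := hx
        exact H.smul_mem _ hy
    refine ⟨((↑) : ↥H → E) ⁻¹' hull, myAux_preimage_bounded H hhullbd, ?_⟩
    have himg : ((↑) : ↥H → E) '' (((↑) : ↥H → E) ⁻¹' hull) = hull := by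
      rw [Set.image_preimage_eq_inter_range, Subtype.range_coe_subtype]
      exact Set.inter_eq_left.mpr hhullH
    rw [himg]
    intro a ha
    by_contra hmem
    have hDclosed : IsClosed (closure hull) := isClosed_closure
    have hDconv : Convex ℝ (closure hull) := convex_absConvexHull.closure
    obtain ⟨g, u, hgu, hua⟩ := geometric_hahn_banach_closed_point hDconv hDclosed hmem
    have h0D : (0 : E) ∈ closure hull :=
      subset_closure (subset_absConvexHull (Set.mem_insert _ _))
    have hupos : 0 < u := by simpa using hgu 0 h0D
    have hDbal : Balanced ℝ (closure hull) :=
      ((absConvex_absConvexHull).closure (𝕜 := ℝ)).1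
    have hsym : ∀ d ∈ closure hull, ‖g d‖ < u := by
      intro d hd
      have hnd : -d ∈ closure hull := by
        have := hDbal (-1) (by norm_num)
        exact this ⟨d, hd, by simp⟩
      have h1 := hgu d hd
      have h2 := hgu (-d) hnd
      rw [map_neg] at h2
      rw [Real.norm_eq_abs, abs_lt]
      constructor <;> linarith
    set χ : E →L[ℝ] ℝ := u⁻¹ • g with hχdef
    have hle := key χ ?_ a ha
    · have hgt : (1 : ℝ) < χ a := by
        have : χ a = u⁻¹ * g a := rfl
        rw [this]
        rw [show (1:ℝ) = u⁻¹ * u by field_simp]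
        exact mul_lt_mul_of_pos_left hua (by positivity)
      have := le_trans (le_abs_self (χ a)) (by simpa [Real.norm_eq_abs] using hle)
      linarith
    · intro b hb
      have hmem' : c • (b : E) ∈ closure hull := by
        refine subset_closure (subset_absConvexHull ?_)
        exact Set.mem_insert_iff.mpr (Or.inr ⟨(b : E), ⟨b, hb, rfl⟩, rfl⟩)
      have hlt : ‖g (c • (b : E))‖ < u := hsym _ hmem'
      have hgcb : g (c • (b : E)) = c * g b := by rw [map_smul]; rfl
      rw [hgcb, Real.norm_eq_abs, abs_mul, abs_of_pos hcpos] at hlt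
      have hχb : χ (b : E) = u⁻¹ * g (b : E) := rfl
      rw [hχb, Real.norm_eq_abs, abs_mul, abs_of_pos (inv_pos.mpr hupos)]
      have hb' : |g (b : E)| < u / c := by
        rw [lt_div_iff₀ hcpos]; linarith [hlt]
      calc u⁻¹ * |g (b : E)| < u⁻¹ * (u / c) :=
            mul_lt_mul_of_pos_left hb' (by positivity)
        _ = 1 / c := by field_simp
        _ = ε / 2 := by rw [hc]; field_simp
        _ < ε := by linarith
  · -- large → inducing
    intro hLarge
    have h0 : (𝓝 (0 : E →L[ℝ] ℝ)) = comap f (𝓝 0) := by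
      apply le_antisymm
      · -- continuity at 0
        rw [← Filter.map_le_iff_le_comap]
        show Filter.Tendsto f (𝓝 0) (𝓝 0)
        rw [basisH.tendsto_right_iff]
        rintro ⟨B, V⟩ ⟨hB, hV⟩
        have hCbd : IsVonNBounded ℝ (((↑) : ↥H → E) '' B) := hB.image H.subtypeL
        filter_upwards [basisE.mem_of_mem (i := (((↑) : ↥H → E) '' B, V)) ⟨hCbd, hV⟩]
          with χ hχ b hb
        exact hχ ↑b ⟨b, hb, rfl⟩
      · intro s hs
        obtain ⟨⟨A, V⟩, ⟨hA, hV⟩, hsub⟩ := basisE.mem_iff.mp hs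
        obtain ⟨B, hB, hAB⟩ := hLarge A hA
        obtain ⟨δ, hδ, hball⟩ := Metric.nhds_basis_closedBall.mem_iff.mp hV
        refine mem_comap.mpr ⟨{ ψ : ↥H →L[ℝ] ℝ | ∀ x ∈ B, ψ x ∈ Metric.closedBall 0 δ },
          basisH.mem_of_mem (i := (B, Metric.closedBall 0 δ))
            ⟨hB, Metric.closedBall_mem_nhds _ hδ⟩, ?_⟩
        intro χ hχ
        refine hsub fun a ha => hball ?_
        have hclosed : IsClosed (χ ⁻¹' Metric.closedBall (0:ℝ) δ) :=
          Metric.isClosed_closedBall.preimage χ.continuous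
        have hsubset : ((↑) : ↥H → E) '' B ⊆ χ ⁻¹' Metric.closedBall (0:ℝ) δ := by
          rintro x ⟨b, hb, rfl⟩
          exact hχ b hb
        have := closure_minimal hsubset hclosed
        exact this (hAB ha)
    refine ⟨IsTopologicalAddGroup.ext inferInstance
      (topologicalAddGroup_induced
        (AddMonoidHom.mk' f fun a b => ContinuousLinearMap.add_comp _ _ _)) ?_⟩
    conv_rhs => rw [nhds_induced]
    show 𝓝 (0 : E →L[ℝ] ℝ) = comap f (𝓝 (f 0))
    rw [hf0]
    exact h0

end
end

section
/- Let 1 < p < ∞ and let p* be the conjugate exponent of p (1/p + 1/p* = 1). Then the Banach space ℓ_p is weakly sequentially p*-complete: every weakly p*-Cauchy sequence in ℓ_p weakly p*-converges to an element of ℓ_p. -/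
open Filter Topology Bornology Pointwise
open scoped ENNReal NNReal

noncomputable section

variable {E : Type*} [AddCommGroup E] [Module ℝ E] [TopologicalSpace E]

variable {F : Type*} [AddCommGroup F] [Module ℝ F] [TopologicalSpace F]

/-- A sequence is weakly `p`-Cauchy if for every pair of strictly increasing index sequences
`(k_n)`, `(j_n)`, the sequence `(x (k n) - x (j n))ₙ` is weakly `p`-summable. -/
def WeaklyPCauchy (p : ℝ≥0∞) (x : ℕ → F) : Prop :=
  ∀ k j : ℕ → ℕ, StrictMono k → StrictMono j →
    WeaklySummable p fun n => x (k n) - x (j n)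


section AuxiliaryForMain


lemma aux_not_cauchy {a : ℕ → ℝ} (h : ¬ CauchySeq a) :
    ∃ ε > (0:ℝ), ∃ k j : ℕ → ℕ, StrictMono k ∧ StrictMono j ∧
      ∀ n, ε ≤ |a (k n) - a (j n)| := by
  rw [Metric.cauchySeq_iff] at h
  push_neg at h
  obtain ⟨ε, hε, H⟩ := h
  have H' : ∀ N : ℕ, ∃ mn : ℕ × ℕ, N ≤ mn.1 ∧ N ≤ mn.2 ∧ ε ≤ |a mn.1 - a mn.2| := by
    intro N
    obtain ⟨m, hm, n, hn, hd⟩ := H N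
    exact ⟨(m, n), hm, hn, by simpa [Real.dist_eq] using hd⟩
  let g : ℕ → ℕ × ℕ := fun N => (H' N).choose
  have hg : ∀ N, N ≤ (g N).1 ∧ N ≤ (g N).2 ∧ ε ≤ |a (g N).1 - a (g N).2| :=
    fun N => (H' N).choose_spec
  let F : ℕ → ℕ × ℕ := fun n => Nat.rec (g 0) (fun _ prev => g (max prev.1 prev.2 + 1)) n
  have hF : ∀ n, (F (n+1)) = g (max (F n).1 (F n).2 + 1) := fun n => rfl
  refine ⟨ε, hε, fun n => (F n).1, fun n => (F n).2, ?_, ?_, ?_⟩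
  · apply strictMono_nat_of_lt_succ
    intro n
    rw [hF]
    calc (F n).1 < max (F n).1 (F n).2 + 1 := Nat.lt_succ_of_le (le_max_left _ _)
    _ ≤ (g (max (F n).1 (F n).2 + 1)).1 := (hg _).1
  · apply strictMono_nat_of_lt_succ
    intro n
    rw [hF]
    calc (F n).2 < max (F n).1 (F n).2 + 1 := Nat.lt_succ_of_le (le_max_right _ _)
    _ ≤ (g (max (F n).1 (F n).2 + 1)).2 := (hg _).2.1
  · intro n
    cases n with
    | zero => exact (hg 0).2.2
    | succ m => show ε ≤ |a (F (m+1)).1 - a (F (m+1)).2|; rw [hF]; exact (hg _).2.2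

lemma aux_tendsto_subseq {a : ℕ → ℝ} (h : Tendsto a atTop (𝓝 0)) :
    ∃ j : ℕ → ℕ, StrictMono j ∧ ∀ n, |a (j n)| ≤ (1/2 : ℝ)^n := by
  rw [Metric.tendsto_atTop] at h
  have H : ∀ t : ℕ, ∃ N, ∀ n ≥ N, |a n| ≤ (1/2:ℝ)^t := by
    intro t
    obtain ⟨N, hN⟩ := h ((1/2)^t) (by positivity)
    exact ⟨N, fun n hn => by simpa [Real.dist_eq] using (hN n hn).le⟩
  let Nf : ℕ → ℕ := fun t => (H t).choose
  have hNf : ∀ t, ∀ n ≥ Nf t, |a n| ≤ (1/2:ℝ)^t := fun t => (H t).choose_spec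
  let j : ℕ → ℕ := fun n => Nat.rec (Nf 0) (fun m prev => max (Nf (m+1)) (prev + 1)) n
  have hj : ∀ n, j (n+1) = max (Nf (n+1)) (j n + 1) := fun n => rfl
  refine ⟨j, strictMono_nat_of_lt_succ fun n => ?_, fun n => ?_⟩
  · rw [hj]; exact Nat.lt_of_lt_of_le (Nat.lt_succ_self _) (le_max_right _ _)
  · cases n with
    | zero => exact hNf 0 _ le_rfl
    | succ m => exact hNf (m+1) _ (by rw [hj]; exact le_max_left _ _)

lemma conj_facts {p pst : ℝ≥0∞} (hp1 : 1 < p) (hp2 : p ≠ ∞) (hconj : p⁻¹ + pst⁻¹ = 1) :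
    pst ≠ ∞ ∧ 1 < pst ∧ p.toReal.HolderConjugate pst.toReal := by
  have hp0 : p ≠ 0 := (zero_lt_one.trans hp1).ne'
  have hpi_ne_top : p⁻¹ ≠ ∞ := ENNReal.inv_ne_top.2 hp0
  have hpi_lt_one : p⁻¹ < 1 := ENNReal.inv_lt_one.2 hp1
  have hpi_pos : p⁻¹ ≠ 0 := ENNReal.inv_ne_zero.2 hp2
  have hpsti : pst⁻¹ = 1 - p⁻¹ := by
    rw [← hconj]; rw [add_comm]; exact (ENNReal.add_sub_cancel_right hpi_ne_top).symm
  have hpsti_pos : pst⁻¹ ≠ 0 := by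
    rw [hpsti]; exact (tsub_pos_iff_lt.2 hpi_lt_one).ne'
  have hpst_ne_top : pst ≠ ∞ := ENNReal.inv_ne_zero.1 hpsti_pos
  have hpsti_ne_top : pst⁻¹ ≠ ∞ := by
    rw [hpsti]; exact (lt_of_le_of_lt tsub_le_self ENNReal.one_lt_top).ne
  have hpst0 : pst ≠ 0 := ENNReal.inv_ne_top.1 hpsti_ne_top
  have hpst1 : 1 < pst := by
    rw [← ENNReal.inv_lt_one]
    calc pst⁻¹ < pst⁻¹ + p⁻¹ := ENNReal.lt_add_right hpsti_ne_top hpi_pos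
    _ = 1 := by rw [add_comm]; exact hconj
  have htr : p.toReal⁻¹ + pst.toReal⁻¹ = 1 := by
    have := congrArg ENNReal.toReal hconj
    rwa [ENNReal.toReal_add hpi_ne_top hpsti_ne_top, ENNReal.toReal_inv, ENNReal.toReal_inv,
      ENNReal.toReal_one] at this
  refine ⟨hpst_ne_top, hpst1, Real.holderConjugate_iff.2 ⟨?_, htr⟩⟩
  have := (ENNReal.toReal_lt_toReal (by simp) hp2).2 hp1
  simpa using this

section
variable {p pst : ℝ≥0∞} [Fact (1 ≤ p)]

lemma single_eq_smul_single_one (i : ℕ) (c : ℝ) :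
    (lp.single p i c : lp (fun _ : ℕ => ℝ) p) = c • (lp.single p i 1 : lp (fun _ : ℕ => ℝ) p) := by
  have := lp.single_smul (𝕜 := ℝ) (E := fun _ : ℕ => ℝ) p i c (1:ℝ)
  rw [smul_eq_mul, mul_one] at this
  exact this

lemma chi_hasSum (hp2 : p ≠ ∞) (χ : lp (fun _ : ℕ => ℝ) p →L[ℝ] ℝ)
    (f : lp (fun _ : ℕ => ℝ) p) :
    HasSum (fun i => f i * χ (lp.single p i 1)) (χ f) := by
  have h := (lp.hasSum_single hp2 f).mapL χ
  convert h using 2 with i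
  conv_rhs => rw [single_eq_smul_single_one, map_smul]
  rw [smul_eq_mul]

lemma chi_coeff_memℓp (hp2 : p ≠ ∞) (hpq : p.toReal.HolderConjugate pst.toReal)
    (χ : lp (fun _ : ℕ => ℝ) p →L[ℝ] ℝ) :
    Memℓp (fun i => χ (lp.single p i 1)) pst := by
  set P := p.toReal with hP
  set Q := pst.toReal with hQ
  have hP1 : 1 < P := hpq.lt
  have hQ1 : 1 < Q := hpq.symm.lt
  have hP0 : 0 < P := by linarith
  have hQ0 : 0 < Q := by linarith
  set g : ℕ → ℝ := fun i => χ (lp.single p i 1) with hg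
  set h : ℕ → ℝ := fun i => Real.sign (g i) * |g i| ^ (Q - 1) with hh
  have habs : ∀ i, |h i| = |g i| ^ (Q - 1) := by
    intro i
    rcases eq_or_ne (g i) 0 with h0 | h0
    · simp [hh, h0, Real.zero_rpow (by linarith : Q - 1 ≠ 0)]
    · rw [hh, abs_mul, abs_of_nonneg (Real.rpow_nonneg (abs_nonneg _) _)]
      rcases lt_or_gt_of_ne h0 with hlt | hgt
      · rw [Real.sign_of_neg hlt]; norm_num
      · rw [Real.sign_of_pos hgt]; norm_num
  have hmul : ∀ i, h i * g i = |g i| ^ Q := by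
    intro i
    rcases eq_or_ne (g i) 0 with h0 | h0
    · simp [hh, h0, Real.zero_rpow hQ0.ne']
    · have habs0 : (0:ℝ) < |g i| := abs_pos.2 h0
      have hsign : Real.sign (g i) * g i = |g i| := by
        rcases lt_or_gt_of_ne h0 with hlt | hgt
        · rw [Real.sign_of_neg hlt, abs_of_neg hlt]; ring
        · rw [Real.sign_of_pos hgt, abs_of_pos hgt]; ring
      calc h i * g i = (Real.sign (g i) * g i) * |g i| ^ (Q-1) := by rw [hh]; ring
      _ = |g i| ^ (1:ℝ) * |g i| ^ (Q-1) := by rw [hsign, Real.rpow_one]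
      _ = |g i| ^ Q := by rw [← Real.rpow_add habs0]; ring_nf
  have hQP : (Q - 1) * P = Q := by
    have h1 : P⁻¹ + Q⁻¹ = 1 := hpq.inv_add_inv_eq_one
    field_simp at h1
    nlinarith
  apply memℓp_gen' (C := ‖χ‖ ^ Q)
  intro s
  set S := ∑ i ∈ s, ‖g i‖ ^ Q with hS
  have hSnn : 0 ≤ S := Finset.sum_nonneg fun i _ => Real.rpow_nonneg (norm_nonneg _) _
  show S ≤ ‖χ‖ ^ Q
  set fs : lp (fun _ : ℕ => ℝ) p := ∑ i ∈ s, lp.single p i (h i) with hfs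
  have hχfs : χ fs = S := by
    rw [hfs, map_sum, hS]
    refine Finset.sum_congr rfl fun i _ => ?_
    rw [single_eq_smul_single_one, map_smul, smul_eq_mul, hmul i, Real.norm_eq_abs]
  have hnorm : ‖fs‖ ^ P = S := by
    rw [hfs, lp.norm_sum_single hP0, hS]
    refine Finset.sum_congr rfl fun i _ => ?_
    rw [Real.norm_eq_abs, habs i, ← hP, ← Real.rpow_mul (abs_nonneg _), hQP, Real.norm_eq_abs]
  have hfs_eq : S ^ P⁻¹ = ‖fs‖ := by
    rw [← hnorm, Real.rpow_rpow_inv (norm_nonneg _) hP0.ne']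
  have hbound : S ≤ ‖χ‖ * S ^ P⁻¹ := by
    rw [hfs_eq]
    calc S = χ fs := hχfs.symm
    _ ≤ |χ fs| := le_abs_self _
    _ ≤ ‖χ‖ * ‖fs‖ := by simpa [Real.norm_eq_abs] using χ.le_opNorm fs
  rcases eq_or_lt_of_le hSnn with h0 | hSpos
  · rw [← h0]; positivity
  · have h1 : S ^ Q⁻¹ ≤ ‖χ‖ := by
      have hsplit : S = S ^ Q⁻¹ * S ^ P⁻¹ := by
        rw [← Real.rpow_add hSpos, add_comm, hpq.inv_add_inv_eq_one, Real.rpow_one]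
      nth_rewrite 1 [hsplit] at hbound
      exact le_of_mul_le_mul_right hbound (Real.rpow_pos_of_pos hSpos _)
    calc S = (S ^ Q⁻¹) ^ Q := (Real.rpow_inv_rpow hSnn hQ0.ne').symm
    _ ≤ ‖χ‖ ^ Q := Real.rpow_le_rpow (Real.rpow_nonneg hSnn _) h1 hQ0.le

end

section
variable {p pst : ℝ≥0∞} [Fact (1 ≤ p)]

lemma chi_truncation_bound (hp2 : p ≠ ∞) (hpst2 : pst ≠ ∞) [Fact (1 ≤ pst)]
    (hpq : p.toReal.HolderConjugate pst.toReal)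
    (χ : lp (fun _ : ℕ => ℝ) p →L[ℝ] ℝ) :
    ∀ ε > (0:ℝ), ∃ s : Finset ℕ, ∀ f : lp (fun _ : ℕ => ℝ) p,
      |χ f - ∑ i ∈ s, f i * χ (lp.single p i 1)| ≤ ε * ‖f‖ := by
  intro ε hε
  set G : lp (fun _ : ℕ => ℝ) pst :=
    ⟨fun i => χ (lp.single p i 1), chi_coeff_memℓp hp2 hpq χ⟩ with hG
  have hGsum : HasSum (fun i => lp.single pst i (G i)) G := lp.hasSum_single hpst2 G
  have : ∀ᶠ s : Finset ℕ in atTop, dist (∑ i ∈ s, lp.single pst i (G i)) G < ε :=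
    Metric.tendsto_nhds.1 hGsum ε hε
  obtain ⟨s, hs⟩ := this.exists
  refine ⟨s, fun f => ?_⟩
  set Ps : lp (fun _ : ℕ => ℝ) pst := ∑ i ∈ s, lp.single pst i (G i) with hPs
  set D : lp (fun _ : ℕ => ℝ) pst := G - Ps with hD
  have hDnorm : ‖D‖ ≤ ε := by
    rw [hD, norm_sub_rev]
    exact (le_of_lt (by rwa [dist_eq_norm] at hs))
  have hPscoord : ∀ i, Ps i = if i ∈ s then G i else 0 := by
    intro i
    rw [hPs]
    have := lp.coeFn_sum (fun t => lp.single pst t (G t)) s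
    calc (∑ t ∈ s, lp.single pst t (G t) : lp (fun _ : ℕ => ℝ) pst) i
        = ∑ t ∈ s, (lp.single pst t (G t) : ∀ _, ℝ) i := by rw [this]; simp
    _ = ∑ t ∈ s, Pi.single t (G t) i := by
        refine Finset.sum_congr rfl fun t _ => ?_
        rcases eq_or_ne i t with rfl | hne
        · rw [lp.single_apply_self, Pi.single_eq_same]
        · rw [lp.single_apply_ne _ _ _ hne, Pi.single_eq_of_ne hne]
    _ = if i ∈ s then G i else 0 := Finset.sum_pi_single i (fun t => G t) s
  have H1 : HasSum (fun i => f i * G i) (χ f) := chi_hasSum hp2 χ f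
  have H2 : HasSum (fun i => f i * Ps i) (∑ i ∈ s, f i * G i) := by
    have h0 : ∀ i ∉ s, f i * Ps i = 0 := by
      intro i hi; rw [hPscoord i, if_neg hi, mul_zero]
    have := hasSum_sum_of_ne_finset_zero (L := SummationFilter.unconditional ℕ) h0
    convert this using 1
    refine (Finset.sum_congr rfl fun i hi => ?_).symm
    rw [hPscoord i, if_pos hi]
  have H3 : HasSum (fun i => f i * D i) (χ f - ∑ i ∈ s, f i * G i) := by
    have := H1.sub H2
    have hfun : (fun i => f i * D i) = fun b => f b * G b - f b * Ps b := by
      funext i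
      rw [hD, lp.coeFn_sub, Pi.sub_apply, mul_sub]
    rw [hfun]; exact this
  have hsummul : Summable fun i => ‖f i‖ * ‖D i‖ := lp.summable_mul hpq f D
  have habs : |χ f - ∑ i ∈ s, f i * G i| ≤ ε * ‖f‖ := by
    rw [← H3.tsum_eq, ← Real.norm_eq_abs]
    calc ‖∑' i, f i * D i‖ ≤ ∑' i, ‖f i * D i‖ := by
          apply norm_tsum_le_tsum_norm
          simpa [norm_mul] using hsummul
    _ = ∑' i, ‖f i‖ * ‖D i‖ := by simp [norm_mul]
    _ ≤ ‖f‖ * ‖D‖ := lp.tsum_mul_le_mul_norm' hpq f D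
    _ ≤ ‖f‖ * ε := by
        have := mul_le_mul_of_nonneg_left hDnorm (norm_nonneg f)
        linarith
    _ = ε * ‖f‖ := mul_comm _ _
  exact habs

end

section
variable {p pst : ℝ≥0∞} [Fact (1 ≤ p)]

lemma chi_tendsto (hp2 : p ≠ ∞) (hpst2 : pst ≠ ∞) [Fact (1 ≤ pst)]
    (hpq : p.toReal.HolderConjugate pst.toReal)
    (χ : lp (fun _ : ℕ => ℝ) p →L[ℝ] ℝ) {z : ℕ → lp (fun _ : ℕ => ℝ) p} {C : ℝ}
    (hC : ∀ n, ‖z n‖ ≤ C)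
    (hz : ∀ i, Tendsto (fun n => z n i) atTop (𝓝 (0:ℝ))) :
    Tendsto (fun n => χ (z n)) atTop (𝓝 (0:ℝ)) := by
  rw [NormedAddCommGroup.tendsto_nhds_zero]
  intro ε hε
  have hC0 : (0:ℝ) ≤ C := le_trans (norm_nonneg _) (hC 0)
  set δ := ε / (2 * (C + 1)) with hδ
  have hδ0 : 0 < δ := by positivity
  obtain ⟨s, hs⟩ := chi_truncation_bound hp2 hpst2 hpq χ δ hδ0
  have hfin : Tendsto (fun n => ∑ i ∈ s, z n i * χ (lp.single p i 1)) atTop (𝓝 0) := by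
    have := tendsto_finset_sum s (fun i (_ : i ∈ s) => ((hz i).mul_const (χ (lp.single p i 1))))
    simpa using this
  have hev := (NormedAddCommGroup.tendsto_nhds_zero.1 hfin) (ε/2) (by positivity)
  filter_upwards [hev] with n hn
  have h1 := hs (z n)
  set b := ∑ i ∈ s, z n i * χ (lp.single p i 1) with hb
  have key : ‖χ (z n)‖ ≤ δ * ‖z n‖ + ‖b‖ := by
    rw [Real.norm_eq_abs]
    calc |χ (z n)| = |(χ (z n) - b) + b| := by ring_nf
    _ ≤ |χ (z n) - b| + |b| := abs_add_le _ _
    _ ≤ δ * ‖z n‖ + ‖b‖ := by rw [Real.norm_eq_abs]; exact add_le_add h1 le_rfl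
  have hδz : δ * ‖z n‖ ≤ ε / 2 := by
    have h2 : ‖z n‖ ≤ C + 1 := le_trans (hC n) (by linarith)
    have h3 : δ * ‖z n‖ ≤ δ * (C + 1) := mul_le_mul_of_nonneg_left h2 hδ0.le
    have h4 : δ * (C + 1) = ε / 2 := by
      rw [hδ]; field_simp
    linarith
  have : ‖b‖ < ε / 2 := hn
  calc ‖χ (z n)‖ ≤ δ * ‖z n‖ + ‖b‖ := key
  _ < ε/2 + ε/2 := by linarith
  _ = ε := by ring

end

section mainproof
variable {p pst : ℝ≥0∞} [Fact (1 ≤ p)]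

theorem main_thm (hp1 : 1 < p) (hp2 : p ≠ ∞) (hconj : p⁻¹ + pst⁻¹ = 1)
    (x : ℕ → lp (fun _ : ℕ => ℝ) p)
    (hx : ∀ k j : ℕ → ℕ, StrictMono k → StrictMono j →
      ∀ χ : lp (fun _ : ℕ => ℝ) p →L[ℝ] ℝ,
        (pst ≠ ∞ ∧ Memℓp (fun n => χ (x (k n) - x (j n))) pst) ∨
        (pst = ∞ ∧ Tendsto (fun n => χ (x (k n) - x (j n))) atTop (𝓝 (0:ℝ)))) :
    ∃ y : lp (fun _ : ℕ => ℝ) p, ∀ χ : lp (fun _ : ℕ => ℝ) p →L[ℝ] ℝ,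
      Memℓp (fun n => χ (x n - y)) pst := by
  obtain ⟨hpst2, hpst1, hpq⟩ := conj_facts hp1 hp2 hconj
  haveI : Fact (1 ≤ pst) := ⟨hpst1.le⟩
  have hp0 : p ≠ 0 := (zero_lt_one.trans hp1).ne'
  have hQ0 : 0 < pst.toReal := hpq.symm.pos
  -- step 1: each (χ (x n)) is Cauchy
  have hcau : ∀ χ : lp (fun _ : ℕ => ℝ) p →L[ℝ] ℝ, CauchySeq (fun n => χ (x n)) := by
    intro χ
    by_contra hnc
    obtain ⟨ε, hε, k, j, hk, hj, hkj⟩ := aux_not_cauchy hnc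
    rcases hx k j hk hj χ with ⟨_, hmem⟩ | ⟨htop, _⟩
    · have hsum := hmem.summable hQ0
      have h0 := hsum.tendsto_atTop_zero
      have hlt : ∀ᶠ n in atTop,
          ‖χ (x (k n) - x (j n))‖ ^ pst.toReal < ε ^ pst.toReal :=
        h0.eventually (gt_mem_nhds (by positivity))
      obtain ⟨n, hn⟩ := hlt.exists
      have hge : ε ^ pst.toReal ≤ ‖χ (x (k n) - x (j n))‖ ^ pst.toReal := by
        apply Real.rpow_le_rpow hε.le _ hQ0.le
        rw [map_sub, Real.norm_eq_abs]
        exact hkj n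
      linarith
    · exact hpst2 htop
  have hconv : ∀ χ : lp (fun _ : ℕ => ℝ) p →L[ℝ] ℝ,
      ∃ l, Tendsto (fun n => χ (x n)) atTop (𝓝 l) :=
    fun χ => cauchySeq_tendsto_of_complete (hcau χ)
  -- step 2: boundedness via Banach-Steinhaus
  obtain ⟨C, hC⟩ : ∃ C, ∀ n, ‖x n‖ ≤ C := by
    set g : ℕ → StrongDual ℝ (lp (fun _ : ℕ => ℝ) p) →L[ℝ] ℝ :=
      fun n => NormedSpace.inclusionInDoubleDual ℝ _ (x n) with hg
    have hpt : ∀ χ, ∃ C, ∀ n, ‖g n χ‖ ≤ C := by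
      intro χ
      obtain ⟨R, hR0, hR⟩ := cauchySeq_bdd (hcau χ)
      refine ⟨R + ‖χ (x 0)‖, fun n => ?_⟩
      have h1 : ‖g n χ‖ = ‖χ (x n)‖ := rfl
      rw [h1]
      have h2 : ‖χ (x n) - χ (x 0)‖ < R := by
        rw [← dist_eq_norm]; exact hR n 0
      calc ‖χ (x n)‖ = ‖(χ (x n) - χ (x 0)) + χ (x 0)‖ := by ring_nf
      _ ≤ ‖χ (x n) - χ (x 0)‖ + ‖χ (x 0)‖ := norm_add_le _ _
      _ ≤ R + ‖χ (x 0)‖ := by linarith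
    obtain ⟨C', hC'⟩ := banach_steinhaus hpt
    refine ⟨C', fun n => ?_⟩
    have : ‖g n‖ = ‖x n‖ :=
      (NormedSpace.inclusionInDoubleDualLi ℝ
        (E := lp (fun _ : ℕ => ℝ) p)).norm_map (x n)
    rw [← this]; exact hC' n
  -- step 3: coordinate functionals and coordinatewise limit
  have coordCLM : ∀ i : ℕ, ∃ χ : lp (fun _ : ℕ => ℝ) p →L[ℝ] ℝ,
      ∀ f : lp (fun _ : ℕ => ℝ) p, χ f = f i := by
    intro i
    refine ⟨LinearMap.mkContinuous
      { toFun := fun f : lp (fun _ : ℕ => ℝ) p => f i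
        map_add' := fun f g => by simp
        map_smul' := fun c f => by simp }
      1 (fun f => by show ‖f i‖ ≤ 1 * ‖f‖; simpa using lp.norm_apply_le_norm hp0 f i), fun f => rfl⟩
  have hcoordlim : ∀ i : ℕ, ∃ l : ℝ, Tendsto (fun n => x n i) atTop (𝓝 l) := by
    intro i
    obtain ⟨χ, hχ⟩ := coordCLM i
    obtain ⟨l, hl⟩ := hconv χ
    exact ⟨l, by simpa only [hχ] using hl⟩
  choose y' hy' using hcoordlim
  have hy'mem : Memℓp y' p := by
    refine lp.memℓp_of_tendsto (l := atTop) (F := x) ?_ ?_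
    · rw [isBounded_iff_forall_norm_le]
      exact ⟨C, by rintro _ ⟨n, rfl⟩; exact hC n⟩
    · rw [tendsto_pi_nhds]
      exact fun i => hy' i
  set y : lp (fun _ : ℕ => ℝ) p := ⟨y', hy'mem⟩ with hy
  -- step 4: weak convergence to y
  have hzcoord : ∀ i, Tendsto (fun n => (x n - y) i) atTop (𝓝 (0:ℝ)) := by
    intro i
    have h1 : ∀ n, (x n - y) i = x n i - y' i := by
      intro n; rw [lp.coeFn_sub]; rfl
    simp only [h1]
    have := (hy' i).sub_const (y' i)
    simpa using this
  have hzbdd : ∀ n, ‖x n - y‖ ≤ C + ‖y‖ := by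
    intro n
    calc ‖x n - y‖ ≤ ‖x n‖ + ‖y‖ := norm_sub_le _ _
    _ ≤ C + ‖y‖ := by have := hC n; linarith
  have hweak : ∀ χ : lp (fun _ : ℕ => ℝ) p →L[ℝ] ℝ,
      Tendsto (fun n => χ (x n - y)) atTop (𝓝 (0:ℝ)) :=
    fun χ => chi_tendsto hp2 hpst2 hpq χ hzbdd hzcoord
  -- step 5: conclude
  refine ⟨y, fun χ => ?_⟩
  obtain ⟨j, hjmono, hjsmall⟩ := aux_tendsto_subseq (hweak χ)
  have h1 := hx id j strictMono_id hjmono χ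
  rcases h1 with ⟨_, hmem⟩ | ⟨htop, _⟩
  swap
  · exact absurd htop hpst2
  have hmem2 : Memℓp (fun n => χ (x (j n) - y)) pst := by
    apply memℓp_gen
    have hgeo : Summable fun n : ℕ => (((1:ℝ)/2) ^ pst.toReal) ^ n := by
      apply summable_geometric_of_lt_one (by positivity)
      exact Real.rpow_lt_one (by norm_num) (by norm_num) hQ0
    apply Summable.of_nonneg_of_le (fun n => by positivity) _ hgeo
    intro n
    have h2 : ‖χ (x (j n) - y)‖ ≤ (1/2:ℝ)^n := by
      rw [Real.norm_eq_abs]; exact hjsmall n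
    calc ‖χ (x (j n) - y)‖ ^ pst.toReal ≤ ((1/2:ℝ)^n) ^ pst.toReal :=
          Real.rpow_le_rpow (norm_nonneg _) h2 hQ0.le
    _ = (((1:ℝ)/2) ^ pst.toReal) ^ n := by
        rw [← Real.rpow_natCast ((1:ℝ)/2) n, ← Real.rpow_mul (by norm_num),
          mul_comm, Real.rpow_mul (by norm_num), Real.rpow_natCast]
  have heq : (fun n => χ (x n - y)) =
      (fun n => χ (x (id n) - x (j n))) + (fun n => χ (x (j n) - y)) := by
    funext n
    simp only [Pi.add_apply, id_eq, ← map_add]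
    congr 1
    abel
  rw [heq]
  exact hmem.add hmem2

end mainproof

end AuxiliaryForMain

/-- Let `1 < p < ∞` and `p*` its conjugate exponent (`1/p + 1/p* = 1`). Then `ℓ_p` is weakly
sequentially `p*`-complete: every weakly `p*`-Cauchy sequence weakly `p*`-converges to an
element of `ℓ_p`. -/
theorem lp_weakly_sequentially_conj_complete (p pst : ℝ≥0∞) (hp1 : 1 < p) (hp2 : p ≠ ∞)
    (hconj : p⁻¹ + pst⁻¹ = 1) [Fact (1 ≤ p)]
    (x : ℕ → lp (fun _ : ℕ => ℝ) p) (hx : WeaklyPCauchy pst x) :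
    ∃ y : lp (fun _ : ℕ => ℝ) p, WeaklySummable pst fun n => x n - y := by
  have hx' : ∀ k j : ℕ → ℕ, StrictMono k → StrictMono j →
      ∀ χ : lp (fun _ : ℕ => ℝ) p →L[ℝ] ℝ,
        (pst ≠ ∞ ∧ Memℓp (fun n => χ (x (k n) - x (j n))) pst) ∨
        (pst = ∞ ∧ Tendsto (fun n => χ (x (k n) - x (j n))) atTop (𝓝 (0:ℝ))) :=
    fun k j hk hj χ => hx k j hk hj χ
  obtain ⟨y, hy⟩ := main_thm hp1 hp2 hconj x hx'
  exact ⟨y, fun χ => Or.inl ⟨(conj_facts hp1 hp2 hconj).1, hy χ⟩⟩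

end
end

section
/- Let 1 < p < ∞, let p* be the conjugate exponent of p (1/p + 1/p* = 1), and let E be a locally convex space. Then for every continuous linear operator S : ℓ_{p*} → E, the image S(B_{ℓ_{p*}}) of the closed unit ball of ℓ_{p*} is a weakly sequentially p-compact subset of E: every sequence in S(B_{ℓ_{p*}}) has a subsequence that weakly p-converges to a point of S(B_{ℓ_{p*}}). -/
open Filter Topology Bornology Pointwise
open scoped ENNReal NNReal

noncomputable section

variable {E : Type*} [AddCommGroup E] [Module ℝ E] [TopologicalSpace E]

section Aux

variable {q : ℝ≥0∞} [Fact (1 ≤ q)] {pt : ℝ}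

lemma single_eq_smul (q : ℝ≥0∞) [Fact (1 ≤ q)] (i : ℕ) (a : ℝ) :
    lp.single (E := fun _ : ℕ => ℝ) q i a = a • lp.single q i 1 := by
  rw [← lp.single_smul, smul_eq_mul, mul_one]

/-- Lemma A: coordinates of a continuous functional on `ℓ_q` are `ℓ_{pt}`-bounded by its norm. -/
lemma sum_coord_rpow_le (hc : pt.HolderConjugate q.toReal)
    (g : lp (fun _ : ℕ => ℝ) q →L[ℝ] ℝ) (F : Finset ℕ) :
    ∑ i ∈ F, |g (lp.single q i 1)| ^ pt ≤ ‖g‖ ^ pt := by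
  have hq0 : 0 < q.toReal := hc.symm.pos
  set f : ℕ → ℝ := fun i => g (lp.single q i 1) with hf
  set s : ℝ := ∑ i ∈ F, |f i| ^ pt with hs
  have hs0 : 0 ≤ s := Finset.sum_nonneg fun i _ => Real.rpow_nonneg (abs_nonneg _) _
  rcases hs0.eq_or_lt with h0 | hpos
  · rw [← h0]; exact Real.rpow_nonneg (norm_nonneg _) _
  -- the extremal vector
  set a : ℕ → ℝ := fun i => Real.sign (f i) * |f i| ^ (pt - 1) with ha
  set z : lp (fun _ : ℕ => ℝ) q := ∑ i ∈ F, lp.single q i (a i) with hz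
  have hterm : ∀ i, |a i| ^ q.toReal = |f i| ^ pt := by
    intro i
    rcases eq_or_ne (f i) 0 with h | h
    · simp [ha, h, Real.zero_rpow (ne_of_gt (sub_pos.2 hc.lt)),
        Real.zero_rpow hq0.ne', Real.zero_rpow (ne_of_gt hc.pos)]
    · have hsign : |Real.sign (f i)| = 1 := by
        rcases lt_or_gt_of_ne h with hlt | hgt
        · rw [Real.sign_of_neg hlt]; norm_num
        · rw [Real.sign_of_pos hgt]; norm_num
      rw [abs_mul, hsign, one_mul, abs_of_nonneg (Real.rpow_nonneg (abs_nonneg _) _),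
        ← Real.rpow_mul (abs_nonneg _), hc.sub_one_mul_conj]
  have hznorm : ‖z‖ ^ q.toReal = s := by
    rw [hz, lp.norm_sum_single hq0, hs]
    refine Finset.sum_congr rfl fun i _ => ?_
    rw [Real.norm_eq_abs, hterm]
  have hgz : g z = s := by
    rw [hz, map_sum, hs]
    refine Finset.sum_congr rfl fun i _ => ?_
    rw [single_eq_smul, map_smul, smul_eq_mul]
    rcases eq_or_ne (f i) 0 with h | h
    · simp [ha, h, Real.zero_rpow (ne_of_gt hc.pos)]
    · have key : a i * f i = |f i| ^ (pt - 1) * |f i| := by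
        rcases lt_or_gt_of_ne h with hlt | hgt
        · show Real.sign (f i) * |f i| ^ (pt - 1) * f i = _
          rw [abs_of_neg hlt, Real.sign_of_neg hlt]; ring
        · show Real.sign (f i) * |f i| ^ (pt - 1) * f i = _
          rw [abs_of_pos hgt, Real.sign_of_pos hgt]; ring
      show a i * f i = |f i| ^ pt
      rw [key, ← Real.rpow_add_one (abs_ne_zero.2 h), sub_add_cancel]
  -- ‖z‖ = s ^ (1 / q.toReal)
  have hznn : 0 ≤ ‖z‖ := norm_nonneg _
  have hzn : ‖z‖ = s ^ q.toReal⁻¹ := by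
    rw [← hznorm, Real.rpow_rpow_inv hznn hq0.ne']
  have hineq : s ≤ ‖g‖ * s ^ q.toReal⁻¹ := by
    calc s = g z := hgz.symm
    _ ≤ |g z| := le_abs_self _
    _ ≤ ‖g‖ * ‖z‖ := g.le_opNorm z
    _ = ‖g‖ * s ^ q.toReal⁻¹ := by rw [hzn]
  have hsplit : s = s ^ pt⁻¹ * s ^ q.toReal⁻¹ := by
    rw [← Real.rpow_add hpos, hc.inv_add_inv_eq_one, Real.rpow_one]
  have h2 : s ^ pt⁻¹ ≤ ‖g‖ := by
    have hq' : (0:ℝ) < s ^ q.toReal⁻¹ := Real.rpow_pos_of_pos hpos _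
    have := hineq
    nth_rewrite 1 [hsplit] at this
    exact le_of_mul_le_mul_right this hq'
  calc s = (s ^ pt⁻¹) ^ pt := by
        rw [← Real.rpow_mul hs0, inv_mul_cancel₀ (ne_of_gt hc.pos), Real.rpow_one]
  _ ≤ ‖g‖ ^ pt := Real.rpow_le_rpow (Real.rpow_nonneg hs0 _) h2 (le_of_lt hc.pos)


/-- Lemma B: Hölder bound for a functional applied to a finitely supported truncation. -/
lemma abs_apply_hump_le (hc : pt.HolderConjugate q.toReal)
    (g : lp (fun _ : ℕ => ℝ) q →L[ℝ] ℝ) (y : lp (fun _ : ℕ => ℝ) q) (F : Finset ℕ) :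
    |g (∑ i ∈ F, lp.single q i (y i))| ≤
      (∑ i ∈ F, |g (lp.single q i 1)| ^ pt) ^ pt⁻¹ * ‖y‖ := by
  have hq0 : 0 < q.toReal := hc.symm.pos
  set f : ℕ → ℝ := fun i => g (lp.single q i 1) with hf
  have h1 : g (∑ i ∈ F, lp.single q i (y i)) = ∑ i ∈ F, f i * y i := by
    rw [map_sum]
    refine Finset.sum_congr rfl fun i _ => ?_
    rw [single_eq_smul, map_smul, smul_eq_mul, mul_comm]
  rw [h1]
  calc |∑ i ∈ F, f i * y i| ≤ ∑ i ∈ F, |f i| * |y i| := by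
        refine (Finset.abs_sum_le_sum_abs _ _).trans ?_
        refine le_of_eq (Finset.sum_congr rfl fun i _ => abs_mul _ _)
  _ ≤ (∑ i ∈ F, |f i| ^ pt) ^ (1 / pt) * (∑ i ∈ F, |y i| ^ q.toReal) ^ (1 / q.toReal) := by
        have := Real.inner_le_Lp_mul_Lq F (fun i => |f i|) (fun i => |y i|) hc
        simpa [abs_abs] using this
  _ ≤ (∑ i ∈ F, |f i| ^ pt) ^ pt⁻¹ * ‖y‖ := by
        rw [one_div]
        refine mul_le_mul_of_nonneg_left ?_ (Real.rpow_nonneg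
          (Finset.sum_nonneg fun i _ => Real.rpow_nonneg (abs_nonneg _) _) _)
        have hsum : ∑ i ∈ F, |y i| ^ q.toReal ≤ ‖y‖ ^ q.toReal := by
          simpa [Real.norm_eq_abs] using lp.sum_rpow_le_norm_rpow hq0 y F
        calc (∑ i ∈ F, |y i| ^ q.toReal) ^ (1 / q.toReal)
            ≤ (‖y‖ ^ q.toReal) ^ (1 / q.toReal) := by
              refine Real.rpow_le_rpow (Finset.sum_nonneg fun i _ =>
                Real.rpow_nonneg (abs_nonneg _) _) hsum (by positivity)
        _ = ‖y‖ := by rw [one_div, Real.rpow_rpow_inv (norm_nonneg _) hq0.ne']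


lemma sum_range_Ioc (h : ℕ → ℝ) (m : ℕ → ℕ) (hm : Monotone m) (K : ℕ) :
    ∑ k ∈ Finset.range K, ∑ i ∈ Finset.Ioc (m k) (m (k+1)), h i
      = ∑ i ∈ Finset.Ioc (m 0) (m K), h i := by
  induction K with
  | zero => simp
  | succ K ih =>
      have hdisj : Disjoint (Finset.Ioc (m 0) (m K)) (Finset.Ioc (m K) (m (K+1))) := by
        rw [Finset.disjoint_left]
        intro i hi hi'
        exact absurd (Finset.mem_Ioc.1 hi).2 (not_le.2 (Finset.mem_Ioc.1 hi').1)
      rw [Finset.sum_range_succ, ih, ← Finset.sum_union hdisj,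
        Finset.Ioc_union_Ioc_eq_Ioc (hm (Nat.zero_le K)) (hm (Nat.le_succ K))]

/-- The key summability lemma. -/
lemma key_summable (hc : pt.HolderConjugate q.toReal)
    (g : lp (fun _ : ℕ => ℝ) q →L[ℝ] ℝ) (y : ℕ → lp (fun _ : ℕ => ℝ) q) {C : ℝ}
    (hy : ∀ k, ‖y k‖ ≤ C) (m : ℕ → ℕ) (hm : StrictMono m)
    (herr : ∀ k, ‖y k - ∑ i ∈ Finset.Ioc (m k) (m (k+1)), lp.single q i (y k i)‖ ≤ (2:ℝ)⁻¹ ^ k) :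
    Summable fun k => |g (y k)| ^ pt := by
  have hpt0 : 0 < pt := hc.pos
  have hC0 : 0 ≤ C := (norm_nonneg _).trans (hy 0)
  set f : ℕ → ℝ := fun i => g (lp.single q i 1) with hf
  set s : ℕ → ℝ := fun k => ∑ i ∈ Finset.Ioc (m k) (m (k+1)), |f i| ^ pt with hsdef
  have hs_nonneg : ∀ k, 0 ≤ s k :=
    fun k => Finset.sum_nonneg fun i _ => Real.rpow_nonneg (abs_nonneg _) _
  have hs_sum : Summable s := by
    refine summable_of_sum_range_le (c := ‖g‖ ^ pt) hs_nonneg fun K => ?_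
    rw [hsdef]
    simp only
    rw [sum_range_Ioc _ m hm.monotone K]
    exact (sum_coord_rpow_le hc g _)
  -- geometric part
  have hgeo : Summable fun k : ℕ => ((2:ℝ)⁻¹ ^ pt) ^ k := by
    refine summable_geometric_of_lt_one (Real.rpow_nonneg (by norm_num) _) ?_
    refine Real.rpow_lt_one (by norm_num) (by norm_num) hpt0
  -- majorant
  have hmaj : Summable fun k => (2:ℝ) ^ pt * (C ^ pt * s k + ‖g‖ ^ pt * ((2:ℝ)⁻¹ ^ pt) ^ k) :=
    (((hs_sum.mul_left _).add (hgeo.mul_left _)).mul_left _)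
  refine hmaj.of_nonneg_of_le
    (fun k => Real.rpow_nonneg (abs_nonneg _) _) fun k => ?_
  -- pointwise bound
  set w : lp (fun _ : ℕ => ℝ) q := ∑ i ∈ Finset.Ioc (m k) (m (k+1)), lp.single q i (y k i) with hw
  have ha : |g w| ≤ s k ^ pt⁻¹ * C := by
    refine (abs_apply_hump_le hc g (y k) _).trans ?_
    exact mul_le_mul_of_nonneg_left (hy k) (Real.rpow_nonneg (hs_nonneg k) _)
  have hb : |g (y k - w)| ≤ ‖g‖ * (2:ℝ)⁻¹ ^ k := by
    calc |g (y k - w)| ≤ ‖g‖ * ‖y k - w‖ := g.le_opNorm _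
    _ ≤ ‖g‖ * (2:ℝ)⁻¹ ^ k := mul_le_mul_of_nonneg_left (herr k) (norm_nonneg _)
  have habs : |g (y k)| ≤ s k ^ pt⁻¹ * C + ‖g‖ * (2:ℝ)⁻¹ ^ k := by
    have : g (y k) = g w + g (y k - w) := by rw [← map_add]; congr 1; abel
    rw [this]
    exact (abs_add_le _ _).trans (add_le_add ha hb)
  -- now (a+b)^pt ≤ 2^pt (a^pt + b^pt)
  set A := s k ^ pt⁻¹ * C
  set B := ‖g‖ * (2:ℝ)⁻¹ ^ k
  have hA : 0 ≤ A := mul_nonneg (Real.rpow_nonneg (hs_nonneg k) _) hC0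
  have hB : 0 ≤ B := mul_nonneg (norm_nonneg _) (by positivity)
  have h1 : |g (y k)| ^ pt ≤ (A + B) ^ pt :=
    Real.rpow_le_rpow (abs_nonneg _) habs hpt0.le
  have h2 : (A + B) ^ pt ≤ (2:ℝ) ^ pt * (max A B) ^ pt := by
    rw [← Real.mul_rpow (by norm_num) (le_max_of_le_left hA)]
    refine Real.rpow_le_rpow (by positivity) ?_ hpt0.le
    calc A + B ≤ max A B + max A B := add_le_add (le_max_left _ _) (le_max_right _ _)
    _ = 2 * max A B := by ring
  have h3 : (max A B) ^ pt ≤ A ^ pt + B ^ pt := by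
    rcases max_cases A B with ⟨h, _⟩ | ⟨h, _⟩ <;> rw [h]
    · exact le_add_of_nonneg_right (Real.rpow_nonneg hB _)
    · exact le_add_of_nonneg_left (Real.rpow_nonneg hA _)
  have hApt : A ^ pt = C ^ pt * s k := by
    rw [Real.mul_rpow (Real.rpow_nonneg (hs_nonneg k) _) hC0,
      Real.rpow_inv_rpow (hs_nonneg k) hpt0.ne', mul_comm]
  have hBpt : B ^ pt = ‖g‖ ^ pt * ((2:ℝ)⁻¹ ^ pt) ^ k := by
    rw [Real.mul_rpow (norm_nonneg _) (by positivity), ← Real.rpow_natCast ((2:ℝ)⁻¹) k,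
      ← Real.rpow_natCast ((2:ℝ)⁻¹ ^ pt) k, ← Real.rpow_mul (by norm_num),
      ← Real.rpow_mul (by norm_num), mul_comm pt]
  calc |g (y k)| ^ pt ≤ (2:ℝ) ^ pt * (max A B) ^ pt := h1.trans h2
  _ ≤ (2:ℝ) ^ pt * (A ^ pt + B ^ pt) :=
      mul_le_mul_of_nonneg_left h3 (Real.rpow_nonneg (by norm_num) _)
  _ = (2:ℝ) ^ pt * (C ^ pt * s k + ‖g‖ ^ pt * ((2:ℝ)⁻¹ ^ pt) ^ k) := by rw [hApt, hBpt]


lemma exists_hump {q : ℝ≥0∞} [Fact (1 ≤ q)] (hq0 : 0 < q.toReal)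
    (y : ℕ → lp (fun _ : ℕ => ℝ) q) (hcoord : ∀ i, Tendsto (fun n => y n i) atTop (𝓝 (0:ℝ))) :
    ∃ ψ : ℕ → ℕ, StrictMono ψ ∧ ∃ m : ℕ → ℕ, StrictMono m ∧
      ∀ k, ‖y (ψ k) - ∑ i ∈ Finset.Ioc (m k) (m (k+1)), lp.single q i (y (ψ k) i)‖
        ≤ (2:ℝ)⁻¹ ^ k := by
  set qt := q.toReal
  set δ : ℕ → ℝ := fun k => ((2:ℝ)⁻¹ ^ k) ^ qt / 2 with hδ
  have hIic : ∀ M : ℕ, Finset.Iic M = Finset.range (M+1) := by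
    intro M; ext i; simp [Nat.lt_succ_iff]
  have hδpos : ∀ k, 0 < δ k := fun k =>
    div_pos (Real.rpow_pos_of_pos (by positivity) _) two_pos
  -- the head sums tend to zero
  have hhead : ∀ M : ℕ, Tendsto (fun n => ∑ i ∈ Finset.Iic M, ‖y n i‖ ^ qt) atTop (𝓝 0) := by
    intro M
    have : ∀ i ∈ Finset.Iic M, Tendsto (fun n => ‖y n i‖ ^ qt) atTop (𝓝 0) := by
      intro i _
      have h1 : Tendsto (fun n => ‖y n i‖) atTop (𝓝 (0:ℝ)) := by
        simpa using (hcoord i).norm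
      have h2 := h1.rpow_const (p := qt) (Or.inr hq0.le)
      simpa [Real.zero_rpow hq0.ne'] using h2
    simpa using tendsto_finset_sum (Finset.Iic M) this
  -- one step of the construction
  have step : ∀ (k N M : ℕ), ∃ n, N < n ∧ ∃ m', M < m' ∧
      (∑ i ∈ Finset.Iic M, ‖y n i‖ ^ qt ≤ δ k) ∧
      (‖y n‖ ^ qt - ∑ i ∈ Finset.Iic m', ‖y n i‖ ^ qt ≤ δ k) := by
    intro k N M
    have h1 : ∀ᶠ n in atTop, ∑ i ∈ Finset.Iic M, ‖y n i‖ ^ qt ≤ δ k :=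
      (hhead M).eventually (eventually_le_nhds (hδpos k))
    obtain ⟨n, hn1, hn2⟩ := ((eventually_gt_atTop N).and h1).exists
    refine ⟨n, hn1, ?_⟩
    have hsum : HasSum (fun i => ‖y n i‖ ^ qt) (‖y n‖ ^ qt) := lp.hasSum_norm hq0 (y n)
    have htail : Tendsto (fun m' => ∑ i ∈ Finset.Iic m', ‖y n i‖ ^ qt) atTop
        (𝓝 (‖y n‖ ^ qt)) := by
      have h5 := hsum.tendsto_sum_nat.comp (tendsto_add_atTop_nat 1)
      refine h5.congr fun m' => ?_
      rw [hIic m']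
      rfl
    have h4 : ∀ᶠ m' in atTop, ‖y n‖ ^ qt - ∑ i ∈ Finset.Iic m', ‖y n i‖ ^ qt ≤ δ k := by
      have := htail.eventually (eventually_ge_nhds (by linarith [hδpos k] : ‖y n‖ ^ qt - δ k < ‖y n‖ ^ qt))
      filter_upwards [this] with m' hm'
      linarith
    obtain ⟨m', hm1, hm2⟩ := ((eventually_gt_atTop M).and h4).exists
    exact ⟨m', hm1, hn2, hm2⟩
  -- recursive construction
  have hstep : ∀ (k : ℕ) (NM : ℕ × ℕ), ∃ nm : ℕ × ℕ, NM.1 < nm.1 ∧ NM.2 < nm.2 ∧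
      (∑ i ∈ Finset.Iic NM.2, ‖y nm.1 i‖ ^ qt ≤ δ k) ∧
      (‖y nm.1‖ ^ qt - ∑ i ∈ Finset.Iic nm.2, ‖y nm.1 i‖ ^ qt ≤ δ k) := by
    intro k NM
    obtain ⟨n, hn, m', hm', h3, h4⟩ := step k NM.1 NM.2
    exact ⟨(n, m'), hn, hm', h3, h4⟩
  choose next h1 h2 h3 h4 using hstep
  set d : ℕ → ℕ × ℕ := fun k => Nat.rec (next 0 (0, 0)) (fun j dj => next (j+1) dj) k with hd
  have hd0 : d 0 = next 0 (0, 0) := rfl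
  have hdsucc : ∀ k, d (k+1) = next (k+1) (d k) := fun k => rfl
  set ψ : ℕ → ℕ := fun k => (d k).1 with hψ
  set m : ℕ → ℕ := fun k => Nat.rec 0 (fun j _ => (d j).2) k with hmdef
  have hm0 : m 0 = 0 := rfl
  have hmsucc : ∀ k, m (k+1) = (d k).2 := fun k => rfl
  have hψmono : StrictMono ψ := by
    apply strictMono_nat_of_lt_succ
    intro k
    have := h1 (k+1) (d k)
    rw [hψ]; simpa [hdsucc k] using this
  have hmmono : StrictMono m := by
    apply strictMono_nat_of_lt_succ
    intro k
    match k with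
    | 0 =>
        have := h2 0 (0, 0)
        simpa [hm0, hmsucc 0, hd0] using this
    | Nat.succ j =>
        have := h2 (j+1) (d j)
        simpa [hmsucc, hdsucc j] using this
  have hhead' : ∀ k, ∑ i ∈ Finset.Iic (m k), ‖y (ψ k) i‖ ^ qt ≤ δ k := by
    intro k
    match k with
    | 0 =>
        have := h3 0 (0, 0)
        simpa [hm0, hψ, hd0] using this
    | Nat.succ j =>
        have := h3 (j+1) (d j)
        simpa [hmsucc j, hψ, hdsucc j] using this
  have htail' : ∀ k, ‖y (ψ k)‖ ^ qt - ∑ i ∈ Finset.Iic (m (k+1)), ‖y (ψ k) i‖ ^ qt ≤ δ k := by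
    intro k
    match k with
    | 0 =>
        have := h4 0 (0, 0)
        simpa [hmsucc 0, hψ, hd0] using this
    | Nat.succ j =>
        have := h4 (j+1) (d j)
        simpa [hmsucc, hψ, hdsucc j] using this
  refine ⟨ψ, hψmono, m, hmmono, fun k => ?_⟩
  -- the error estimate
  set F := Finset.Ioc (m k) (m (k+1)) with hF
  have hkey := lp.norm_sub_norm_compl_sub_single hq0 (y (ψ k)) F
  have hmle : m k ≤ m (k+1) := (hmmono (Nat.lt_succ_self k)).le
  have hIicF : Finset.Iic (m (k+1)) = Finset.Iic (m k) ∪ F := by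
    ext i
    simp only [Finset.mem_union, Finset.mem_Iic, hF, Finset.mem_Ioc]
    omega
  have hdisj : Disjoint (Finset.Iic (m k)) F := by
    rw [Finset.disjoint_left]
    intro i hi hi'
    rw [Finset.mem_Iic] at hi
    rw [hF, Finset.mem_Ioc] at hi'
    omega
  have hsplit : ∑ i ∈ Finset.Iic (m (k+1)), ‖y (ψ k) i‖ ^ qt
      = ∑ i ∈ Finset.Iic (m k), ‖y (ψ k) i‖ ^ qt + ∑ i ∈ F, ‖y (ψ k) i‖ ^ qt := by
    rw [hIicF, Finset.sum_union hdisj]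
  have herr : ‖y (ψ k) - ∑ i ∈ F, lp.single q i (y (ψ k) i)‖ ^ qt ≤ ((2:ℝ)⁻¹ ^ k) ^ qt := by
    have e1 : ‖y (ψ k) - ∑ i ∈ F, lp.single q i (y (ψ k) i)‖ ^ qt
        = ‖y (ψ k)‖ ^ qt - ∑ i ∈ F, ‖y (ψ k) i‖ ^ qt := by linarith [hkey]
    rw [e1]
    have := hhead' k
    have := htail' k
    have hδk : δ k + δ k = ((2:ℝ)⁻¹ ^ k) ^ qt := by rw [hδ]; ring
    linarith
  by_contra hcon
  push_neg at hcon
  have := Real.rpow_lt_rpow (by positivity) hcon hq0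
  linarith


end Aux

/-- Let `1 < p < ∞`, `p*` its conjugate exponent (`1/p + 1/p* = 1`), and `E` a locally convex
space. For every continuous linear operator `S : ℓ_{p*} → E`, the image `S(B_{ℓ_{p*}})` of the
closed unit ball is weakly sequentially `p`-compact: every sequence in it has a subsequence
that weakly `p`-converges to a point of `S(B_{ℓ_{p*}})`. -/
theorem image_ball_weakly_seq_p_compact (p pst : ℝ≥0∞) (hp1 : 1 < p) (hp2 : p ≠ ∞)
    (hconj : p⁻¹ + pst⁻¹ = 1) [Fact (1 ≤ pst)]
    {E : Type*} [AddCommGroup E] [Module ℝ E] [TopologicalSpace E]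
    [IsTopologicalAddGroup E] [ContinuousSMul ℝ E] [LocallyConvexSpace ℝ E]
    (S : lp (fun _ : ℕ => ℝ) pst →L[ℝ] E)
    (u : ℕ → E) (hu : ∀ n, u n ∈ S '' Metric.closedBall 0 1) :
    ∃ y ∈ S '' Metric.closedBall 0 1, ∃ φ : ℕ → ℕ, StrictMono φ ∧
      WeaklySummable p fun n => u (φ n) - y := by
  -- exponent arithmetic
  have hp0 : p ≠ 0 := (zero_lt_one.trans hp1).ne'
  have hq0 : pst ≠ 0 := (zero_lt_one.trans_le (Fact.out : 1 ≤ pst)).ne'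
  have hqtop : pst ≠ ∞ := by
    intro h
    rw [h, ENNReal.inv_top, add_zero] at hconj
    exact hp1.ne' (ENNReal.inv_eq_one.1 hconj)
  have hqt0 : 0 < pst.toReal := ENNReal.toReal_pos hq0 hqtop
  have hpt1 : 1 < p.toReal := by
    rw [← ENNReal.toReal_one]
    exact (ENNReal.toReal_lt_toReal (by simp) hp2).2 hp1
  have hc : p.toReal.HolderConjugate pst.toReal := by
    refine Real.holderConjugate_iff.2 ⟨hpt1, ?_⟩
    have h1 : (p⁻¹ + pst⁻¹).toReal = (1 : ℝ≥0∞).toReal := by rw [hconj]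
    rw [ENNReal.toReal_add (by simp [hp0]) (by simp [hq0]), ENNReal.toReal_inv,
      ENNReal.toReal_inv, ENNReal.toReal_one] at h1
    exact h1
  -- choose preimages
  choose v hv1 hv2 using fun n => hu n
  have hvnorm : ∀ n, ‖v n‖ ≤ 1 := fun n => by
    simpa [mem_closedBall_zero_iff] using hv1 n
  -- coordinatewise convergent subsequence
  set K : Set (ℕ → ℝ) := Set.pi Set.univ fun _ => Set.Icc (-1:ℝ) 1 with hK
  have hKc : IsCompact K := isCompact_univ_pi fun _ => isCompact_Icc
  set x : ℕ → (ℕ → ℝ) := fun n => fun i => v n i with hx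
  have hxK : ∀ n, x n ∈ K := by
    intro n
    intro i _
    have h1 : ‖(v n : ℕ → ℝ) i‖ ≤ ‖v n‖ := lp.norm_apply_le_norm hq0 (v n) i
    have h2 : |(v n : ℕ → ℝ) i| ≤ 1 := by
      rw [← Real.norm_eq_abs]; exact h1.trans (hvnorm n)
    exact abs_le.1 h2
  obtain ⟨cc, _, φ₁, hφ₁, hlim⟩ := hKc.tendsto_subseq hxK
  have hcoordlim : ∀ i, Tendsto (fun n => (v (φ₁ n) : ℕ → ℝ) i) atTop (𝓝 (cc i)) := by
    intro i
    exact (tendsto_pi_nhds.1 hlim) i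
  -- the limit is in lp
  have hccmem : Memℓp cc pst := by
    refine memℓp_gen' (C := 1) fun F => ?_
    have hev : ∀ n, ∑ i ∈ F, ‖(v (φ₁ n) : ℕ → ℝ) i‖ ^ pst.toReal ≤ 1 := by
      intro n
      refine (lp.sum_rpow_le_norm_rpow hqt0 (v (φ₁ n)) F).trans ?_
      exact Real.rpow_le_one (norm_nonneg _) (hvnorm _) hqt0.le
    have htend : Tendsto (fun n => ∑ i ∈ F, ‖(v (φ₁ n) : ℕ → ℝ) i‖ ^ pst.toReal) atTop
        (𝓝 (∑ i ∈ F, ‖cc i‖ ^ pst.toReal)) := by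
      refine tendsto_finset_sum F fun i _ => ?_
      exact ((hcoordlim i).norm).rpow_const (Or.inr hqt0.le)
    exact le_of_tendsto htend (Eventually.of_forall hev)
  set c : lp (fun _ : ℕ => ℝ) pst := ⟨cc, hccmem⟩ with hcdef
  have hcnorm : ‖c‖ ≤ 1 := by
    refine lp.norm_le_of_forall_sum_le hqt0 zero_le_one fun F => ?_
    rw [Real.one_rpow]
    have hev : ∀ n, ∑ i ∈ F, ‖(v (φ₁ n) : ℕ → ℝ) i‖ ^ pst.toReal ≤ 1 := by
      intro n
      refine (lp.sum_rpow_le_norm_rpow hqt0 (v (φ₁ n)) F).trans ?_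
      exact Real.rpow_le_one (norm_nonneg _) (hvnorm _) hqt0.le
    have htend : Tendsto (fun n => ∑ i ∈ F, ‖(v (φ₁ n) : ℕ → ℝ) i‖ ^ pst.toReal) atTop
        (𝓝 (∑ i ∈ F, ‖(c : ℕ → ℝ) i‖ ^ pst.toReal)) := by
      refine tendsto_finset_sum F fun i _ => ?_
      exact ((hcoordlim i).norm).rpow_const (Or.inr hqt0.le)
    exact le_of_tendsto htend (Eventually.of_forall hev)
  -- hump subsequence for Y n = v (φ₁ n) - c
  set Y : ℕ → lp (fun _ : ℕ => ℝ) pst := fun n => v (φ₁ n) - c with hY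
  have hYcoord : ∀ i, Tendsto (fun n => (Y n : ℕ → ℝ) i) atTop (𝓝 (0:ℝ)) := by
    intro i
    have : ∀ n, (Y n : ℕ → ℝ) i = (v (φ₁ n) : ℕ → ℝ) i - cc i := by
      intro n; rw [hY]; simp [hcdef]; rfl
    rw [show (0:ℝ) = cc i - cc i by ring]
    exact Tendsto.congr (fun n => (this n).symm) ((hcoordlim i).sub tendsto_const_nhds)
  obtain ⟨ψ, hψ, m, hm, herr⟩ := exists_hump hqt0 Y hYcoord
  have hYnorm : ∀ k, ‖Y (ψ k)‖ ≤ 2 := by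
    intro k
    rw [hY]
    refine (norm_sub_le _ _).trans ?_
    linarith [hvnorm (φ₁ (ψ k)), hcnorm]
  refine ⟨S c, ⟨c, by simpa [mem_closedBall_zero_iff] using hcnorm, rfl⟩,
    φ₁ ∘ ψ, hφ₁.comp hψ, ?_⟩
  intro χ
  refine Or.inl ⟨hp2, ?_⟩
  apply memℓp_gen
  set g : lp (fun _ : ℕ => ℝ) pst →L[ℝ] ℝ := χ.comp S with hg
  have hkey := key_summable hc g (fun k => Y (ψ k)) hYnorm m hm herr
  refine hkey.congr fun k => ?_
  rw [Real.norm_eq_abs]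
  congr 1
  simp only [Function.comp_apply, ← hv2 (φ₁ (ψ k))]
  rw [hg, hY]
  simp [map_sub]


end
end
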